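/- arXiv:2403.01082 — 6 statements merged into one kernel-verified Lean document; each statement's English description precedes it below -/
import Mathlib

section
/- Let n ≥ 2, let F = GF(2^n), let ν be the Frobenius automorphism of F (ν(x) = x² for all x ∈ F), and let A(n, ν) be the group, under matrix multiplication, of all 3×3 matrices U(a,b) over F with first row (1,0,0), second row (a,1,0) and third row (b, ν(a), 1), where a, b ∈ F. Then the CNL-spectrum of Γ_{A(n,ν)} is {0 with multiplicity 2^n−1, 2^n(2^n−2) with multiplicity (2^n−1)²}; the CNSL-spectrum of Γ_{A(n,ν)} is {2(2^n−1)(2^n−2) with multiplicity 2^n−1, (2^n−2)² with multiplicity (2^n−1)²}; and LE_CN(Γ_{A(n,ν)}) = LE⁺_CN(Γ_{A(n,ν)}) = 2(2^n−2)(2^n−1)². -/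
open scoped Classical

noncomputable section

namespace CN

variable {V : Type*} [Fintype V] [DecidableEq V]

/-- The common neighborhood matrix of a finite simple graph: the `(i,j)` entry, for `i ≠ j`,
is the number of vertices distinct from `i` and `j` adjacent to both; diagonal entries are `0`. -/
def cnMatrix (G : SimpleGraph V) : Matrix V V ℝ := fun i j =>
  if i = j then 0
  else ((Finset.univ.filter fun x => x ≠ i ∧ x ≠ j ∧ G.Adj x i ∧ G.Adj x j).card : ℝ)

/-- The diagonal matrix of row sums of the common neighborhood matrix. -/
def cnrs (G : SimpleGraph V) : Matrix V V ℝ :=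
  Matrix.diagonal fun i => ∑ j, cnMatrix G i j

/-- The common neighborhood Laplacian matrix. -/
def cnl (G : SimpleGraph V) : Matrix V V ℝ := cnrs G - cnMatrix G

/-- The common neighborhood signless Laplacian matrix. -/
def cnsl (G : SimpleGraph V) : Matrix V V ℝ := cnrs G + cnMatrix G

/-- The CNL-spectrum: the multiset of eigenvalues (roots of the characteristic polynomial,
with multiplicity) of the common neighborhood Laplacian matrix. -/
def cnlSpec (G : SimpleGraph V) : Multiset ℝ := (cnl G).charpoly.roots

/-- The CNSL-spectrum. -/
def cnslSpec (G : SimpleGraph V) : Multiset ℝ := (cnsl G).charpoly.roots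

/-- `Δ_𝒢 = tr(CNRS(𝒢)) / |V(𝒢)|`. -/
def cnDelta (G : SimpleGraph V) : ℝ := (cnrs G).trace / (Fintype.card V : ℝ)

/-- The CNL-energy `LE_CN`. -/
def cnlEnergy (G : SimpleGraph V) : ℝ := ((cnlSpec G).map fun a => |a - cnDelta G|).sum

/-- The CNSL-energy `LE⁺_CN`. -/
def cnslEnergy (G : SimpleGraph V) : ℝ := ((cnslSpec G).map fun a => |a - cnDelta G|).sum

/-- A graph on `n` vertices is CNL-hyperenergetic if its CNL-energy exceeds that of
the complete graph `K_n`. -/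
def IsCNLHyperenergetic (G : SimpleGraph V) : Prop :=
  cnlEnergy (⊤ : SimpleGraph (Fin (Fintype.card V))) < cnlEnergy G

/-- A graph on `n` vertices is CNSL-hyperenergetic if its CNSL-energy exceeds that of
the complete graph `K_n`. -/
def IsCNSLHyperenergetic (G : SimpleGraph V) : Prop :=
  cnslEnergy (⊤ : SimpleGraph (Fin (Fintype.card V))) < cnslEnergy G

/-- The commuting graph of a group: vertices are the non-central elements, and two distinct
vertices are adjacent iff they commute. -/
def commutingGraph (G : Type*) [Group G] :
    SimpleGraph {g : G // g ∉ Subgroup.center G} where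
  Adj x y := x ≠ y ∧ (x : G) * y = (y : G) * x
  symm := ⟨fun _ _ h => ⟨h.1.symm, h.2.symm⟩⟩
  loopless := ⟨fun _ h => h.1 rfl⟩

end CN

open CN Polynomial Matrix

lemma charpoly_smul_one_add_smul_J {τ : Type*} [Fintype τ] [DecidableEq τ] [Nonempty τ]
    (a b : ℝ) :
    Matrix.charpoly (a • (1 : Matrix τ τ ℝ) + b • Matrix.of (fun _ _ => (1:ℝ))) =
      (X - C a) ^ (Fintype.card τ - 1) * (X - C (a + Fintype.card τ * b)) := by
  set k := Fintype.card τ with hk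
  have hk1 : 1 ≤ k := Fintype.card_pos
  set K := FractionRing (Polynomial ℝ)
  set φ : Polynomial ℝ →+* K := algebraMap (Polynomial ℝ) K with hφ
  have hinj : Function.Injective φ := IsFractionRing.injective _ _
  apply hinj
  rw [Matrix.charpoly, RingHom.map_det]
  set d : K := φ (X - C a) with hd
  have hd0 : d ≠ 0 := by
    simp only [hd, ne_eq, map_eq_zero_iff φ hinj]
    exact X_sub_C_ne_zero a
  have hcm : ((a • (1 : Matrix τ τ ℝ) + b • Matrix.of (fun _ _ => (1:ℝ))).charmatrix).map φ
      = d • ((1 : Matrix τ τ K) +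
          Matrix.replicateCol Unit (fun _ : τ => -φ (C b) / d) * Matrix.replicateRow Unit (fun _ : τ => (1:K))) := by
    ext i j
    have hent : ((1 : Matrix τ τ K) +
        Matrix.replicateCol Unit (fun _ : τ => -φ (C b) / d) * Matrix.replicateRow Unit (fun _ : τ => (1:K))) i j
        = (if i = j then 1 else 0) + (-φ (C b) / d) := by
      simp [Matrix.add_apply, Matrix.mul_apply, Matrix.one_apply]
    by_cases h : i = j
    · subst h
      simp only [Matrix.map_apply, charmatrix_apply_eq, Matrix.smul_apply, hent, if_pos rfl,
        Matrix.add_apply, Matrix.smul_apply, Matrix.one_apply_eq, Matrix.of_apply, smul_eq_mul]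
      rw [mul_add, mul_one, mul_div_cancel₀ _ hd0, hd]
      rw [map_sub, show φ (C (a + b * 1)) = φ (C a) + φ (C b) by rw [← _root_.map_add, ← _root_.map_add]; ring_nf]
      simp only [if_true, mul_one, map_sub]
      ring
    · simp only [Matrix.map_apply, charmatrix_apply_ne _ _ _ h, Matrix.smul_apply, hent, if_neg h,
        Matrix.add_apply, Matrix.smul_apply, Matrix.one_apply_ne h, Matrix.of_apply, smul_eq_mul]
      rw [zero_add, mul_div_cancel₀ _ hd0]
      simp [Matrix.one_apply_ne h, _root_.map_mul]
  rw [RingHom.mapMatrix_apply, hcm, Matrix.det_smul, Matrix.det_one_add_replicateCol_mul_replicateRow]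
  have hdot : (fun _ : τ => (1:K)) ⬝ᵥ (fun _ : τ => -φ (C b) / d) = k * (-φ (C b) / d) := by
    simp [dotProduct, Finset.sum_const, hk, nsmul_eq_mul]
  rw [hdot, _root_.map_mul, map_pow]
  have hcast : φ (C ((k:ℝ) * b)) = (k : K) * φ (C b) := by
    rw [C_mul, _root_.map_mul, C_eq_natCast, map_natCast]
  rw [map_sub, map_sub, C_add, map_add φ (C a) (C ((k:ℝ) * b)), hcast]
  have hdXC : φ X - φ (C a) = d := by rw [hd, map_sub]
  rw [hdXC]
  have : Fintype.card τ = k := rfl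
  rw [this]
  have hsplit : d ^ k = d ^ (k-1) * d := by
    conv_lhs => rw [← Nat.sub_add_cancel hk1]
    rw [pow_succ]
  rw [hsplit]
  have key : d * (1 + (k:K) * (-φ (C b) / d)) = d - k * φ (C b) := by
    rw [mul_add, mul_one, mul_left_comm, mul_div_cancel₀ _ hd0]
    ring
  calc d ^ (k-1) * d * (1 + (k:K) * (-φ (C b) / d))
      = d ^ (k-1) * (d * (1 + (k:K) * (-φ (C b) / d))) := by ring
    _ = d ^ (k-1) * (d - k * φ (C b)) := by rw [key]
    _ = d ^ (k-1) * (φ X - (φ (C a) + ↑k * φ (C b))) := by rw [← hdXC]; ring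


lemma charpoly_blockDiagonal {τ ι R : Type*} [Fintype τ] [DecidableEq τ] [Fintype ι]
    [DecidableEq ι] [CommRing R] (d : ι → Matrix τ τ R) :
    (Matrix.blockDiagonal d).charpoly = ∏ i, (d i).charpoly := by
  have h : (Matrix.blockDiagonal d).charmatrix
      = Matrix.blockDiagonal (fun i => (d i).charmatrix) := by
    ext ⟨x, i⟩ ⟨y, j⟩
    by_cases hij : i = j
    · subst hij
      by_cases hxy : x = y
      · subst hxy
        simp [charmatrix_apply_eq, Matrix.blockDiagonal_apply_eq]
      · have : (x, i) ≠ (y, i) := by simp [hxy]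
        rw [charmatrix_apply_ne _ _ _ this, Matrix.blockDiagonal_apply_eq,
          Matrix.blockDiagonal_apply_eq, charmatrix_apply_ne _ _ _ hxy]
    · have : (x, i) ≠ (y, j) := by simp [hij]
      rw [charmatrix_apply_ne _ _ _ this, Matrix.blockDiagonal_apply_ne _ _ _ hij,
        Matrix.blockDiagonal_apply_ne _ _ _ hij, map_zero, neg_zero]
  rw [Matrix.charpoly, h, Matrix.det_blockDiagonal]
  rfl


section General
variable {V τ ι : Type*} [Fintype V] [DecidableEq V] [Fintype τ] [DecidableEq τ]
  [Fintype ι] [DecidableEq ι]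

theorem cn_entry (hk : 2 ≤ Fintype.card τ) (G : SimpleGraph V) (e : V ≃ τ × ι)
    (hadj : ∀ x y, G.Adj x y ↔ x ≠ y ∧ (e x).2 = (e y).2) (x y : V) :
    cnMatrix G x y = if (e x).2 = (e y).2 ∧ x ≠ y then ((Fintype.card τ : ℝ) - 2) else 0 := by
  unfold cnMatrix
  by_cases hxy : x = y
  · simp [hxy]
  · rw [if_neg hxy]
    by_cases hlbl : (e x).2 = (e y).2
    · rw [if_pos ⟨hlbl, hxy⟩]
      have hfst : (e x).1 ≠ (e y).1 := by
        intro h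
        exact hxy (e.injective (Prod.ext h hlbl))
      have hcard : (Finset.univ.filter fun z => z ≠ x ∧ z ≠ y ∧ G.Adj z x ∧ G.Adj z y).card
          = (Finset.univ.filter fun t : τ => t ≠ (e x).1 ∧ t ≠ (e y).1).card := by
        apply Finset.card_bij (fun z _ => (e z).1)
        · intro z hz
          simp only [Finset.mem_filter, Finset.mem_univ, true_and] at hz ⊢
          obtain ⟨hzx, hzy, hax, hay⟩ := hz
          have h1 : (e z).2 = (e x).2 := ((hadj z x).mp hax).2
          have h2 : (e z).2 = (e y).2 := ((hadj z y).mp hay).2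
          constructor
          · intro h; exact hzx (e.injective (Prod.ext h h1))
          · intro h; exact hzy (e.injective (Prod.ext h h2))
        · intro z hz z' hz' hzz
          simp only [Finset.mem_filter, Finset.mem_univ, true_and] at hz hz'
          have h1 : (e z).2 = (e x).2 := ((hadj z x).mp hz.2.2.1).2
          have h2 : (e z').2 = (e x).2 := ((hadj z' x).mp hz'.2.2.1).2
          exact e.injective (Prod.ext hzz (h1.trans h2.symm))
        · intro t ht
          simp only [Finset.mem_filter, Finset.mem_univ, true_and] at ht
          refine ⟨e.symm (t, (e x).2), Finset.mem_filter.mpr ⟨Finset.mem_univ _, ?_, ?_, ?_, ?_⟩, by simp⟩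
          · intro h
            apply ht.1
            have := congrArg (fun v => (e v).1) h
            simpa using this
          · intro h
            apply ht.2
            have := congrArg (fun v => (e v).1) h
            simpa using this
          · rw [hadj]
            constructor
            · intro h
              apply ht.1
              have := congrArg (fun v => (e v).1) h
              simpa using this
            · simp
          · rw [hadj]
            constructor
            · intro h
              apply ht.2
              have := congrArg (fun v => (e v).1) h
              simpa using this
            · simp [hlbl]
      rw [hcard]
      have hset : (Finset.univ.filter fun t : τ => t ≠ (e x).1 ∧ t ≠ (e y).1)
          = ({(e x).1, (e y).1} : Finset τ)ᶜ := by
        ext t; simp [not_or]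
      rw [hset, Finset.card_compl, Finset.card_pair hfst]
      have : (2:ℕ) ≤ Fintype.card τ := hk
      push_cast [Nat.cast_sub this]
      ring
    · rw [if_neg (fun h => hlbl h.1)]
      have : (Finset.univ.filter fun z => z ≠ x ∧ z ≠ y ∧ G.Adj z x ∧ G.Adj z y) = ∅ := by
        apply Finset.filter_eq_empty_iff.mpr
        intro z _
        rintro ⟨-, -, hax, hay⟩
        exact hlbl (((hadj z x).mp hax).2.symm.trans ((hadj z y).mp hay).2)
      rw [this]
      simp

theorem cn_rowsum (hk : 2 ≤ Fintype.card τ) (G : SimpleGraph V) (e : V ≃ τ × ι)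
    (hadj : ∀ x y, G.Adj x y ↔ x ≠ y ∧ (e x).2 = (e y).2) (x : V) :
    ∑ y, cnMatrix G x y = ((Fintype.card τ : ℝ) - 1) * ((Fintype.card τ : ℝ) - 2) := by
  have h : ∀ y, cnMatrix G x y = if (e x).2 = (e y).2 ∧ x ≠ y then ((Fintype.card τ : ℝ) - 2) else 0 :=
    cn_entry hk G e hadj x
  simp_rw [h]
  rw [Finset.sum_ite, Finset.sum_const, Finset.sum_const]
  have hcard : (Finset.univ.filter fun y => (e x).2 = (e y).2 ∧ x ≠ y).card
      = Fintype.card τ - 1 := by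
    have hbij : (Finset.univ.filter fun y => (e x).2 = (e y).2 ∧ x ≠ y).card
        = (Finset.univ.filter fun t : τ => t ≠ (e x).1).card := by
      apply Finset.card_bij (fun z _ => (e z).1)
      · intro z hz
        simp only [Finset.mem_filter, Finset.mem_univ, true_and] at hz ⊢
        intro h
        exact hz.2 (e.injective (Prod.ext h hz.1.symm)).symm
      · intro z hz z' hz' hzz
        simp only [Finset.mem_filter, Finset.mem_univ, true_and] at hz hz'
        exact e.injective (Prod.ext hzz (hz.1.symm.trans hz'.1))
      · intro t ht
        simp only [Finset.mem_filter, Finset.mem_univ, true_and] at ht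
        refine ⟨e.symm (t, (e x).2), Finset.mem_filter.mpr ⟨Finset.mem_univ _, by simp, ?_⟩, by simp⟩
        intro h
        apply ht
        have := congrArg (fun v => (e v).1) h
        simpa using this.symm
    rw [hbij]
    have hset : (Finset.univ.filter fun t : τ => t ≠ (e x).1) = ({(e x).1} : Finset τ)ᶜ := by
      ext t; simp
    rw [hset, Finset.card_compl, Finset.card_singleton]
  rw [hcard]
  have h1 : (1:ℕ) ≤ Fintype.card τ := le_trans (by norm_num) hk
  rw [smul_zero, add_zero, nsmul_eq_mul, Nat.cast_sub h1]
  push_cast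
  ring


theorem clique_union_main [Nonempty ι] (hk : 2 ≤ Fintype.card τ) (G : SimpleGraph V) (e : V ≃ τ × ι)
    (hadj : ∀ x y, G.Adj x y ↔ x ≠ y ∧ (e x).2 = (e y).2) :
    cnlSpec G = Multiset.replicate (Fintype.card ι * (Fintype.card τ - 1))
        (((Fintype.card τ : ℝ) - 2) * (Fintype.card τ : ℝ)) +
        Multiset.replicate (Fintype.card ι) (0:ℝ)
    ∧ cnslSpec G = Multiset.replicate (Fintype.card ι * (Fintype.card τ - 1))
        (((Fintype.card τ : ℝ) - 2)^2) +
        Multiset.replicate (Fintype.card ι)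
          (2 * ((Fintype.card τ : ℝ) - 1) * ((Fintype.card τ : ℝ) - 2))
    ∧ cnDelta G = ((Fintype.card τ : ℝ) - 1) * ((Fintype.card τ : ℝ) - 2) := by
  haveI : Nonempty τ := Fintype.card_pos_iff.mp (by omega)
  set kn := Fintype.card τ with hkn
  set mn := Fintype.card ι with hmn
  set c : ℝ := (kn : ℝ) - 2 with hc
  set J : Matrix τ τ ℝ := Matrix.of (fun _ _ => (1:ℝ)) with hJ
  have hrow := cn_rowsum hk G e hadj
  have hent := cn_entry hk G e hadj
  have hL : Matrix.reindex e e (cnl G)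
      = Matrix.blockDiagonal (fun _ : ι => (c * kn) • (1 : Matrix τ τ ℝ) + (-c) • J) := by
    ext ⟨t, i⟩ ⟨s, j⟩
    set x := e.symm (t, i) with hx
    set y := e.symm (s, j) with hy
    have hex : e x = (t, i) := e.apply_symm_apply _
    have hey : e y = (s, j) := e.apply_symm_apply _
    have hlhs : Matrix.reindex e e (cnl G) (t, i) (s, j) = cnl G x y := rfl
    rw [hlhs]
    unfold cnl cnrs
    rw [Matrix.sub_apply, hent x y, hex, hey]
    by_cases hij : i = j
    · subst hij
      by_cases hts : t = s
      · subst hts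
        have hxy : x = y := rfl
        rw [Matrix.diagonal_apply_eq, hrow, if_neg (by simp [hxy]),
          Matrix.blockDiagonal_apply_eq]
        simp [hJ, hc]
        ring
      · have hxy : x ≠ y := fun h => hts (by
          have := congrArg (fun v => (e v).1) h
          simpa [hex, hey] using this)
        rw [Matrix.diagonal_apply_ne _ hxy, if_pos ⟨rfl, hxy⟩, Matrix.blockDiagonal_apply_eq]
        simp [hJ, Matrix.one_apply_ne hts]
        rw [hc, hkn]
        ring
    · have hxy : x ≠ y := fun h => hij (by
        have := congrArg (fun v => (e v).2) h
        simpa [hex, hey] using this)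
      rw [Matrix.diagonal_apply_ne _ hxy, if_neg (by simp [hij]),
        Matrix.blockDiagonal_apply_ne _ _ _ hij]
      simp
  have hS : Matrix.reindex e e (cnsl G)
      = Matrix.blockDiagonal (fun _ : ι => (c * c) • (1 : Matrix τ τ ℝ) + c • J) := by
    ext ⟨t, i⟩ ⟨s, j⟩
    set x := e.symm (t, i) with hx
    set y := e.symm (s, j) with hy
    have hex : e x = (t, i) := e.apply_symm_apply _
    have hey : e y = (s, j) := e.apply_symm_apply _
    have hlhs : Matrix.reindex e e (cnsl G) (t, i) (s, j) = cnsl G x y := rfl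
    rw [hlhs]
    unfold cnsl cnrs
    rw [Matrix.add_apply, hent x y, hex, hey]
    by_cases hij : i = j
    · subst hij
      by_cases hts : t = s
      · subst hts
        have hxy : x = y := rfl
        rw [Matrix.diagonal_apply_eq, hrow, if_neg (by simp [hxy]),
          Matrix.blockDiagonal_apply_eq]
        simp [hJ, hc]
        ring
      · have hxy : x ≠ y := fun h => hts (by
          have := congrArg (fun v => (e v).1) h
          simpa [hex, hey] using this)
        rw [Matrix.diagonal_apply_ne _ hxy, if_pos ⟨rfl, hxy⟩, Matrix.blockDiagonal_apply_eq]
        simp [hJ, Matrix.one_apply_ne hts]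
        exact hc.symm
    · have hxy : x ≠ y := fun h => hij (by
        have := congrArg (fun v => (e v).2) h
        simpa [hex, hey] using this)
      rw [Matrix.diagonal_apply_ne _ hxy, if_neg (by simp [hij]),
        Matrix.blockDiagonal_apply_ne _ _ _ hij]
      simp
  have hcpL : (cnl G).charpoly = ((X - C (c * kn)) ^ (kn - 1) * X) ^ mn := by
    rw [← Matrix.charpoly_reindex e, hL, charpoly_blockDiagonal, Finset.prod_const,
      Finset.card_univ, charpoly_smul_one_add_smul_J]
    have : c * ↑kn + ↑(Fintype.card τ) * (-c) = 0 := by rw [← hkn]; ring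
    rw [this, map_zero, sub_zero, ← hkn]
  have hcpS : (cnsl G).charpoly
      = ((X - C (c * c)) ^ (kn - 1) * (X - C (2 * ((kn:ℝ) - 1) * c))) ^ mn := by
    rw [← Matrix.charpoly_reindex e, hS, charpoly_blockDiagonal, Finset.prod_const,
      Finset.card_univ, charpoly_smul_one_add_smul_J]
    have : c * c + ↑(Fintype.card τ) * c = 2 * ((kn:ℝ) - 1) * c := by rw [← hkn, hc]; ring
    rw [this, ← hkn]
  have hL0 : (X - C (c * (kn:ℝ))) ^ (kn - 1) * (X : ℝ[X]) ≠ 0 :=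
    mul_ne_zero (pow_ne_zero _ (X_sub_C_ne_zero _)) X_ne_zero
  have hS0 : (X - C (c * c)) ^ (kn - 1) * ((X : ℝ[X]) - C (2 * ((kn:ℝ) - 1) * c)) ≠ 0 :=
    mul_ne_zero (pow_ne_zero _ (X_sub_C_ne_zero _)) (X_sub_C_ne_zero _)
  refine ⟨?_, ?_, ?_⟩
  · rw [cnlSpec, hcpL, roots_pow, roots_mul hL0, roots_pow, roots_X_sub_C, roots_X,
      smul_add, smul_smul, Multiset.nsmul_singleton, Multiset.nsmul_singleton]
  · rw [cnslSpec, hcpS, roots_pow, roots_mul hS0, roots_pow, roots_X_sub_C, roots_X_sub_C,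
      smul_add, smul_smul, Multiset.nsmul_singleton, Multiset.nsmul_singleton]
    congr 1
    rw [hc]
    ring_nf
  · rw [cnDelta, cnrs, Matrix.trace_diagonal]
    have : ∑ i : V, ∑ j, cnMatrix G i j
        = (Fintype.card V : ℝ) * (((kn:ℝ) - 1) * ((kn:ℝ) - 2)) := by
      rw [Finset.sum_congr rfl (fun x _ => hrow x), Finset.sum_const, Finset.card_univ,
        nsmul_eq_mul]
    have hV0 : (Fintype.card V : ℝ) ≠ 0 := by
      have : 0 < Fintype.card V := by
        rw [Fintype.card_congr e, Fintype.card_prod]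
        positivity
      positivity
    rw [this, mul_div_cancel_left₀ _ hV0, hkn]

end General

/-- The group `A(n, ν)` of all matrices `U(a,b)` with rows `(1,0,0), (a,1,0), (b, ν a, 1)`
over `F = GF(2^n)`, where `ν` is the Frobenius automorphism of `F`,
under matrix multiplication. -/
def Anu (n : ℕ) : Subgroup (GL (Fin 3) (GaloisField 2 n)) where
  carrier := {M | ∃ a b : GaloisField 2 n,
    (M : Matrix (Fin 3) (Fin 3) (GaloisField 2 n)) =
      !![1, 0, 0; a, 1, 0; b, frobenius (GaloisField 2 n) 2 a, 1]}
  one_mem' := ⟨0, 0, by simp [Matrix.one_fin_three]⟩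
  mul_mem' := by
    rintro M N ⟨a, b, hM⟩ ⟨a', b', hN⟩
    refine ⟨a + a', b + b' + frobenius (GaloisField 2 n) 2 a * a', ?_⟩
    show (M : Matrix (Fin 3) (Fin 3) (GaloisField 2 n)) * N = _
    rw [hM, hN]
    ext i j
    fin_cases i <;> fin_cases j <;>
      · simp [Matrix.mul_apply, Fin.sum_univ_succ, map_add]
        try ring
  inv_mem' := by
    rintro M ⟨a, b, hM⟩
    refine ⟨a, b + frobenius (GaloisField 2 n) 2 a * a, ?_⟩
    have h1 : (M : Matrix (Fin 3) (Fin 3) (GaloisField 2 n)) *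
        !![1, 0, 0; a, 1, 0; b + frobenius (GaloisField 2 n) 2 a * a,
          frobenius (GaloisField 2 n) 2 a, 1] = 1 := by
      rw [hM]
      ext i j
      fin_cases i <;> fin_cases j <;>
        · simp [Matrix.mul_apply, Fin.sum_univ_succ, Matrix.one_apply]
          try ring_nf
          try simp [CharTwo.two_eq_zero]
    calc (M⁻¹ : GL (Fin 3) (GaloisField 2 n)).val
        = M⁻¹.val * ((M : Matrix (Fin 3) (Fin 3) (GaloisField 2 n)) *
            !![1, 0, 0; a, 1, 0; b + frobenius (GaloisField 2 n) 2 a * a,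
              frobenius (GaloisField 2 n) 2 a, 1]) := by rw [h1, mul_one]
      _ = (M⁻¹.val * M.val) *
            !![1, 0, 0; a, 1, 0; b + frobenius (GaloisField 2 n) 2 a * a,
              frobenius (GaloisField 2 n) 2 a, 1] := by rw [mul_assoc]
      _ = _ := by rw [M.inv_mul, one_mul]

namespace AnuAux

variable (n : ℕ)

local notation "F" => GaloisField 2 n

def Umat (a b : F) : Matrix (Fin 3) (Fin 3) F :=
  !![1, 0, 0; a, 1, 0; b, frobenius F 2 a, 1]

lemma Umat_mul (a b a' b' : F) :
    Umat n a b * Umat n a' b' = Umat n (a + a') (b + b' + frobenius F 2 a * a') := by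
  ext i j
  fin_cases i <;> fin_cases j <;>
    · simp [Umat, Matrix.mul_apply, Fin.sum_univ_succ, map_add]
      try ring

lemma Umat_zero : Umat n 0 0 = 1 := by
  simp [Umat, Matrix.one_fin_three]

lemma two_eq_zeroF : (2 : F) = 0 := by
  have := CharP.cast_eq_zero F 2
  exact_mod_cast this

def Uunit (a b : F) : GL (Fin 3) F where
  val := Umat n a b
  inv := Umat n a (b + frobenius F 2 a * a)
  val_inv := by
    rw [Umat_mul]
    have h1 : a + a = (0:F) := by linear_combination a * two_eq_zeroF n
    have h2 : b + (b + frobenius F 2 a * a) + frobenius F 2 a * a = (0:F) := by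
      linear_combination (b + frobenius F 2 a * a) * two_eq_zeroF n
    rw [h1, h2, Umat_zero]
  inv_val := by
    rw [Umat_mul]
    have h1 : a + a = (0:F) := by linear_combination a * two_eq_zeroF n
    have h2 : b + frobenius F 2 a * a + b + frobenius F 2 a * a = (0:F) := by
      linear_combination (b + frobenius F 2 a * a) * two_eq_zeroF n
    rw [h1, h2, Umat_zero]

def UU (a b : F) : Anu n := ⟨Uunit n a b, ⟨a, b, rfl⟩⟩

lemma UU_mul (a b a' b' : F) :
    UU n a b * UU n a' b' = UU n (a + a') (b + b' + frobenius F 2 a * a') := by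
  apply Subtype.ext
  apply Units.ext
  exact Umat_mul n a b a' b'

lemma UU_inj {a b a' b' : F} (h : UU n a b = UU n a' b') : a = a' ∧ b = b' := by
  have hm : Umat n a b = Umat n a' b' := congrArg (fun x : Anu n => ((x : GL (Fin 3) F) : Matrix (Fin 3) (Fin 3) F)) h
  constructor
  · have := congrFun (congrFun hm 1) 0
    simpa [Umat] using this
  · have := congrFun (congrFun hm 2) 0
    simpa [Umat] using this

lemma exists_rep (M : Anu n) : ∃ a b : F, M = UU n a b := by
  obtain ⟨a, b, hM⟩ := M.2
  exact ⟨a, b, Subtype.ext (Units.ext hM)⟩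

lemma UU_commute_iff (a b a' b' : F) :
    (UU n a b * UU n a' b' = UU n a' b' * UU n a b) ↔
      frobenius F 2 a * a' = frobenius F 2 a' * a := by
  rw [UU_mul, UU_mul]
  constructor
  · intro h
    have h2 := (UU_inj n h).2
    have : b + b' + frobenius F 2 a * a' = b + b' + frobenius F 2 a' * a := by
      linear_combination h2
    exact add_left_cancel this
  · intro h
    congr 1
    · ring
    · linear_combination h

lemma frob_eq_iff (a a' : F) :
    frobenius F 2 a * a' = frobenius F 2 a' * a ↔ (a = 0 ∨ a' = 0 ∨ a = a') := by
  rw [frobenius_def, frobenius_def]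
  constructor
  · intro h
    have hfac : a * a' * (a - a') = 0 := by ring_nf; linear_combination h
    rcases mul_eq_zero.mp hfac with h1 | h2
    · rcases mul_eq_zero.mp h1 with h | h
      · exact Or.inl h
      · exact Or.inr (Or.inl h)
    · exact Or.inr (Or.inr (sub_eq_zero.mp h2))
  · rintro (h | h | h) <;> subst h <;> ring

def Acoord (M : Anu n) : F := ((M : GL (Fin 3) F) : Matrix (Fin 3) (Fin 3) F) 1 0

def Bcoord (M : Anu n) : F := ((M : GL (Fin 3) F) : Matrix (Fin 3) (Fin 3) F) 2 0

@[simp] lemma Acoord_UU (a b : F) : Acoord n (UU n a b) = a := by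
  simp [Acoord, UU, Uunit, Umat]

@[simp] lemma Bcoord_UU (a b : F) : Bcoord n (UU n a b) = b := by
  simp [Bcoord, UU, Uunit, Umat]

lemma UU_Acoord (M : Anu n) : M = UU n (Acoord n M) (Bcoord n M) := by
  obtain ⟨a, b, h⟩ := exists_rep n M
  subst h
  rw [Acoord_UU, Bcoord_UU]

lemma UU_mem_center_iff (hn : 2 ≤ n) (a b : F) :
    UU n a b ∈ Subgroup.center (Anu n) ↔ a = 0 := by
  constructor
  · intro h
    by_contra ha
    haveI : Fintype F := Fintype.ofFinite F
    have hcard : 4 ≤ Fintype.card F := by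
      rw [← Nat.card_eq_fintype_card, GaloisField.card 2 n (by omega)]
      calc 4 = 2 ^ 2 := by norm_num
        _ ≤ 2 ^ n := Nat.pow_le_pow_right (by norm_num) hn
    have hne : (({0, a} : Finset F)ᶜ).Nonempty := by
      rw [← Finset.card_pos, Finset.card_compl]
      have h2 : ({0, a} : Finset F).card ≤ 2 := Finset.card_insert_le _ _ |>.trans (by simp)
      omega
    obtain ⟨a', ha'⟩ := hne
    simp only [Finset.mem_compl, Finset.mem_insert, Finset.mem_singleton, not_or] at ha'
    have hcomm := Subgroup.mem_center_iff.mp h (UU n a' 0)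
    rw [UU_commute_iff, frob_eq_iff] at hcomm
    rcases hcomm with h1 | h1 | h1
    · exact ha'.1 h1
    · exact ha h1
    · exact ha'.2 h1
  · intro h
    subst h
    apply Subgroup.mem_center_iff.mpr
    intro g
    obtain ⟨a', b', rfl⟩ := exists_rep n g
    rw [UU_commute_iff, frob_eq_iff]
    exact Or.inr (Or.inl rfl)

lemma mem_center_iff (hn : 2 ≤ n) (M : Anu n) :
    M ∈ Subgroup.center (Anu n) ↔ Acoord n M = 0 := by
  conv_lhs => rw [UU_Acoord n M]
  exact UU_mem_center_iff n hn (Acoord n M) (Bcoord n M)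

def eqv (hn : 2 ≤ n) : {g : Anu n // g ∉ Subgroup.center (Anu n)} ≃ F × {a : F // a ≠ 0} where
  toFun x := (Bcoord n x.1, ⟨Acoord n x.1, fun h => x.2 ((mem_center_iff n hn x.1).mpr h)⟩)
  invFun p := ⟨UU n p.2.1 p.1, fun h => p.2.2 (by
    have := (mem_center_iff n hn _).mp h
    simpa using this)⟩
  left_inv x := by
    apply Subtype.ext
    exact (UU_Acoord n x.1).symm
  right_inv p := by
    ext <;> simp

lemma adj_iff (hn : 2 ≤ n) (x y : {g : Anu n // g ∉ Subgroup.center (Anu n)}) :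
    (commutingGraph (Anu n)).Adj x y ↔ x ≠ y ∧ ((eqv n hn) x).2 = ((eqv n hn) y).2 := by
  have hx : Acoord n x.1 ≠ 0 := fun h => x.2 ((mem_center_iff n hn x.1).mpr h)
  have hy : Acoord n y.1 ≠ 0 := fun h => y.2 ((mem_center_iff n hn y.1).mpr h)
  show (x ≠ y ∧ (x.1 : Anu n) * y.1 = y.1 * x.1) ↔ _
  constructor
  · rintro ⟨hxy, hc⟩
    refine ⟨hxy, ?_⟩
    rw [UU_Acoord n x.1, UU_Acoord n y.1, UU_commute_iff, frob_eq_iff] at hc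
    rcases hc with h | h | h
    · exact absurd h hx
    · exact absurd h hy
    · exact Subtype.ext h
  · rintro ⟨hxy, hc⟩
    refine ⟨hxy, ?_⟩
    have hc' : Acoord n x.1 = Acoord n y.1 := congrArg Subtype.val hc
    conv_lhs => rw [UU_Acoord n x.1, UU_Acoord n y.1]
    conv_rhs => rw [UU_Acoord n x.1, UU_Acoord n y.1]
    rw [UU_commute_iff, frob_eq_iff]
    exact Or.inr (Or.inr hc')

end AnuAux

/-- CNL/CNSL spectra and energies of the commuting graph of `A(n, ν)`, `n ≥ 2`. -/
theorem cnl_spectra_energies_Anu (n : ℕ) (hn : 2 ≤ n) :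
    letI : Fintype (Anu n) := Fintype.ofFinite _
    (cnlSpec (commutingGraph (Anu n)) =
      Multiset.replicate (2 ^ n - 1) (0 : ℝ) +
        Multiset.replicate ((2 ^ n - 1) ^ 2) ((2 : ℝ) ^ n * ((2 : ℝ) ^ n - 2)) ∧
    cnslSpec (commutingGraph (Anu n)) =
      Multiset.replicate (2 ^ n - 1) (2 * ((2 : ℝ) ^ n - 1) * ((2 : ℝ) ^ n - 2)) +
        Multiset.replicate ((2 ^ n - 1) ^ 2) (((2 : ℝ) ^ n - 2) ^ 2) ∧
    cnlEnergy (commutingGraph (Anu n)) = 2 * ((2 : ℝ) ^ n - 2) * ((2 : ℝ) ^ n - 1) ^ 2 ∧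
    cnslEnergy (commutingGraph (Anu n)) = 2 * ((2 : ℝ) ^ n - 2) * ((2 : ℝ) ^ n - 1) ^ 2) := by
  letI : Fintype (Anu n) := Fintype.ofFinite _
  haveI : Fintype (GaloisField 2 n) := Fintype.ofFinite _
  haveI : Nonempty {a : GaloisField 2 n // a ≠ 0} := ⟨⟨1, one_ne_zero⟩⟩
  have hkF : Fintype.card (GaloisField 2 n) = 2 ^ n := by
    rw [← Nat.card_eq_fintype_card, GaloisField.card 2 n (by omega)]
  have hk4 : 4 ≤ Fintype.card (GaloisField 2 n) := by
    rw [hkF]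
    calc 4 = 2 ^ 2 := by norm_num
      _ ≤ 2 ^ n := Nat.pow_le_pow_right (by norm_num) hn
  have hk2 : 2 ≤ Fintype.card (GaloisField 2 n) := by omega
  have hcι : Fintype.card {a : GaloisField 2 n // a ≠ 0} = 2 ^ n - 1 := by
    have : Fintype.card {a : GaloisField 2 n // ¬ (a = 0)}
        = Fintype.card (GaloisField 2 n) - Fintype.card {a : GaloisField 2 n // a = 0} :=
      Fintype.card_subtype_compl _
    rw [Fintype.card_subtype_eq, hkF] at this
    exact this
  have main := clique_union_main hk2 (commutingGraph (Anu n)) (AnuAux.eqv n hn)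
    (AnuAux.adj_iff n hn)
  obtain ⟨hLspec, hSspec, hΔ⟩ := main
  rw [hkF] at hLspec hSspec hΔ
  rw [hcι] at hLspec hSspec
  have h2n1 : 1 ≤ 2 ^ n := Nat.one_le_two_pow
  have hmm : (2 ^ n - 1) * (2 ^ n - 1) = (2 ^ n - 1) ^ 2 := (pow_two (2 ^ n - 1)).symm
  set K : ℝ := (2 : ℝ) ^ n with hK
  have hcast : ((2 ^ n : ℕ) : ℝ) = K := by push_cast; rfl
  have hcast1 : ((2 ^ n - 1 : ℕ) : ℝ) = K - 1 := by
    rw [Nat.cast_sub h2n1]; push_cast; rfl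
  have hK4 : (4 : ℝ) ≤ K := by
    have : ((4 : ℕ) : ℝ) ≤ ((2 ^ n : ℕ) : ℝ) := Nat.cast_le.mpr (by omega)
    rw [hcast] at this
    exact_mod_cast this
  rw [hcast] at hLspec hSspec hΔ
  rw [hmm] at hLspec hSspec
  have hLspec' : cnlSpec (commutingGraph (Anu n)) =
      Multiset.replicate (2 ^ n - 1) (0 : ℝ) +
        Multiset.replicate ((2 ^ n - 1) ^ 2) (K * (K - 2)) := by
    rw [hLspec, add_comm]
    congr 1
    rw [mul_comm]
  have hSspec' : cnslSpec (commutingGraph (Anu n)) =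
      Multiset.replicate (2 ^ n - 1) (2 * (K - 1) * (K - 2)) +
        Multiset.replicate ((2 ^ n - 1) ^ 2) ((K - 2) ^ 2) := by
    rw [hSspec, add_comm]
  refine ⟨hLspec', hSspec', ?_, ?_⟩
  · rw [cnlEnergy, hLspec', hΔ, Multiset.map_add, Multiset.map_replicate,
      Multiset.map_replicate, Multiset.sum_add, Multiset.sum_replicate, Multiset.sum_replicate]
    have h1 : |(0 : ℝ) - (K - 1) * (K - 2)| = (K - 1) * (K - 2) := by
      rw [zero_sub, abs_neg, abs_of_nonneg (by nlinarith)]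
    have h2 : |K * (K - 2) - (K - 1) * (K - 2)| = K - 2 := by
      have : K * (K - 2) - (K - 1) * (K - 2) = K - 2 := by ring
      rw [this, abs_of_nonneg (by nlinarith)]
    rw [h1, h2, nsmul_eq_mul, nsmul_eq_mul, hcast1]
    push_cast [Nat.cast_sub h2n1]
    ring
  · rw [cnslEnergy, hSspec', hΔ, Multiset.map_add, Multiset.map_replicate,
      Multiset.map_replicate, Multiset.sum_add, Multiset.sum_replicate, Multiset.sum_replicate]
    have h1 : |2 * (K - 1) * (K - 2) - (K - 1) * (K - 2)| = (K - 1) * (K - 2) := by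
      have : 2 * (K - 1) * (K - 2) - (K - 1) * (K - 2) = (K - 1) * (K - 2) := by ring
      rw [this, abs_of_nonneg (by nlinarith)]
    have h2 : |(K - 2) ^ 2 - (K - 1) * (K - 2)| = K - 2 := by
      have : (K - 2) ^ 2 - (K - 1) * (K - 2) = -(K - 2) := by ring
      rw [this, abs_neg, abs_of_nonneg (by nlinarith)]
    rw [h1, h2, nsmul_eq_mul, nsmul_eq_mul, hcast1]
    push_cast [Nat.cast_sub h2n1]
    ring
end
end

section
/- Let p be a prime, let F = GF(p^n), and let A(n, p) be the group of triples V(a,b,c) with a, b, c ∈ F under the multiplication V(a,b,c)·V(a′,b′,c′) = V(a+a′, b+b′+ca′, c+c′) (equivalently, the group of lower unitriangular 3×3 matrices over F). Then the CNL-spectrum of Γ_{A(n,p)} is {0 with multiplicity p^n+1, (p^{2n}−p^n)(p^{2n}−p^n−2) with multiplicity (p^n+1)(p^{2n}−p^n−1)}; the CNSL-spectrum of Γ_{A(n,p)} is {2(p^{2n}−p^n−1)(p^{2n}−p^n−2) with multiplicity p^n+1, (p^{2n}−p^n−2)² with multiplicity (p^n+1)(p^{2n}−p^n−1)}; and LE_CN(Γ_{A(n,p)})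 = LE⁺_CN(Γ_{A(n,p)}) = 2(p^n+1)²(p^{3n} − 3p^{2n} + p^n + 2). -/
open scoped Classical

noncomputable section

open CN

/-- The underlying type of the group `A(n, p)`: triples `V(a, b, c)` over `F = GF(p^n)`. -/
def Anp (p n : ℕ) [Fact p.Prime] := GaloisField p n × GaloisField p n × GaloisField p n

namespace Anp

variable {p n : ℕ} [Fact p.Prime]

instance instMul : Mul (Anp p n) :=
  ⟨fun x y => (x.1 + y.1, x.2.1 + y.2.1 + x.2.2 * y.1, x.2.2 + y.2.2)⟩

instance instOne : One (Anp p n) :=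
  ⟨((0 : GaloisField p n), (0 : GaloisField p n), (0 : GaloisField p n))⟩

instance instInv : Inv (Anp p n) := ⟨fun x => (-x.1, x.2.2 * x.1 - x.2.1, -x.2.2)⟩

theorem mul_def (x y : Anp p n) :
    x * y = (x.1 + y.1, x.2.1 + y.2.1 + x.2.2 * y.1, x.2.2 + y.2.2) := rfl

theorem one_def : (1 : Anp p n) = ((0 : GaloisField p n), 0, 0) := rfl

theorem inv_def (x : Anp p n) : x⁻¹ = (-x.1, x.2.2 * x.1 - x.2.1, -x.2.2) := rfl

/-- `A(n, p)` is a group under `V(a,b,c) ⬝ V(a',b',c') = V(a+a', b+b'+c·a', c+c')`. -/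
instance : Group (Anp p n) where
  mul_assoc x y z := by
    rw [mul_def, mul_def, mul_def, mul_def]
    refine Prod.ext ?_ (Prod.ext ?_ ?_) <;> dsimp <;> ring
  one_mul x := by
    rw [mul_def, one_def]
    refine Prod.ext ?_ (Prod.ext ?_ ?_) <;> dsimp <;> ring
  mul_one x := by
    rw [mul_def, one_def]
    refine Prod.ext ?_ (Prod.ext ?_ ?_) <;> dsimp <;> ring
  inv_mul_cancel x := by
    rw [mul_def, inv_def, one_def]
    refine Prod.ext ?_ (Prod.ext ?_ ?_) <;> dsimp <;> ring

instance : Finite (Anp p n) :=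
  inferInstanceAs (Finite (GaloisField p n × GaloisField p n × GaloisField p n))

end Anp

open Matrix Polynomial



open Matrix Polynomial

section SpecAux

variable {ι : Type*} [Fintype ι] [DecidableEq ι]

lemma aux_charmatrix_diagonal (d : ι → ℝ) :
    charmatrix (Matrix.diagonal d) = Matrix.diagonal fun i => X - C (d i) := by
  ext i j
  by_cases h : i = j
  · subst h; simp
  · simp [charmatrix_apply_ne _ _ _ h, Matrix.diagonal_apply_ne _ h]

lemma aux_charpoly_diagonal (d : ι → ℝ) :
    (Matrix.diagonal d).charpoly = ∏ i, (X - C (d i)) := by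
  rw [Matrix.charpoly, aux_charmatrix_diagonal, Matrix.det_diagonal]

lemma aux_charpoly_conj (U D : Matrix ι ι ℝ) (h1 : U * star U = 1) (h2 : star U * U = 1) :
    (U * D * star U).charpoly = D.charpoly := by
  have hsc : Matrix.scalar ι (X : ℝ[X]) = (X : ℝ[X]) • (1 : Matrix ι ι ℝ[X]) := by
    rw [Matrix.scalar_apply, Matrix.smul_one_eq_diagonal]
  let φ : Matrix ι ι ℝ →+* Matrix ι ι ℝ[X] := (C : ℝ →+* ℝ[X]).mapMatrix
  have key : charmatrix (U * D * star U) = φ U * charmatrix D * φ (star U) := by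
    show Matrix.scalar ι X - φ (U * D * star U) = φ U * (Matrix.scalar ι X - φ D) * φ (star U)
    rw [Matrix.mul_sub, Matrix.sub_mul, hsc, Matrix.mul_smul, Matrix.mul_one, Matrix.smul_mul,
      ← map_mul φ, h1, _root_.map_one]
    rw [← map_mul φ, ← map_mul φ]
  rw [Matrix.charpoly, key, Matrix.det_mul, Matrix.det_mul, Matrix.charpoly]
  have : (φ U).det * (φ (star U)).det = 1 := by
    rw [← Matrix.det_mul, ← map_mul φ, h1, _root_.map_one, Matrix.det_one]
  calc (φ U).det * (charmatrix D).det * (φ (star U)).det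
      = (charmatrix D).det * ((φ U).det * (φ (star U)).det) := by ring
    _ = (charmatrix D).det := by rw [this, mul_one]

lemma aux_charpoly_hermitian (A : Matrix ι ι ℝ) (hA : A.IsHermitian) :
    A.charpoly = ∏ i, (X - C (hA.eigenvalues i)) := by
  have hd : (RCLike.ofReal ∘ hA.eigenvalues : ι → ℝ) = hA.eigenvalues := by
    funext i; simp [RCLike.ofReal]
  conv_lhs => rw [hA.spectral_theorem, Unitary.conjStarAlgAut_apply]
  rw [aux_charpoly_conj _ _ (Matrix.mem_unitaryGroup_iff.mp (hA.eigenvectorUnitary).2)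
    (Matrix.mem_unitaryGroup_iff'.mp (hA.eigenvectorUnitary).2), hd, aux_charpoly_diagonal]

lemma aux_roots_charpoly_hermitian (A : Matrix ι ι ℝ) (hA : A.IsHermitian) :
    A.charpoly.roots = Finset.univ.val.map hA.eigenvalues := by
  rw [aux_charpoly_hermitian A hA, ← Polynomial.roots_multiset_prod_X_sub_C
    (Finset.univ.val.map hA.eigenvalues)]
  congr 1
  rw [Multiset.map_map, Finset.prod_eq_multiset_prod]
  rfl

end SpecAux



open Matrix Polynomial

section SpecAux2

variable {ι : Type*} [Fintype ι] [DecidableEq ι]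

lemma aux_eigenvalues_quadratic (A : Matrix ι ι ℝ) (hA : A.IsHermitian) (x y : ℝ)
    (h : (A - x • 1) * (A - y • 1) = 0) (i : ι) :
    hA.eigenvalues i = x ∨ hA.eigenvalues i = y := by
  set μ := hA.eigenvalues i with hμ
  set v : ι → ℝ := ⇑(hA.eigenvectorBasis i) with hv
  have hAv : A *ᵥ v = μ • v := hA.mulVec_eigenvectorBasis i
  have hvne : v ≠ 0 := by
    intro h0
    have hb : hA.eigenvectorBasis i = 0 := by
      apply PiLp.ext; intro j
      exact congrFun h0 j
    have := hA.eigenvectorBasis.orthonormal.1 i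
    rw [hb] at this
    simp at this
  have key : ((μ - x) * (μ - y)) • v = 0 := by
    have hgen : ∀ t : ℝ, (A - t • 1) *ᵥ v = (μ - t) • v := by
      intro t
      rw [Matrix.sub_mulVec, hAv, Matrix.smul_mulVec, Matrix.one_mulVec, sub_smul]
    have h1 : (A - y • 1) *ᵥ v = (μ - y) • v := hgen y
    have h2 : (A - x • 1) *ᵥ ((μ - y) • v) = (μ - y) • ((μ - x) • v) := by
      rw [Matrix.mulVec_smul, hgen x]
    calc ((μ - x) * (μ - y)) • v = (μ - y) • ((μ - x) • v) := by
          rw [smul_smul, mul_comm]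
      _ = ((A - x • 1) * (A - y • 1)) *ᵥ v := by rw [← Matrix.mulVec_mulVec, h1, h2]
      _ = 0 := by rw [h, Matrix.zero_mulVec]
  rcases smul_eq_zero.mp key with hc | hc
  · rcases mul_eq_zero.mp hc with hc | hc
    · left; linarith [sub_eq_zero.mp hc]
    · right; linarith [sub_eq_zero.mp hc]
  · exact absurd hc hvne

lemma aux_multiset_two (s : Multiset ℝ) (x y : ℝ) (a b : ℕ)
    (hmem : ∀ z ∈ s, z = x ∨ z = y)
    (hcard : Multiset.card s = a + b)
    (hsum : s.sum = a * x + b * y) :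
    s = Multiset.replicate a x + Multiset.replicate b y := by
  by_cases hxy : x = y
  · subst hxy
    rw [← Multiset.replicate_add]
    exact Multiset.eq_replicate.2 ⟨hcard, fun z hz => (hmem z hz).elim id id⟩
  · have hsplit := Multiset.filter_add_not (fun z => z = x) s
    set s1 := s.filter (fun z => z = x) with hs1
    set s2 := s.filter (fun z => ¬ z = x) with hs2
    have h1 : s1 = Multiset.replicate (Multiset.card s1) x :=
      Multiset.eq_replicate_card.2 (fun z hz => (Multiset.mem_filter.1 hz).2)
    have h2 : s2 = Multiset.replicate (Multiset.card s2) y :=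
      Multiset.eq_replicate_card.2 (fun z hz => by
        rcases Multiset.mem_filter.1 hz with ⟨hzs, hne⟩
        exact (hmem z hzs).resolve_left hne)
    set c1 := Multiset.card s1
    set c2 := Multiset.card s2
    have hc : c1 + c2 = a + b := by
      rw [← hcard, ← hsplit, Multiset.card_add]
    have hcr : (c1 : ℝ) + c2 = (a : ℝ) + b := by exact_mod_cast congrArg (Nat.cast : ℕ → ℝ) hc
    have hs : (c1 : ℝ) * x + c2 * y = a * x + b * y := by
      have h3 := hsum
      rw [← hsplit, Multiset.sum_add] at h3
      rw [h1, h2, Multiset.sum_replicate, Multiset.sum_replicate] at h3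
      simpa [nsmul_eq_mul] using h3
    have hc2 : (c2 : ℝ) * (y - x) = (b : ℝ) * (y - x) := by linear_combination hs - x * hcr
    have hc2' : c2 = b := by
      have := mul_right_cancel₀ (sub_ne_zero.2 (Ne.symm hxy)) hc2
      exact_mod_cast this
    have hc1' : c1 = a := by omega
    rw [← hsplit, h1, h2, hc1', hc2']



section Master

variable {ι κ : Type*} [Fintype ι] [DecidableEq ι]

/-- The class-indicator matrix. -/
def Jmat (f : ι → κ) : Matrix ι ι ℝ := fun i j => if f i = f j then 1 else 0

variable (f : ι → κ) (m : ℕ)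

lemma Jmat_herm : (Jmat f).IsHermitian := by
  ext i j
  simp only [Matrix.conjTranspose_apply, Jmat, star_trivial]
  by_cases h : f i = f j
  · rw [if_pos h, if_pos h.symm]
  · rw [if_neg h, if_neg (fun hh => h hh.symm)]

lemma Jmat_transpose : (Jmat f)ᵀ = Jmat f := by
  ext i j
  simp only [Matrix.transpose_apply, Jmat]
  by_cases h : f i = f j
  · rw [if_pos h, if_pos h.symm]
  · rw [if_neg h, if_neg (fun hh => h hh.symm)]

lemma Jmat_diag (i : ι) : Jmat f i i = 1 := if_pos rfl

section WithHyp

variable (hfib : ∀ x : ι, (Finset.univ.filter fun y => f y = f x).card = m)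

include hfib

lemma Jmat_row_sum (i : ι) : ∑ j, Jmat f i j = (m : ℝ) := by
  rw [← hfib i]
  unfold Jmat
  rw [Finset.sum_boole]
  congr 1
  apply Finset.card_bij (fun a _ => a) <;> simp [eq_comm]

lemma Jmat_mul_Jmat : Jmat f * Jmat f = (m : ℝ) • Jmat f := by
  ext i j
  rw [Matrix.mul_apply]
  have hterm : ∀ x, Jmat f i x * Jmat f x j
      = if f x = f i ∧ f x = f j then (1:ℝ) else 0 := by
    intro x
    unfold Jmat
    by_cases h1 : f i = f x <;> by_cases h2 : f x = f j
    · rw [if_pos h1, if_pos h2, if_pos ⟨h1.symm, h2⟩, one_mul]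
    · rw [if_pos h1, if_neg h2, if_neg (fun h : f x = f i ∧ f x = f j => h2 h.2), mul_zero]
    · rw [if_pos h2, if_neg h1, if_neg (fun h : f x = f i ∧ f x = f j => h1 h.1.symm), zero_mul]
    · rw [if_neg h1, if_neg h2, if_neg (fun h : f x = f i ∧ f x = f j => h1 h.1.symm), zero_mul]
  rw [Finset.sum_congr rfl (fun x _ => hterm x)]
  by_cases hij : f i = f j
  · have hiff : ∀ x, (f x = f i ∧ f x = f j) ↔ f x = f i := by
      intro x
      constructor
      · exact fun h => h.1
      · exact fun h => ⟨h, h.trans hij⟩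
    rw [Finset.sum_congr rfl (fun x _ => by rw [if_congr (hiff x) rfl rfl])]
    rw [Finset.sum_boole, hfib i, Matrix.smul_apply, Jmat, if_pos hij, smul_eq_mul, mul_one]
  · have hnot : ∀ x, ¬(f x = f i ∧ f x = f j) := by
      rintro x ⟨h1, h2⟩
      exact hij (h1.symm.trans h2)
    rw [Finset.sum_congr rfl (fun x _ => by rw [if_neg (hnot x)])]
    rw [Finset.sum_const_zero, Matrix.smul_apply, Jmat, if_neg hij, smul_eq_mul, mul_zero]

variable (G : SimpleGraph ι) (hm : 2 ≤ m)
  (hadj : ∀ x y, G.Adj x y ↔ x ≠ y ∧ f x = f y)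

include hm hadj

lemma cn_eq : cnMatrix G = ((m : ℝ) - 2) • (Jmat f - 1) := by
  ext i j
  by_cases hij : i = j
  · subst hij
    rw [cnMatrix, if_pos rfl, Matrix.smul_apply, Matrix.sub_apply, Jmat_diag,
      Matrix.one_apply_eq, sub_self, smul_zero]
  · rw [cnMatrix, if_neg hij, Matrix.smul_apply, Matrix.sub_apply,
      Matrix.one_apply_ne hij]
    by_cases hf : f i = f j
    · have hset : (Finset.univ.filter fun x => x ≠ i ∧ x ≠ j ∧ G.Adj x i ∧ G.Adj x j)
          = ((Finset.univ.filter fun x => f x = f i).erase j).erase i := by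
        ext x
        simp only [Finset.mem_filter, Finset.mem_erase, Finset.mem_univ, true_and, hadj]
        constructor
        · rintro ⟨h1, h2, h3, _⟩
          exact ⟨h1, h2, h3.2⟩
        · rintro ⟨h1, h2, h3⟩
          exact ⟨h1, h2, ⟨h1, h3⟩, ⟨h2, h3.trans hf⟩⟩
      rw [hset]
      have hjmem : j ∈ (Finset.univ.filter fun x => f x = f i) := by
        simp [hf.symm]
      have himem : i ∈ ((Finset.univ.filter fun x => f x = f i).erase j) := by
        simp [Finset.mem_erase, hij]
      rw [Finset.card_erase_of_mem himem, Finset.card_erase_of_mem hjmem, hfib i]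
      have hm12 : m - 1 - 1 = m - 2 := by omega
      rw [hm12, Nat.cast_sub hm]
      rw [Jmat, if_pos hf]
      norm_num
    · have hset : (Finset.univ.filter fun x => x ≠ i ∧ x ≠ j ∧ G.Adj x i ∧ G.Adj x j)
          = ∅ := by
        ext x
        simp only [Finset.mem_filter, Finset.mem_univ, true_and, hadj, Finset.notMem_empty,
          iff_false]
        rintro ⟨_, _, ⟨_, h3⟩, ⟨_, h4⟩⟩
        exact hf (h3.symm.trans h4)
      rw [hset, Jmat, if_neg hf]
      norm_num

lemma cnrs_eq : cnrs G = (((m : ℝ) - 1) * ((m : ℝ) - 2)) • (1 : Matrix ι ι ℝ) := by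
  have hrow : ∀ i, ∑ j, cnMatrix G i j = ((m : ℝ) - 1) * ((m : ℝ) - 2) := by
    intro i
    rw [Finset.sum_congr rfl (fun j _ => by
      rw [cn_eq f m hfib G hm hadj, Matrix.smul_apply, smul_eq_mul])]
    rw [← Finset.mul_sum]
    have hsum : ∑ j, (Jmat f - 1) i j = (m : ℝ) - 1 := by
      rw [Finset.sum_congr rfl (fun j _ => Matrix.sub_apply (Jmat f) 1 i j)]
      rw [Finset.sum_sub_distrib, Jmat_row_sum f m hfib i]
      congr 1
      rw [Finset.sum_eq_single i (fun j _ hji => Matrix.one_apply_ne (Ne.symm hji))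
        (fun h => absurd (Finset.mem_univ i) h), Matrix.one_apply_eq]
    rw [hsum]
    ring
  have hfun : (fun i => ∑ j, cnMatrix G i j) = fun _ : ι => ((m : ℝ) - 1) * ((m : ℝ) - 2) :=
    funext hrow
  rw [cnrs, hfun, Matrix.smul_one_eq_diagonal]

lemma cnl_eq : cnl G = ((m : ℝ) - 2) • ((m : ℝ) • 1 - Jmat f) := by
  rw [cnl, cnrs_eq f m hfib G hm hadj, cn_eq f m hfib G hm hadj]
  module

lemma cnsl_eq : cnsl G = ((m : ℝ) - 2) • (((m : ℝ) - 2) • 1 + Jmat f) := by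
  rw [cnsl, cnrs_eq f m hfib G hm hadj, cn_eq f m hfib G hm hadj]
  module

end WithHyp

end Master

section Quad

variable {ι : Type*} [Fintype ι] [DecidableEq ι]

lemma quadL (J : Matrix ι ι ℝ) (mR : ℝ) (hJ : J * J = mR • J) :
    ((mR - 2) • (mR • 1 - J) - (0:ℝ) • 1) *
      ((mR - 2) • (mR • 1 - J) - (mR * (mR - 2)) • 1) = 0 := by
  have h1 : (mR - 2) • (mR • (1 : Matrix ι ι ℝ) - J) - (0:ℝ) • 1
      = (mR - 2) • (mR • 1 - J) := by module
  have h2 : (mR - 2) • (mR • (1 : Matrix ι ι ℝ) - J) - (mR * (mR - 2)) • 1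
      = (-(mR - 2)) • J := by module
  have h3 : (mR • (1 : Matrix ι ι ℝ) - J) * J = 0 := by
    rw [Matrix.sub_mul, Matrix.smul_mul, Matrix.one_mul, hJ, sub_self]
  rw [h1, h2, smul_mul_smul_comm, h3, smul_zero]

lemma quadSL (J : Matrix ι ι ℝ) (mR : ℝ) (hJ : J * J = mR • J) :
    ((mR - 2) • ((mR - 2) • 1 + J) - (2 * (mR - 1) * (mR - 2)) • 1) *
      ((mR - 2) • ((mR - 2) • 1 + J) - ((mR - 2) ^ 2) • 1) = 0 := by
  have h1 : (mR - 2) • ((mR - 2) • (1 : Matrix ι ι ℝ) + J) - (2 * (mR - 1) * (mR - 2)) • 1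
      = (mR - 2) • (J - mR • 1) := by module
  have h2 : (mR - 2) • ((mR - 2) • (1 : Matrix ι ι ℝ) + J) - ((mR - 2) ^ 2) • 1
      = (mR - 2) • J := by module
  have h3 : (J - mR • (1 : Matrix ι ι ℝ)) * J = 0 := by
    rw [Matrix.sub_mul, Matrix.smul_mul, Matrix.one_mul, hJ, sub_self]
  rw [h1, h2, smul_mul_smul_comm, h3, smul_zero]

lemma Jmat_trace {κ : Type*} (f : ι → κ) : (Jmat f).trace = (Fintype.card ι : ℝ) := by
  rw [Matrix.trace]
  have : ∀ i, (Jmat f).diag i = 1 := fun i => Jmat_diag f i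
  rw [Finset.sum_congr rfl (fun i _ => this i)]
  simp

lemma aux_roots_of_quadratic (A : Matrix ι ι ℝ) (hA : A.IsHermitian) (x y : ℝ)
    (hq : (A - x • 1) * (A - y • 1) = 0) (a b : ℕ)
    (hab : a + b = Fintype.card ι)
    (htr : A.trace = a * x + b * y) :
    A.charpoly.roots = Multiset.replicate a x + Multiset.replicate b y := by
  have hroots := aux_roots_charpoly_hermitian A hA
  have hsplits : A.charpoly.Splits := by
    rw [aux_charpoly_hermitian A hA]
    exact Polynomial.Splits.prod (fun i _ => Polynomial.Splits.X_sub_C _)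
  apply aux_multiset_two _ x y a b
  · intro z hz
    rw [hroots] at hz
    obtain ⟨i, _, rfl⟩ := Multiset.mem_map.1 hz
    exact aux_eigenvalues_quadratic A hA x y hq i
  · rw [hroots, Multiset.card_map, hab]
    rfl
  · rw [← htr]
    exact (Matrix.trace_eq_sum_roots_charpoly_of_splits hsplits).symm

end Quad

section MasterMain

variable {ι κ : Type*} [Fintype ι] [DecidableEq ι]

lemma master (G : SimpleGraph ι) (f : ι → κ) (m k : ℕ) (hm : 2 ≤ m) (hk : 0 < k)
    (hadj : ∀ x y, G.Adj x y ↔ x ≠ y ∧ f x = f y)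
    (hfibN : ∀ x : ι, Nat.card {y : ι // f y = f x} = m)
    (hcard : Fintype.card ι = k * m) :
    cnlSpec G = Multiset.replicate k 0
        + Multiset.replicate (k * (m - 1)) ((m:ℝ) * ((m:ℝ) - 2)) ∧
    cnslSpec G = Multiset.replicate k (2 * ((m:ℝ) - 1) * ((m:ℝ) - 2))
        + Multiset.replicate (k * (m - 1)) (((m:ℝ) - 2) ^ 2) ∧
    cnlEnergy G = 2 * (k:ℝ) * ((m:ℝ) - 1) * ((m:ℝ) - 2) ∧
    cnslEnergy G = 2 * (k:ℝ) * ((m:ℝ) - 1) * ((m:ℝ) - 2) := by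
  have hfib : ∀ x : ι, (Finset.univ.filter fun y => f y = f x).card = m := fun x =>
    (Fintype.card_subtype _).symm.trans ((Nat.card_eq_fintype_card).symm.trans (hfibN x))
  have hmR2 : (2:ℝ) ≤ (m:ℝ) := by exact_mod_cast hm
  have hJ := Jmat_mul_Jmat f m hfib
  have hcnl := cnl_eq f m hfib G hm hadj
  have hcnsl := cnsl_eq f m hfib G hm hadj
  have hcnrs := cnrs_eq f m hfib G hm hadj
  have hherm_l : (cnl G).IsHermitian := by
    rw [hcnl]
    show _ᴴ = _
    simp [Matrix.conjTranspose_smul, Matrix.conjTranspose_sub, Matrix.conjTranspose_one,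
      Jmat_herm f, Jmat_transpose f]
  have hherm_sl : (cnsl G).IsHermitian := by
    rw [hcnsl]
    show _ᴴ = _
    simp [Matrix.conjTranspose_smul, Matrix.conjTranspose_add, Matrix.conjTranspose_one,
      Jmat_herm f, Jmat_transpose f]
  have hN : (Fintype.card ι : ℝ) = (k : ℝ) * ((m:ℝ)) := by rw [hcard]; push_cast; ring
  have hkm1 : ((k * (m - 1) : ℕ) : ℝ) = k * (((m:ℝ)) - 1) := by
    push_cast [Nat.cast_sub (by omega : 1 ≤ m)]
    ring
  have htrJ := Jmat_trace f
  have htr_l : (cnl G).trace = (k:ℝ) * 0 + ((k * (m-1) : ℕ) : ℝ) * (((m:ℝ)) * (((m:ℝ)) - 2)) := by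
    rw [hcnl, Matrix.trace_smul, Matrix.trace_sub, Matrix.trace_smul, Matrix.trace_one, htrJ,
      hkm1, hN]
    push_cast
    simp only [smul_eq_mul]
    ring
  have htr_sl : (cnsl G).trace
      = (k:ℝ) * (2*(((m:ℝ))-1)*(((m:ℝ))-2)) + ((k * (m-1) : ℕ) : ℝ) * ((((m:ℝ)) - 2)^2) := by
    rw [hcnsl, Matrix.trace_smul, Matrix.trace_add, Matrix.trace_smul, Matrix.trace_one, htrJ,
      hkm1, hN]
    push_cast
    simp only [smul_eq_mul]
    ring
  have hab : k + k * (m - 1) = Fintype.card ι := by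
    rw [hcard]
    calc k + k*(m-1) = k * (1 + (m-1)) := by ring
    _ = k * m := by congr 1; omega
  have hspecl : cnlSpec G = Multiset.replicate k 0
      + Multiset.replicate (k * (m - 1)) (((m:ℝ)) * (((m:ℝ)) - 2)) := by
    show (cnl G).charpoly.roots = _
    apply aux_roots_of_quadratic (cnl G) hherm_l 0 (((m:ℝ)) * (((m:ℝ)) - 2)) ?_ k (k*(m-1)) hab ?_
    · rw [hcnl]
      exact quadL (Jmat f) ((m:ℝ)) hJ
    · rw [htr_l]
  have hspecsl : cnslSpec G = Multiset.replicate k (2*(((m:ℝ))-1)*(((m:ℝ))-2))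
      + Multiset.replicate (k * (m - 1)) ((((m:ℝ)) - 2)^2) := by
    show (cnsl G).charpoly.roots = _
    apply aux_roots_of_quadratic (cnsl G) hherm_sl (2*(((m:ℝ))-1)*(((m:ℝ))-2)) ((((m:ℝ))-2)^2) ?_
      k (k*(m-1)) hab ?_
    · rw [hcnsl]
      exact quadSL (Jmat f) ((m:ℝ)) hJ
    · rw [htr_sl]
  have hNpos : (0:ℝ) < (Fintype.card ι : ℝ) := by
    have : 0 < k * m := Nat.mul_pos hk (by omega)
    rw [hcard]
    exact_mod_cast this
  have hdelta : cnDelta G = (((m:ℝ))-1)*(((m:ℝ))-2) := by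
    rw [cnDelta, hcnrs, Matrix.trace_smul, Matrix.trace_one, smul_eq_mul, mul_div_assoc,
      div_self (ne_of_gt hNpos), mul_one]
  have h1 : |0 - (((m:ℝ))-1)*(((m:ℝ))-2)| = (((m:ℝ))-1)*(((m:ℝ))-2) := by
    rw [zero_sub, abs_neg, abs_of_nonneg]
    nlinarith
  have h2 : |((m:ℝ))*(((m:ℝ))-2) - (((m:ℝ))-1)*(((m:ℝ))-2)| = ((m:ℝ)) - 2 := by
    have he : ((m:ℝ))*(((m:ℝ))-2) - (((m:ℝ))-1)*(((m:ℝ))-2) = ((m:ℝ)) - 2 := by ring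
    rw [he, abs_of_nonneg]
    linarith
  have h3 : |2*(((m:ℝ))-1)*(((m:ℝ))-2) - (((m:ℝ))-1)*(((m:ℝ))-2)| = (((m:ℝ))-1)*(((m:ℝ))-2) := by
    have he : 2*(((m:ℝ))-1)*(((m:ℝ))-2) - (((m:ℝ))-1)*(((m:ℝ))-2) = (((m:ℝ))-1)*(((m:ℝ))-2) := by ring
    rw [he, abs_of_nonneg]
    nlinarith
  have h4 : |(((m:ℝ))-2)^2 - (((m:ℝ))-1)*(((m:ℝ))-2)| = ((m:ℝ)) - 2 := by
    have he : (((m:ℝ))-2)^2 - (((m:ℝ))-1)*(((m:ℝ))-2) = -(((m:ℝ)) - 2) := by ring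
    rw [he, abs_neg, abs_of_nonneg]
    linarith
  refine ⟨hspecl, hspecsl, ?_, ?_⟩
  · rw [cnlEnergy, hspecl, Multiset.map_add, Multiset.map_replicate, Multiset.map_replicate,
      Multiset.sum_add, Multiset.sum_replicate, Multiset.sum_replicate, hdelta,
      nsmul_eq_mul, nsmul_eq_mul, hkm1, h1, h2]
    ring
  · rw [cnslEnergy, hspecsl, Multiset.map_add, Multiset.map_replicate, Multiset.map_replicate,
      Multiset.sum_add, Multiset.sum_replicate, Multiset.sum_replicate, hdelta,
      nsmul_eq_mul, nsmul_eq_mul, hkm1, h3, h4]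
    ring

end MasterMain



section Group

variable {p n : ℕ} [Fact p.Prime]

lemma anp_mem_center_iff (x : Anp p n) :
    x ∈ Subgroup.center (Anp p n) ↔ x.1 = 0 ∧ x.2.2 = 0 := by
  rw [Subgroup.mem_center_iff]
  constructor
  · intro h
    constructor
    · have h1 := h ((0 : GaloisField p n), (0 : GaloisField p n), (1 : GaloisField p n))
      rw [Anp.mul_def ((0 : GaloisField p n), (0 : GaloisField p n), (1 : GaloisField p n)) x,
        Anp.mul_def x ((0 : GaloisField p n), (0 : GaloisField p n), (1 : GaloisField p n))] at h1
      have h2 := congrArg (fun z : Anp p n => z.2.1) h1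
      dsimp at h2
      linear_combination h2
    · have h1 := h ((1 : GaloisField p n), (0 : GaloisField p n), (0 : GaloisField p n))
      rw [Anp.mul_def ((1 : GaloisField p n), (0 : GaloisField p n), (0 : GaloisField p n)) x,
        Anp.mul_def x ((1 : GaloisField p n), (0 : GaloisField p n), (0 : GaloisField p n))] at h1
      have h2 := congrArg (fun z : Anp p n => z.2.1) h1
      dsimp at h2
      linear_combination -h2
  · rintro ⟨h1, h2⟩ g
    rw [Anp.mul_def, Anp.mul_def]
    refine Prod.ext ?_ (Prod.ext ?_ ?_) <;> dsimp
    · ring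
    · rw [h1, h2]
      ring
    · ring

lemma anp_commute_iff (x y : Anp p n) :
    x * y = y * x ↔ x.2.2 * y.1 = y.2.2 * x.1 := by
  rw [Anp.mul_def, Anp.mul_def]
  erw [Prod.ext_iff, Prod.ext_iff]
  dsimp
  constructor
  · rintro ⟨-, h2, -⟩
    linear_combination h2
  · intro h
    exact ⟨add_comm _ _, by linear_combination h, add_comm _ _⟩

def lineClass (x : Anp p n) : Option (GaloisField p n) :=
  if x.1 = 0 then none else some (x.2.2 * x.1⁻¹)

lemma lineClass_eq_none_iff (x : Anp p n) : lineClass x = none ↔ x.1 = 0 := by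
  unfold lineClass
  by_cases h : x.1 = 0
  · simp [h]
  · simp [h]

lemma lineClass_eq_some_iff (x : Anp p n) (t : GaloisField p n) :
    lineClass x = some t ↔ x.1 ≠ 0 ∧ x.2.2 = t * x.1 := by
  unfold lineClass
  by_cases h : x.1 = 0
  · simp [h]
  · rw [if_neg h, ← div_eq_mul_inv]
    simp only [Option.some.injEq]
    rw [div_eq_iff h]
    exact ⟨fun h2 => ⟨h, h2⟩, fun h2 => h2.2⟩

lemma lineClass_eq_iff (x y : Anp p n) (hx : ¬(x.1 = 0 ∧ x.2.2 = 0))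
    (hy : ¬(y.1 = 0 ∧ y.2.2 = 0)) :
    lineClass x = lineClass y ↔ x.2.2 * y.1 = y.2.2 * x.1 := by
  by_cases h1 : x.1 = 0 <;> by_cases h2 : y.1 = 0
  · simp [lineClass, h1, h2]
  · have hx2 : x.2.2 ≠ 0 := fun h => hx ⟨h1, h⟩
    constructor
    · intro h
      rw [(lineClass_eq_none_iff x).2 h1] at h
      exact absurd ((lineClass_eq_none_iff y).1 h.symm) h2
    · intro h
      rw [h1, mul_zero] at h
      rcases mul_eq_zero.1 h with h' | h'
      exacts [absurd h' hx2, absurd h' h2]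
  · have hy2 : y.2.2 ≠ 0 := fun h => hy ⟨h2, h⟩
    constructor
    · intro h
      rw [(lineClass_eq_none_iff y).2 h2] at h
      exact absurd ((lineClass_eq_none_iff x).1 h) h1
    · intro h
      rw [h2, mul_zero] at h
      rcases mul_eq_zero.1 h.symm with h' | h'
      exacts [absurd h' hy2, absurd h' h1]
  · unfold lineClass
    rw [if_neg h1, if_neg h2]
    simp only [Option.some.injEq]
    constructor
    · intro h
      field_simp at h
      linear_combination h
    · intro h
      field_simp
      linear_combination h

end Group

section Cards

variable {p n : ℕ} [Fact p.Prime] [Fintype (Anp p n)] [Fintype (GaloisField p n)]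

lemma gf_card (hn : n ≠ 0) : Fintype.card (GaloisField p n) = p ^ n := by
  rw [← Nat.card_eq_fintype_card, GaloisField.card p n hn]

lemma gf_card_ne (hn : n ≠ 0) :
    Fintype.card {c : GaloisField p n // ¬ (c = 0)} = p ^ n - 1 := by
  rw [Fintype.card_subtype_compl, Fintype.card_subtype_eq, gf_card hn]

lemma card_fiber (hn : n ≠ 0) (v : Option (GaloisField p n)) :
    Fintype.card {x : {g : Anp p n // g ∉ Subgroup.center (Anp p n)} // lineClass x.1 = v}
      = p ^ n * (p ^ n - 1) := by
  cases v with
  | none =>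
    have e : {x : {g : Anp p n // g ∉ Subgroup.center (Anp p n)} // lineClass x.1 = none}
        ≃ GaloisField p n × {c : GaloisField p n // ¬ (c = 0)} :=
      { toFun := fun x => (x.1.1.2.1, ⟨x.1.1.2.2, by
          have h0 : x.1.1.1 = 0 := (lineClass_eq_none_iff _).1 x.2
          have hnc := x.1.2
          rw [anp_mem_center_iff] at hnc
          exact fun hc => hnc ⟨h0, hc⟩⟩)
        invFun := fun bc => ⟨⟨((0 : GaloisField p n), bc.1, bc.2.1), by
            exact fun h => bc.2.2 ((anp_mem_center_iff _).1 h).2⟩, (lineClass_eq_none_iff _).2 rfl⟩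
        left_inv := fun x => by
          apply Subtype.ext
          apply Subtype.ext
          have h0 : x.1.1.1 = 0 := (lineClass_eq_none_iff _).1 x.2
          exact Prod.ext h0.symm rfl
        right_inv := fun bc => rfl }
    rw [Fintype.card_congr e, Fintype.card_prod, gf_card hn, gf_card_ne hn]
  | some t =>
    have e : {x : {g : Anp p n // g ∉ Subgroup.center (Anp p n)} // lineClass x.1 = some t}
        ≃ {a : GaloisField p n // ¬ (a = 0)} × GaloisField p n :=
      { toFun := fun x => (⟨x.1.1.1, ((lineClass_eq_some_iff _ _).1 x.2).1⟩, x.1.1.2.1)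
        invFun := fun ab => ⟨⟨(ab.1.1, ab.2, t * ab.1.1), by
            exact fun h => ab.1.2 ((anp_mem_center_iff _).1 h).1⟩,
          (lineClass_eq_some_iff _ _).2 ⟨ab.1.2, rfl⟩⟩
        left_inv := fun x => by
          apply Subtype.ext
          apply Subtype.ext
          obtain ⟨hne0, heq⟩ := (lineClass_eq_some_iff _ _).1 x.2
          exact Prod.ext rfl (Prod.ext rfl heq.symm)
        right_inv := fun ab => rfl }
    rw [Fintype.card_congr e, Fintype.card_prod, gf_card hn, gf_card_ne hn, Nat.mul_comm]

lemma card_anp_noncentral (hn : n ≠ 0) :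
    Fintype.card {g : Anp p n // g ∉ Subgroup.center (Anp p n)}
      = (p ^ n + 1) * (p ^ n * (p ^ n - 1)) := by
  have hq2 : 2 ≤ p ^ n := by
    have hp : 2 ≤ p := (Fact.out : p.Prime).two_le
    calc 2 = 2 ^ 1 := rfl
    _ ≤ 2 ^ n := Nat.pow_le_pow_right (by omega) (by omega)
    _ ≤ p ^ n := Nat.pow_le_pow_left hp n
  have hAnp : Fintype.card (Anp p n) = p ^ n * (p ^ n * p ^ n) := by
    have e : Anp p n ≃ GaloisField p n × GaloisField p n × GaloisField p n := Equiv.refl _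
    rw [Fintype.card_congr e, Fintype.card_prod, Fintype.card_prod, gf_card hn]
  have hcent : Fintype.card {g : Anp p n // g ∈ Subgroup.center (Anp p n)} = p ^ n := by
    have e : {g : Anp p n // g ∈ Subgroup.center (Anp p n)} ≃ GaloisField p n :=
      { toFun := fun g => g.1.2.1
        invFun := fun b => ⟨((0 : GaloisField p n), b, (0 : GaloisField p n)),
          (anp_mem_center_iff _).2 ⟨rfl, rfl⟩⟩
        left_inv := fun g => by
          apply Subtype.ext
          obtain ⟨h1, h2⟩ := (anp_mem_center_iff _).1 g.2
          exact Prod.ext h1.symm (Prod.ext rfl h2.symm)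
        right_inv := fun b => rfl }
    rw [Fintype.card_congr e, gf_card hn]
  have hsub : Fintype.card {g : Anp p n // g ∉ Subgroup.center (Anp p n)}
      = Fintype.card (Anp p n)
        - Fintype.card {g : Anp p n // g ∈ Subgroup.center (Anp p n)} :=
    Fintype.card_subtype_compl _
  rw [hsub, hAnp, hcent]
  obtain ⟨j, hj⟩ : ∃ j, p ^ n = j + 2 := ⟨p ^ n - 2, by omega⟩
  rw [hj]
  apply Nat.sub_eq_of_eq_add
  have hj1 : j + 2 - 1 = j + 1 := rfl
  rw [hj1]
  ring

end Cards


/-- CNL/CNSL spectra and energies of the commuting graph of `A(n, p)`. -/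
theorem cnl_spectra_energies_Anp (p n : ℕ) [Fact p.Prime] (hn : 0 < n) :
    letI : Fintype (Anp p n) := Fintype.ofFinite _
    (cnlSpec (commutingGraph (Anp p n)) =
      Multiset.replicate (p ^ n + 1) (0 : ℝ) +
        Multiset.replicate ((p ^ n + 1) * (p ^ (2 * n) - p ^ n - 1))
          (((p : ℝ) ^ (2 * n) - (p : ℝ) ^ n) * ((p : ℝ) ^ (2 * n) - (p : ℝ) ^ n - 2)) ∧
    cnslSpec (commutingGraph (Anp p n)) =
      Multiset.replicate (p ^ n + 1)
          (2 * ((p : ℝ) ^ (2 * n) - (p : ℝ) ^ n - 1) * ((p : ℝ) ^ (2 * n) - (p : ℝ) ^ n - 2)) +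
        Multiset.replicate ((p ^ n + 1) * (p ^ (2 * n) - p ^ n - 1))
          (((p : ℝ) ^ (2 * n) - (p : ℝ) ^ n - 2) ^ 2) ∧
    cnlEnergy (commutingGraph (Anp p n)) =
      2 * ((p : ℝ) ^ n + 1) ^ 2 *
        ((p : ℝ) ^ (3 * n) - 3 * (p : ℝ) ^ (2 * n) + (p : ℝ) ^ n + 2) ∧
    cnslEnergy (commutingGraph (Anp p n)) =
      2 * ((p : ℝ) ^ n + 1) ^ 2 *
        ((p : ℝ) ^ (3 * n) - 3 * (p : ℝ) ^ (2 * n) + (p : ℝ) ^ n + 2)) := by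
  letI : Fintype (Anp p n) := Fintype.ofFinite _
  letI : Fintype (GaloisField p n) := Fintype.ofFinite _
  have hn' : n ≠ 0 := by omega
  have hq2 : 2 ≤ p ^ n := by
    have hp : 2 ≤ p := (Fact.out : p.Prime).two_le
    calc 2 = 2 ^ 1 := rfl
    _ ≤ 2 ^ n := Nat.pow_le_pow_right (by omega) (by omega)
    _ ≤ p ^ n := Nat.pow_le_pow_left hp n
  set q := p ^ n with hqdef
  set G := commutingGraph (Anp p n) with hGdef
  set f : {g : Anp p n // g ∉ Subgroup.center (Anp p n)} → Option (GaloisField p n) :=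
    fun x => lineClass x.1 with hfdef
  have hadj : ∀ x y, G.Adj x y ↔ x ≠ y ∧ f x = f y := by
    intro x y
    have hx : ¬(x.1.1 = 0 ∧ x.1.2.2 = 0) := by
      have hh := x.2
      rw [anp_mem_center_iff] at hh
      exact hh
    have hy : ¬(y.1.1 = 0 ∧ y.1.2.2 = 0) := by
      have hh := y.2
      rw [anp_mem_center_iff] at hh
      exact hh
    constructor
    · intro hxy
      obtain ⟨hne, hc⟩ : x ≠ y ∧ (x : Anp p n) * y = y * x := hxy
      exact ⟨hne, (lineClass_eq_iff _ _ hx hy).2 ((anp_commute_iff _ _).1 hc)⟩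
    · rintro ⟨hne, hf⟩
      exact (show x ≠ y ∧ (x : Anp p n) * y = y * x from
        ⟨hne, (anp_commute_iff _ _).2 ((lineClass_eq_iff _ _ hx hy).1 hf)⟩)
  have hfib : ∀ x, Nat.card {y // f y = f x} = q * (q - 1) := by
    intro x
    rw [Nat.card_eq_fintype_card]
    exact (Fintype.card_congr (Equiv.refl _)).trans (card_fiber hn' (lineClass x.1))
  have hm2 : 2 ≤ q * (q - 1) := by
    calc 2 = 2 * 1 := rfl
    _ ≤ q * (q - 1) := Nat.mul_le_mul hq2 (by omega)
  have hcard : Fintype.card {g : Anp p n // g ∉ Subgroup.center (Anp p n)}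
      = (q + 1) * (q * (q - 1)) := card_anp_noncentral hn'
  obtain ⟨hs1, hs2, he1, he2⟩ :=
    master G f (q * (q - 1)) (q + 1) hm2 (by omega) hadj hfib hcard
  obtain ⟨j, hj⟩ : ∃ j, q = j + 2 := ⟨q - 2, by omega⟩
  have hqq : p ^ (2 * n) = q * q := by rw [hqdef, two_mul, pow_add]
  have hb : (q + 1) * (q * (q - 1) - 1) = (q + 1) * (p ^ (2 * n) - q - 1) := by
    rw [hqq, hj]
    have key : (j+2)*(j+2) = (j+2)*(j+1) + (j+2) := by ring
    have h21 : j + 2 - 1 = j + 1 := rfl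
    rw [h21, key]
    congr 1
    generalize (j+2)*(j+1) = A
    omega
  have hX2 : (p:ℝ)^(2*n) = ((p:ℝ)^n)^2 := pow_mul' _ 2 n
  have hX3 : (p:ℝ)^(3*n) = ((p:ℝ)^n)^3 := pow_mul' _ 3 n
  have hqR : ((q:ℕ):ℝ) = (p:ℝ)^n := by rw [hqdef]; push_cast; ring
  have hmcast : ((q*(q-1) : ℕ) : ℝ) = (p:ℝ)^(2*n) - (p:ℝ)^n := by
    rw [hX2, ← hqR]
    push_cast [Nat.cast_sub (show 1 ≤ q by omega)]
    ring
  have hv1 : ((q*(q-1):ℕ):ℝ) * (((q*(q-1):ℕ):ℝ) - 2)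
      = ((p:ℝ)^(2*n) - (p:ℝ)^n) * ((p:ℝ)^(2*n) - (p:ℝ)^n - 2) := by rw [hmcast]
  have hv2 : 2 * (((q*(q-1):ℕ):ℝ) - 1) * (((q*(q-1):ℕ):ℝ) - 2)
      = 2 * ((p:ℝ)^(2*n) - (p:ℝ)^n - 1) * ((p:ℝ)^(2*n) - (p:ℝ)^n - 2) := by rw [hmcast]
  have hv3 : (((q*(q-1):ℕ):ℝ) - 2)^2 = ((p:ℝ)^(2*n) - (p:ℝ)^n - 2)^2 := by rw [hmcast]
  have heB : 2 * ((q+1 : ℕ):ℝ) * (((q*(q-1):ℕ):ℝ) - 1) * (((q*(q-1):ℕ):ℝ) - 2)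
      = 2 * ((p:ℝ)^n + 1)^2 * ((p:ℝ)^(3*n) - 3*(p:ℝ)^(2*n) + (p:ℝ)^n + 2) := by
    rw [hmcast, hX2, hX3]
    push_cast
    rw [hqR]
    ring
  refine ⟨?_, ?_, ?_, ?_⟩
  · rw [hs1, hb, hv1]
  · rw [hs2, hb, hv2, hv3]
  · rw [he1, heB]
  · rw [he2, heB]
end SpecAux2
end
end

section
/- Let p be a prime and let G be a finite non-abelian group such that G/Z(G) is isomorphic to ℤ_p × ℤ_p, and let z = |Z(G)|. Then the CNL-spectrum of Γ_G is {0 with multiplicity p+1, ((p−1)z)((p−1)z−2) with multiplicity (p+1)((p−1)z−1)}; the CNSL-spectrum of Γ_G is {2((p−1)z−1)((p−1)z−2) with multiplicity p+1, ((p−1)z−2)² with multiplicity (p+1)((p−1)z−1)}; and LE_CN(Γ_G) = LE⁺_CN(Γ_G) equals 0 if z = 1 and p = 2, and equals 2(p+1)((p−1)z−2)((p−1)z−1) otherwise. -/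
open scoped Classical

noncomputable section

open CN

section CNAux
open Polynomial Matrix
namespace CNAux

variable {R : Type*} [CommRing R] {n : Type*} [Fintype n] [DecidableEq n]

lemma charpoly_conj (A P Q : Matrix n n R) (h : Q * P = 1) :
    (Q * A * P).charpoly = A.charpoly := by
  set f := (RingHom.mapMatrix (m := n) (C : R →+* R[X])) with hf
  have hQP : f Q * f P = 1 := by rw [← _root_.map_mul, h, _root_.map_one]
  have hc : charmatrix (Q * A * P) = f Q * charmatrix A * f P := by
    unfold charmatrix
    have hcomm : Commute (Matrix.scalar n (X : R[X])) (f Q) :=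
      Matrix.scalar_commute _ (fun r' => Commute.all _ _) _
    rw [_root_.map_mul, _root_.map_mul, mul_sub, sub_mul]
    congr 1
    rw [← hcomm.eq, mul_assoc, hQP, mul_one]
  rw [Matrix.charpoly, Matrix.charpoly, hc, det_mul, det_mul]
  have : (f Q).det * (f P).det = 1 := by rw [← det_mul, hQP, det_one]
  calc (f Q).det * (charmatrix A).det * (f P).det
      = (f Q).det * (f P).det * (charmatrix A).det := by ring
    _ = (charmatrix A).det := by rw [this, one_mul]

lemma charpoly_diagonal (d : n → R) :
    (Matrix.diagonal d).charpoly = ∏ i, (X - C (d i)) := by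
  have : charmatrix (Matrix.diagonal d) = Matrix.diagonal fun i => X - C (d i) := by
    ext i j
    by_cases hij : i = j
    · subst hij; simp
    · simp [hij, charmatrix_apply_ne _ _ _ hij, Matrix.diagonal_apply_ne _ hij]
  rw [Matrix.charpoly, this, det_diagonal]

lemma charpoly_blockDiagonal {κ : Type*} [Fintype κ] [DecidableEq κ]
    (M : κ → Matrix n n R) :
    (Matrix.blockDiagonal M).charpoly = ∏ k, (M k).charpoly := by
  have hch : charmatrix (Matrix.blockDiagonal M)
      = Matrix.blockDiagonal fun k => charmatrix (M k) := by
    ext ⟨i, k⟩ ⟨j, k'⟩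
    by_cases hk : k = k'
    · subst hk
      by_cases hij : i = j
      · subst hij; simp [Matrix.blockDiagonal_apply]
      · have : ((i, k) : n × κ) ≠ (j, k) := by simp [hij]
        simp [charmatrix_apply_ne _ _ _ this, Matrix.blockDiagonal_apply,
          charmatrix_apply_ne _ _ _ hij]
    · have : ((i, k) : n × κ) ≠ (j, k') := by simp [hk]
      simp [charmatrix_apply_ne _ _ _ this, Matrix.blockDiagonal_apply, hk]
  rw [Matrix.charpoly, hch, det_blockDiagonal]
  rfl


/-- charpoly of the `m × m` matrix `a•I + b•J`. -/
lemma charpoly_block (m : ℕ) (hm : 0 < m) (a b : ℝ) :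
    (Matrix.of fun i j : Fin m => (if i = j then a else 0) + b).charpoly
      = (X - C (a + b * (m : ℝ))) * (X - C a) ^ (m - 1) := by
  have hm0 : (m : ℝ) ≠ 0 := Nat.cast_ne_zero.mpr hm.ne'
  haveI : NeZero m := ⟨hm.ne'⟩
  set A : Matrix (Fin m) (Fin m) ℝ :=
    Matrix.of fun i j => (if i = j then a else 0) + b with hA
  set P : Matrix (Fin m) (Fin m) ℝ := Matrix.of fun i j =>
    if j = 0 then 1 else if i = 0 then 1 else if i = j then -1 else 0 with hP
  set Q : Matrix (Fin m) (Fin m) ℝ := Matrix.of fun i j =>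
    (m : ℝ)⁻¹ - (if i = 0 then 0 else if i = j then 1 else 0) with hQ
  set D : Matrix (Fin m) (Fin m) ℝ :=
    Matrix.diagonal (fun j => if j = 0 then a + b * (m : ℝ) else a) with hD
  have hQP : Q * P = 1 := by
    ext i j
    rw [Matrix.mul_apply]
    by_cases hj : j = 0
    · subst hj
      have h1 : ∀ l, P l 0 = 1 := fun l => by simp [hP]
      simp only [h1, mul_one, hQ, Matrix.of_apply]
      rw [Finset.sum_sub_distrib, Finset.sum_const, Finset.card_univ, Fintype.card_fin,
        nsmul_eq_mul]
      by_cases hi : i = 0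
      · subst hi
        simp [Matrix.one_apply, hm0]
      · simp only [if_neg hi]
        rw [Finset.sum_ite_eq Finset.univ i (fun _ => (1:ℝ))]
        simp [hi, Matrix.one_apply, hm0]
    · have hsplit : ∀ l, Q i l * P l j
          = (if l = 0 then Q i 0 else 0) + (if l = j then -(Q i j) else 0) := by
        intro l
        by_cases h0 : l = 0
        · subst h0
          have : (0 : Fin m) ≠ j := fun h => hj h.symm
          simp [hP, this, hj]
        · by_cases hlj : l = j
          · subst hlj
            simp [hP, h0, hj]
          · simp [hP, h0, hlj, hj]
      rw [Finset.sum_congr rfl fun l _ => hsplit l, Finset.sum_add_distrib,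
        Finset.sum_ite_eq' Finset.univ (0 : Fin m) (fun _ => Q i 0),
        Finset.sum_ite_eq' Finset.univ j (fun _ => -(Q i j))]
      simp only [Finset.mem_univ, if_true]
      by_cases hi : i = 0
      · subst hi
        have : (0 : Fin m) ≠ j := fun h => hj h.symm
        simp [hQ, Matrix.one_apply, this]
      · by_cases hij : i = j
        · subst hij
          simp [hQ, hi, Matrix.one_apply]
        · simp [hQ, hi, hij, Matrix.one_apply]
  have hPQ : P * Q = 1 := mul_eq_one_comm.mp hQP
  have hAP : A * P = P * D := by
    ext i j
    rw [Matrix.mul_apply]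
    have hsplit : ∀ l, A i l * P l j = a * (if l = i then P l j else 0) + b * P l j := by
      intro l
      by_cases h : i = l
      · subst h; simp [hA]; ring
      · have : l ≠ i := fun hh => h hh.symm
        simp [hA, h, this]
    rw [Finset.sum_congr rfl fun l _ => hsplit l, Finset.sum_add_distrib,
      ← Finset.mul_sum, ← Finset.mul_sum,
      Finset.sum_ite_eq' Finset.univ i (fun l => P l j)]
    simp only [Finset.mem_univ, if_true]
    have hcol : ∑ l, P l j = if j = 0 then (m : ℝ) else 0 := by
      by_cases hj : j = 0
      · subst hj
        simp [hP, Finset.sum_const, Finset.card_univ]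
      · have hsplit2 : ∀ l : Fin m, P l j
            = (if l = 0 then 1 else 0) + (if l = j then -1 else 0) := by
          intro l
          by_cases h0 : l = 0
          · subst h0
            have : (0 : Fin m) ≠ j := fun h => hj h.symm
            simp [hP, this, hj]
          · by_cases hlj : l = j
            · subst hlj; simp [hP, h0, hj]
            · simp [hP, h0, hlj, hj]
        rw [Finset.sum_congr rfl fun l _ => hsplit2 l, Finset.sum_add_distrib,
          Finset.sum_ite_eq' Finset.univ (0 : Fin m) (fun _ => (1:ℝ)),
          Finset.sum_ite_eq' Finset.univ j (fun _ => (-1:ℝ))]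
        simp [hj]
    rw [hcol, hD, Matrix.mul_diagonal]
    by_cases hj : j = 0
    · subst hj
      have hP1 : P i 0 = 1 := by simp [hP]
      rw [if_pos rfl, if_pos rfl, hP1]
      ring
    · rw [if_neg hj, if_neg hj, mul_zero, add_zero]
      ring
  have hAconj : A = P * D * Q := by
    calc A = A * (P * Q) := by rw [hPQ, mul_one]
    _ = (A * P) * Q := by rw [mul_assoc]
    _ = P * D * Q := by rw [hAP]
  have hcp : A.charpoly = D.charpoly := by
    rw [hAconj]
    exact charpoly_conj D Q P hPQ
  rw [hcp, hD, charpoly_diagonal]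
  rw [← Finset.mul_prod_erase Finset.univ _ (Finset.mem_univ (0 : Fin m))]
  simp only [if_true, eq_self_iff_true, if_pos rfl]
  congr 1
  have hcongr : ∏ j ∈ Finset.univ.erase (0 : Fin m),
      (X - C (if j = 0 then a + b * (m:ℝ) else a))
      = ∏ _j ∈ Finset.univ.erase (0 : Fin m), (X - C a) := by
    refine Finset.prod_congr rfl fun j hj => ?_
    rw [Finset.mem_erase] at hj
    rw [if_neg hj.1]
  rw [hcongr, Finset.prod_const, Finset.card_erase_of_mem (Finset.mem_univ _),
    Finset.card_univ, Fintype.card_fin]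


lemma charpoly_classMatrix {V κ : Type*} [Fintype V] [DecidableEq V] [Fintype κ]
    [DecidableEq κ] (m : ℕ) (hm : 0 < m) (e : V ≃ Fin m × κ) (a b : ℝ) :
    (Matrix.of fun v w : V =>
        (if v = w then a else 0) + (if (e v).2 = (e w).2 then b else 0)).charpoly
      = ((X - C (a + b * (m : ℝ))) ^ Fintype.card κ)
        * ((X - C a) ^ (Fintype.card κ * (m - 1))) := by
  set A : Matrix V V ℝ := Matrix.of fun v w =>
    (if v = w then a else 0) + (if (e v).2 = (e w).2 then b else 0) with hA
  have hre : Matrix.reindex e e A = Matrix.blockDiagonal fun _ : κ =>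
      (Matrix.of fun i j : Fin m => (if i = j then a else 0) + b) := by
    ext ⟨i, k⟩ ⟨j, k'⟩
    simp only [Matrix.reindex_apply, Matrix.submatrix_apply, Matrix.blockDiagonal_apply,
      hA, Matrix.of_apply, Equiv.apply_symm_apply]
    by_cases hk : k = k'
    · subst hk
      by_cases hij : i = j
      · subst hij; simp
      · have h1 : e.symm (i, k) ≠ e.symm (j, k) := fun h => hij (by
          have := e.symm.injective h
          exact (Prod.ext_iff.mp this).1)
        simp [h1, hij]
    · have h1 : e.symm (i, k) ≠ e.symm (j, k') := fun h => hk (by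
        have := e.symm.injective h
        exact (Prod.ext_iff.mp this).2)
      simp [h1, hk]
  rw [← Matrix.charpoly_reindex e, hre, charpoly_blockDiagonal]
  have : ∀ _k : κ, (Matrix.of fun i j : Fin m =>
      (if i = j then a else 0) + b).charpoly
      = (X - C (a + b * (m : ℝ))) * (X - C a) ^ (m - 1) :=
    fun _ => charpoly_block m hm a b
  rw [Finset.prod_congr rfl fun k _ => this k, Finset.prod_const, Finset.card_univ,
    mul_pow, ← pow_mul, Nat.mul_comm (m - 1)]

lemma roots_aux (r1 r2 : ℝ) (k1 k2 : ℕ) :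
    (((X - C r1) ^ k1) * ((X - C r2) ^ k2) : ℝ[X]).roots
      = Multiset.replicate k1 r1 + Multiset.replicate k2 r2 := by
  rw [Polynomial.roots_mul
      (mul_ne_zero (pow_ne_zero _ (Polynomial.X_sub_C_ne_zero r1))
        (pow_ne_zero _ (Polynomial.X_sub_C_ne_zero r2))),
    Polynomial.roots_pow, Polynomial.roots_pow, Polynomial.roots_X_sub_C,
    Polynomial.roots_X_sub_C, Multiset.nsmul_singleton, Multiset.nsmul_singleton]



theorem centralizer_card_and_comm {G : Type*} [Group G] [Fintype G] {p : ℕ} (hp : p.Prime)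
    (hq : Nat.card (G ⧸ Subgroup.center G) = p * p) {x : G} (hx : x ∉ Subgroup.center G) :
    Nat.card (Subgroup.centralizer ({x} : Set G)) = p * Nat.card (Subgroup.center G) ∧
      ∀ a b : Subgroup.centralizer ({x} : Set G), a * b = b * a := by
  haveI : Fact p.Prime := ⟨hp⟩
  set Z := Subgroup.center G with hZdef
  set Cx := Subgroup.centralizer ({x} : Set G) with hCx
  have hZC : Z ≤ Cx := Subgroup.center_le_centralizer {x}
  have hxC : x ∈ Cx := Subgroup.mem_centralizer_singleton_iff.mpr rfl
  set f : Cx →* G ⧸ Z := (QuotientGroup.mk' Z).comp Cx.subtype with hf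
  have hker : ∀ c : Cx, c ∈ f.ker ↔ (c : G) ∈ Z := by
    intro c
    rw [MonoidHom.mem_ker]
    simp only [hf, MonoidHom.comp_apply, Subgroup.coe_subtype, QuotientGroup.mk'_apply]
    rw [QuotientGroup.eq_one_iff]
  have hkerZ : Nat.card f.ker = Nat.card Z := by
    have : f.ker = Z.subgroupOf Cx := by
      ext c
      rw [hker, Subgroup.mem_subgroupOf]
    rw [this]
    exact Nat.card_congr (Subgroup.subgroupOfEquivOfLe hZC).toEquiv
  have hrange_dvd : Nat.card f.range ∣ p ^ 2 := by
    have h := Subgroup.card_subgroup_dvd_card f.range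
    rwa [hq, ← pow_two] at h
  have hr_ne_one : Nat.card f.range ≠ 1 := by
    intro h1
    have hbot : f.range = ⊥ := (Subgroup.eq_bot_iff_card (H := f.range)).mpr h1
    have : f ⟨x, hxC⟩ ∈ f.range := ⟨⟨x, hxC⟩, rfl⟩
    rw [hbot, Subgroup.mem_bot] at this
    have : (x : G ⧸ Z) = 1 := this
    rw [QuotientGroup.eq_one_iff] at this
    exact hx this
  have hr_ne_sq : Nat.card f.range ≠ p ^ 2 := by
    intro h2
    have htop : f.range = ⊤ := by
      apply Subgroup.eq_top_of_card_eq
      rw [h2, hq, pow_two]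
    have hCtop : Cx = ⊤ := by
      rw [eq_top_iff]
      intro g _
      have : (g : G ⧸ Z) ∈ f.range := by rw [htop]; trivial
      obtain ⟨c, hc⟩ := this
      have hcg : (c : G)⁻¹ * g ∈ Z := by
        rw [← QuotientGroup.eq]
        exact hc
      have : g = (c : G) * ((c : G)⁻¹ * g) := by group
      rw [this]
      exact Cx.mul_mem c.2 (hZC hcg)
    apply hx
    rw [hZdef, Subgroup.mem_center_iff]
    intro g
    have : g ∈ Cx := hCtop ▸ Subgroup.mem_top g
    exact Subgroup.mem_centralizer_singleton_iff.mp this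
  have hrange_card : Nat.card f.range = p := by
    obtain ⟨i, hi, hcard⟩ := (Nat.dvd_prime_pow hp).mp hrange_dvd
    interval_cases i
    · rw [pow_zero] at hcard; exact absurd hcard hr_ne_one
    · simpa using hcard
    · exact absurd hcard hr_ne_sq
  constructor
  · have h1 : Nat.card Cx = Nat.card (Cx ⧸ f.ker) * Nat.card f.ker :=
      Subgroup.card_eq_card_quotient_mul_card_subgroup f.ker
    have h2 : Nat.card (Cx ⧸ f.ker) = Nat.card f.range :=
      Nat.card_congr (QuotientGroup.quotientKerEquivRange f).toEquiv
    rw [h1, h2, hrange_card, hkerZ]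
  · haveI : IsCyclic f.range := isCyclic_of_prime_card hrange_card
    apply commutative_of_cyclic_center_quotient f.rangeRestrict
    rw [MonoidHom.ker_rangeRestrict]
    intro c hc
    rw [hker] at hc
    rw [Subgroup.mem_center_iff]
    intro b
    have hcb := Subgroup.mem_center_iff.mp hc (b : G)
    ext
    simpa using hcb

lemma card_mem_and_not_mem {G : Type*} [Group G] [Fintype G] {H K : Subgroup G}
    (hKH : K ≤ H) :
    Nat.card {g : G // g ∈ H ∧ g ∉ K} = Nat.card H - Nat.card K := by
  rw [Nat.card_eq_fintype_card]
  have h1 : (Finset.univ.filter fun g : G => g ∈ H ∧ g ∉ K)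
      = (Finset.univ.filter fun g : G => g ∈ H) \ (Finset.univ.filter fun g : G => g ∈ K) := by
    ext g
    simp only [Finset.mem_filter, Finset.mem_sdiff, Finset.mem_univ, true_and]
  have hsub : (Finset.univ.filter fun g : G => g ∈ K)
      ⊆ (Finset.univ.filter fun g : G => g ∈ H) := by
    intro g hg
    simp only [Finset.mem_filter, Finset.mem_univ, true_and] at *
    exact hKH hg
  rw [Fintype.card_subtype, h1, Finset.card_sdiff_of_subset hsub]
  congr 1
  · rw [Nat.card_eq_fintype_card, ← Fintype.card_subtype]
  · rw [Nat.card_eq_fintype_card, ← Fintype.card_subtype]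

end CNAux
end CNAux

/-- CNL/CNSL spectra and energies of the commuting graph of a finite non-abelian group `G`
with `G/Z(G) ≅ ℤ_p × ℤ_p`, where `z = |Z(G)|`. -/
theorem cnl_spectra_energies_central_quotient_ZpZp
    (p : ℕ) (hp : p.Prime) (G : Type*) [Group G] [Fintype G]
    (hna : ¬∀ x y : G, x * y = y * x)
    (hiso : Nonempty ((G ⧸ Subgroup.center G) ≃* (ZMod p × ZMod p)))
    (z : ℕ) (hz : z = Nat.card (Subgroup.center G)) :
    cnlSpec (commutingGraph G) =
      Multiset.replicate (p + 1) (0 : ℝ) +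
        Multiset.replicate ((p + 1) * ((p - 1) * z - 1))
          ((((p : ℝ) - 1) * (z : ℝ)) * (((p : ℝ) - 1) * (z : ℝ) - 2)) ∧
    cnslSpec (commutingGraph G) =
      Multiset.replicate (p + 1)
          (2 * (((p : ℝ) - 1) * (z : ℝ) - 1) * (((p : ℝ) - 1) * (z : ℝ) - 2)) +
        Multiset.replicate ((p + 1) * ((p - 1) * z - 1))
          ((((p : ℝ) - 1) * (z : ℝ) - 2) ^ 2) ∧
    (z = 1 ∧ p = 2 →
      cnlEnergy (commutingGraph G) = 0 ∧ cnslEnergy (commutingGraph G) = 0) ∧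
    (¬(z = 1 ∧ p = 2) →
      cnlEnergy (commutingGraph G) =
        2 * ((p : ℝ) + 1) * (((p : ℝ) - 1) * (z : ℝ) - 2) * (((p : ℝ) - 1) * (z : ℝ) - 1) ∧
      cnslEnergy (commutingGraph G) =
        2 * ((p : ℝ) + 1) * (((p : ℝ) - 1) * (z : ℝ) - 2) * (((p : ℝ) - 1) * (z : ℝ) - 1)) := by
  
  classical
  obtain ⟨φ⟩ := hiso
  haveI : Fact p.Prime := ⟨hp⟩
  have hq : Nat.card (G ⧸ Subgroup.center G) = p * p := by
    rw [Nat.card_congr φ.toEquiv, Nat.card_prod, Nat.card_zmod]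
  have hzpos : 0 < z := by rw [hz]; exact Nat.card_pos
  have hp2 := hp.two_le
  set m : ℕ := (p - 1) * z with hm
  have hmpos : 0 < m := Nat.mul_pos (by omega) hzpos
  set M : ℝ := (m : ℝ) with hMdef
  have hM1 : (1 : ℝ) ≤ M := by
    rw [hMdef]; exact_mod_cast hmpos
  have hMval : M = ((p : ℝ) - 1) * (z : ℝ) := by
    rw [hMdef, hm]
    push_cast [Nat.cast_sub (by omega : 1 ≤ p)]
    ring
  -- the commuting relation on vertices
  set r : {g : G // g ∉ Subgroup.center G} → {g : G // g ∉ Subgroup.center G} → Prop :=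
    fun v w => (v : G) * (w : G) = (w : G) * (v : G) with hr
  have hrrefl : ∀ v, r v v := fun v => rfl
  have hrsymm : ∀ {v w}, r v w → r w v := fun h => h.symm
  have hcent := fun (x : G) (hx : x ∉ Subgroup.center G) =>
    CNAux.centralizer_card_and_comm hp hq hx
  have hrtrans : ∀ {u v w}, r u v → r v w → r u w := by
    intro u v w huv hvw
    have hu : (u : G) ∈ Subgroup.centralizer {(v : G)} :=
      Subgroup.mem_centralizer_singleton_iff.mpr huv
    have hw : (w : G) ∈ Subgroup.centralizer {(v : G)} :=
      Subgroup.mem_centralizer_singleton_iff.mpr hvw.symm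
    have := (hcent (v : G) v.2).2 ⟨u, hu⟩ ⟨w, hw⟩
    exact Subtype.ext_iff.mp this
  -- each commuting class has m elements
  have hclass : ∀ v, (Finset.univ.filter fun w => r v w).card = m := by
    intro v
    have hcard := (hcent (v : G) v.2).1
    have hiff : ∀ w : {g : G // g ∉ Subgroup.center G},
        r v w ↔ ((w : G) ∈ Subgroup.centralizer {(v : G)} ∧ (w : G) ∉ Subgroup.center G) := by
      intro w
      constructor
      · intro h; exact ⟨Subgroup.mem_centralizer_singleton_iff.mpr h.symm, w.2⟩
      · intro h; exact (Subgroup.mem_centralizer_singleton_iff.mp h.1).symm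
    rw [← Fintype.card_subtype]
    have E : {w : {g : G // g ∉ Subgroup.center G} // r v w} ≃
        {g : G // g ∈ Subgroup.centralizer {(v : G)} ∧ g ∉ Subgroup.center G} :=
      { toFun := fun w => ⟨(w.1 : G), ((hiff w.1).mp w.2).1, w.1.2⟩
        invFun := fun g => ⟨⟨g.1, g.2.2⟩, (hiff ⟨g.1, g.2.2⟩).mpr ⟨g.2.1, g.2.2⟩⟩
        left_inv := fun w => rfl
        right_inv := fun g => rfl }
    rw [← Nat.card_eq_fintype_card, Nat.card_congr E,
      CNAux.card_mem_and_not_mem (Subgroup.center_le_centralizer {(v : G)}), hcard, ← hz, hm,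
      Nat.sub_mul, one_mul]
  -- cardinality of the vertex set
  have hVcard : Fintype.card {g : G // g ∉ Subgroup.center G} = (p + 1) * m := by
    have h1 : Fintype.card {g : G // g ∉ Subgroup.center G}
        = Fintype.card G - Fintype.card {g : G // g ∈ Subgroup.center G} :=
      Fintype.card_subtype_compl _
    have hG : Fintype.card G = p * p * z := by
      have h := Subgroup.card_eq_card_quotient_mul_card_subgroup (Subgroup.center G)
      rw [hq, ← hz] at h
      rw [← Nat.card_eq_fintype_card]
      exact h
    have hZc : Fintype.card {g : G // g ∈ Subgroup.center G} = z := by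
      rw [hz, Nat.card_eq_fintype_card]
    have e1 : (p + 1) * (p - 1) = p * p - 1 := by
      have h1 : 1 ≤ p := by omega
      have h2 : 1 ≤ p * p := Nat.one_le_iff_ne_zero.mpr (by positivity)
      zify [h1, h2]
      ring
    rw [h1, hG, hZc, hm, ← mul_assoc, e1, Nat.sub_mul, one_mul]
  -- the setoid of commuting classes
  set s : Setoid {g : G // g ∉ Subgroup.center G} :=
    ⟨r, ⟨hrrefl, fun h => hrsymm h, fun h h' => hrtrans h h'⟩⟩ with hs
  haveI : DecidableEq (Quotient s) := Classical.decEq _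
  have hfiber : ∀ c : Quotient s, Fintype.card {v // Quotient.mk s v = c} = m := by
    intro c
    obtain ⟨v, rfl⟩ := Quotient.exists_rep c
    rw [← hclass v, ← Fintype.card_subtype]
    refine Fintype.card_congr (Equiv.subtypeEquivRight fun w => ?_)
    rw [Quotient.eq]
    exact ⟨fun h => hrsymm h, fun h => hrsymm h⟩
  set F : ∀ c : Quotient s, {v // Quotient.mk s v = c} ≃ Fin m :=
    fun c => Fintype.equivFinOfCardEq (hfiber c) with hF
  set e : {g : G // g ∉ Subgroup.center G} ≃ Fin m × Quotient s :=
    ((Equiv.sigmaFiberEquiv (Quotient.mk s)).symm.trans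
      ((Equiv.sigmaCongrRight F).trans
        ((Equiv.sigmaEquivProd (Quotient s) (Fin m)).trans
          (Equiv.prodComm (Quotient s) (Fin m))))) with he
  have he2 : ∀ v, (e v).2 = Quotient.mk s v := fun v => rfl
  have heiff : ∀ v w, ((e v).2 = (e w).2) ↔ r v w := by
    intro v w
    rw [he2, he2, Quotient.eq]
    exact Iff.rfl
  have hkκ : Fintype.card (Quotient s) = p + 1 := by
    have h := Fintype.card_congr e
    rw [hVcard, Fintype.card_prod, Fintype.card_fin, mul_comm (m : ℕ)] at h
    exact (Nat.eq_of_mul_eq_mul_right hmpos h.symm)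
  -- entries of the common neighborhood matrix
  have hcn : ∀ v w, cnMatrix (commutingGraph G) v w
      = (M - 2) * ((if r v w then (1 : ℝ) else 0) - (if v = w then (1 : ℝ) else 0)) := by
    intro v w
    by_cases hvw : v = w
    · subst hvw
      rw [if_pos (hrrefl v)]
      simp [cnMatrix]
    · rw [cnMatrix]
      rw [if_neg hvw]
      by_cases hrc : r v w
      · have hset : (Finset.univ.filter fun x => x ≠ v ∧ x ≠ w ∧
            (commutingGraph G).Adj x v ∧ (commutingGraph G).Adj x w)
            = (Finset.univ.filter fun x => r v x) \ {v, w} := by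
          ext x
          simp only [Finset.mem_filter, Finset.mem_univ, true_and, Finset.mem_sdiff,
            Finset.mem_insert, Finset.mem_singleton]
          constructor
          · rintro ⟨hxv, hxw, h1, h2⟩
            exact ⟨hrsymm h1.2, by tauto⟩
          · rintro ⟨hrx, hx⟩
            push_neg at hx
            exact ⟨hx.1, hx.2, ⟨hx.1, hrsymm hrx⟩, ⟨hx.2, hrtrans (hrsymm hrx) hrc⟩⟩
        have hsub2 : ({v, w} : Finset _) ⊆ Finset.univ.filter fun x => r v x := by
          intro x hx
          simp only [Finset.mem_insert, Finset.mem_singleton] at hx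
          simp only [Finset.mem_filter, Finset.mem_univ, true_and]
          rcases hx with rfl | rfl
          · exact hrrefl x
          · exact hrc
        have hcard2 : ({v, w} : Finset _).card = 2 := by
          rw [Finset.card_insert_of_notMem (by simpa using hvw), Finset.card_singleton]
        have hm2 : 2 ≤ m := by
          have hle := Finset.card_le_card hsub2
          rwa [hclass v, hcard2] at hle
        rw [hset, Finset.card_sdiff_of_subset hsub2, hclass v, hcard2, if_pos hrc, if_neg hvw]
        push_cast [Nat.cast_sub hm2]
        ring
      · have hset : (Finset.univ.filter fun x => x ≠ v ∧ x ≠ w ∧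
            (commutingGraph G).Adj x v ∧ (commutingGraph G).Adj x w) = ∅ := by
          ext x
          simp only [Finset.mem_filter, Finset.mem_univ, true_and, Finset.notMem_empty,
            iff_false]
          rintro ⟨hxv, hxw, h1, h2⟩
          exact hrc (hrtrans (hrsymm h1.2) h2.2)
        rw [hset, if_neg hrc, if_neg hvw]
        simp
  -- row sums
  have hrow : ∀ v, ∑ w, cnMatrix (commutingGraph G) v w = (M - 1) * (M - 2) := by
    intro v
    rw [Finset.sum_congr rfl fun w _ => hcn v w, ← Finset.mul_sum, Finset.sum_sub_distrib]
    have h1 : ∑ w, (if r v w then (1 : ℝ) else 0) = M := by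
      rw [Finset.sum_boole, hMdef]
      norm_cast
      exact hclass v
    have h2 : ∑ w, (if v = w then (1 : ℝ) else 0) = 1 := by
      rw [Finset.sum_ite_eq Finset.univ v (fun _ => (1 : ℝ))]
      simp
    rw [h1, h2]
    ring
  -- delta
  have hnV : (Fintype.card {g : G // g ∉ Subgroup.center G} : ℝ) ≠ 0 := by
    rw [hVcard]
    exact_mod_cast (Nat.mul_pos (by omega) hmpos).ne'
  have hdelta : cnDelta (commutingGraph G) = (M - 1) * (M - 2) := by
    rw [cnDelta, cnrs, Matrix.trace_diagonal,
      Finset.sum_congr rfl fun v _ => hrow v, Finset.sum_const, Finset.card_univ,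
      nsmul_eq_mul, mul_div_cancel_left₀ _ hnV]
  -- the CNL matrix
  have hcnl_mat : cnl (commutingGraph G) = Matrix.of fun v w =>
      (if v = w then M * (M - 2) else 0) + (if (e v).2 = (e w).2 then -(M - 2) else 0) := by
    ext v w
    rw [Matrix.of_apply, cnl, cnrs, Matrix.sub_apply, Matrix.diagonal_apply, hcn v w]
    by_cases hvw : v = w
    · subst hvw
      simp only [eq_self_iff_true, if_true, if_pos (hrrefl v), hrow v]
      ring
    · by_cases hrc : r v w
      · simp only [if_neg hvw, if_pos hrc, if_pos ((heiff v w).mpr hrc)]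
        ring
      · simp only [if_neg hvw, if_neg hrc, if_neg (fun h => hrc ((heiff v w).mp h))]
        ring
  -- the CNSL matrix
  have hcnsl_mat : cnsl (commutingGraph G) = Matrix.of fun v w =>
      (if v = w then (M - 2) * (M - 2) else 0) + (if (e v).2 = (e w).2 then (M - 2) else 0) := by
    ext v w
    rw [Matrix.of_apply, cnsl, cnrs, Matrix.add_apply, Matrix.diagonal_apply, hcn v w]
    by_cases hvw : v = w
    · subst hvw
      simp only [eq_self_iff_true, if_true, if_pos (hrrefl v), hrow v]
      ring
    · by_cases hrc : r v w
      · simp only [if_neg hvw, if_pos hrc, if_pos ((heiff v w).mpr hrc)]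
        ring
      · simp only [if_neg hvw, if_neg hrc, if_neg (fun h => hrc ((heiff v w).mp h))]
        ring
  -- spectra (internal form)
  open Polynomial in
  have hspecl : cnlSpec (commutingGraph G)
      = Multiset.replicate (p + 1) (0 : ℝ)
        + Multiset.replicate ((p + 1) * (m - 1)) (M * (M - 2)) := by
    have hchl := CNAux.charpoly_classMatrix m hmpos e (M * (M - 2)) (-(M - 2))
    rw [show M * (M - 2) + -(M - 2) * (m : ℝ) = (0 : ℝ) by rw [← hMdef]; ring, hkκ] at hchl
    rw [cnlSpec, hcnl_mat, hchl, CNAux.roots_aux]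
  open Polynomial in
  have hspecsl : cnslSpec (commutingGraph G)
      = Multiset.replicate (p + 1) (2 * (M - 1) * (M - 2))
        + Multiset.replicate ((p + 1) * (m - 1)) ((M - 2) * (M - 2)) := by
    have hchl := CNAux.charpoly_classMatrix m hmpos e ((M - 2) * (M - 2)) (M - 2)
    rw [show (M - 2) * (M - 2) + (M - 2) * (m : ℝ) = 2 * (M - 1) * (M - 2) by
      rw [← hMdef]; ring, hkκ] at hchl
    rw [cnslSpec, hcnsl_mat, hchl, CNAux.roots_aux]
  -- energies (internal form)
  have hmap : ∀ (k1 k2 : ℕ) (r1 r2 d : ℝ),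
      ((Multiset.replicate k1 r1 + Multiset.replicate k2 r2).map fun a => |a - d|).sum
        = k1 * |r1 - d| + k2 * |r2 - d| := by
    intro k1 k2 r1 r2 d
    rw [Multiset.map_add, Multiset.sum_add, Multiset.map_replicate, Multiset.map_replicate,
      Multiset.sum_replicate, Multiset.sum_replicate, nsmul_eq_mul, nsmul_eq_mul]
  have hLEl : cnlEnergy (commutingGraph G)
      = (p + 1 : ℕ) * |0 - (M - 1) * (M - 2)|
        + ((p + 1) * (m - 1) : ℕ) * |M * (M - 2) - (M - 1) * (M - 2)| := by
    rw [cnlEnergy, hspecl, hdelta, hmap]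
  have hLEsl : cnslEnergy (commutingGraph G)
      = (p + 1 : ℕ) * |2 * (M - 1) * (M - 2) - (M - 1) * (M - 2)|
        + ((p + 1) * (m - 1) : ℕ) * |(M - 2) * (M - 2) - (M - 1) * (M - 2)| := by
    rw [cnslEnergy, hspecsl, hdelta, hmap]
  refine ⟨?_, ?_, ?_, ?_⟩
  · rw [hspecl, ← hMval]
  · rw [hspecsl, ← hMval]
    congr 2
    ring
  · rintro ⟨hz1, hp21⟩
    have hm1 : m = 1 := by rw [hm, hz1, hp21]
    have hM1' : M = 1 := by rw [hMdef, hm1]; norm_cast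
    constructor
    · rw [hLEl, hM1', hm1]
      norm_num
    · rw [hLEsl, hM1', hm1]
      norm_num
  · intro hne
    have hm2 : 2 ≤ m := by
      rcases Nat.lt_or_ge p 3 with h3 | h3
      · have hp21 : p = 2 := by omega
        have hz2 : 2 ≤ z := by
          rcases Nat.lt_or_ge z 2 with h | h
          · exact absurd ⟨by omega, hp21⟩ hne
          · exact h
        rw [hm, hp21]
        omega
      · have h2 : 2 ≤ p - 1 := by omega
        calc 2 = 2 * 1 := rfl
          _ ≤ (p - 1) * z := Nat.mul_le_mul h2 hzpos
    have hM2 : (2 : ℝ) ≤ M := by rw [hMdef]; exact_mod_cast hm2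
    have habs1 : |0 - (M - 1) * (M - 2)| = (M - 1) * (M - 2) := by
      rw [zero_sub, abs_neg, abs_of_nonneg (by nlinarith)]
    have habs2 : |M * (M - 2) - (M - 1) * (M - 2)| = M - 2 := by
      rw [show M * (M - 2) - (M - 1) * (M - 2) = M - 2 by ring,
        abs_of_nonneg (by linarith)]
    have habs3 : |2 * (M - 1) * (M - 2) - (M - 1) * (M - 2)| = (M - 1) * (M - 2) := by
      rw [show 2 * (M - 1) * (M - 2) - (M - 1) * (M - 2) = (M - 1) * (M - 2) by ring,
        abs_of_nonneg (by nlinarith)]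
    have habs4 : |(M - 2) * (M - 2) - (M - 1) * (M - 2)| = M - 2 := by
      rw [show (M - 2) * (M - 2) - (M - 1) * (M - 2) = -(M - 2) by ring, abs_neg,
        abs_of_nonneg (by linarith)]
    have hcast : (((p + 1) * (m - 1) : ℕ) : ℝ) = ((p : ℝ) + 1) * (M - 1) := by
      rw [hMdef]
      push_cast [Nat.cast_sub (by omega : 1 ≤ m)]
      ring
    constructor
    · rw [hLEl, habs1, habs2, hcast, ← hMval]
      push_cast
      ring
    · rw [hLEsl, habs3, habs4, hcast, ← hMval]
      push_cast
      ring
end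
end

section
/- Let p be a prime and let G be a non-abelian group of order p³. Then the CNL-spectrum of Γ_G is {0 with multiplicity p+1, p(p−1)(p(p−1)−2) with multiplicity (p+1)((p−1)p−1)}; the CNSL-spectrum of Γ_G is {2((p−1)p−1)((p−1)p−2) with multiplicity p+1, ((p−1)p−2)² with multiplicity (p+1)((p−1)p−1)}; and LE_CN(Γ_G) = LE⁺_CN(Γ_G) = 2(p+1)((p−1)p−2)((p−1)p−1). -/
open scoped Classical

noncomputable section

open CN


section Aux
open Polynomial Matrix

lemma charpoly_ab {α : Type*} [Fintype α] [DecidableEq α] [Nonempty α] (a b : ℝ) :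
    (Matrix.of fun i j : α => if i = j then a else b).charpoly
      = (X - C (a + ((Fintype.card α : ℝ) - 1) * b)) * (X - C (a - b)) ^ (Fintype.card α - 1) := by
  set m := Fintype.card α with hm
  have hm1 : 1 ≤ m := Fintype.card_pos
  apply Polynomial.eq_of_infinite_eval_eq
  apply Set.Infinite.mono (s := {a - b}ᶜ) _ ((Set.finite_singleton (a-b)).infinite_compl)
  intro z hz
  simp only [Set.mem_compl_iff, Set.mem_singleton_iff] at hz
  have hc : z - a + b ≠ 0 := fun h => hz (by linarith)
  simp only [Set.mem_setOf_eq]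
  have h1 : Polynomial.eval z ((Matrix.of fun i j : α => if i = j then a else b).charpoly)
      = Matrix.det (Matrix.of fun i j : α => if i = j then z - a else -b) := by
    rw [Matrix.charpoly, eval_det, matPolyEquiv_eval_eq_map]
    congr 1
    ext i j
    by_cases h : i = j
    · subst h; simp [Matrix.charmatrix_apply_eq]
    · simp [Matrix.charmatrix_apply_ne _ _ _ h, h]
  have h2 : (Matrix.of fun i j : α => if i = j then z - a else -b)
      = (z - a + b) • (1 + Matrix.replicateCol Unit (fun _ => (-b) / (z - a + b)) * Matrix.replicateRow Unit (fun _ => (1:ℝ))) := by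
    ext i j
    by_cases h : i = j
    · subst h
      simp [Matrix.mul_apply, Matrix.one_apply]
      field_simp
      ring
    · simp [Matrix.mul_apply, Matrix.one_apply_ne h, h]
      field_simp
  rw [h1, h2, Matrix.det_smul, Matrix.det_one_add_replicateCol_mul_replicateRow]
  have hsum : (fun _ : α => (1:ℝ)) ⬝ᵥ (fun _ => (-b) / (z - a + b)) = m * ((-b) / (z-a+b)) := by
    simp [dotProduct, Finset.sum_const, hm]
  rw [hsum]
  have hpow : (z - a + b) ^ m = (z - a + b) ^ (m - 1) * (z - a + b) := by
    rw [← pow_succ, Nat.sub_add_cancel hm1]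
  rw [eval_mul, eval_pow, eval_sub, eval_sub, eval_X, eval_C, eval_C, hpow]
  have : z - (a - b) = z - a + b := by ring
  rw [this]
  field_simp
  ring

lemma charmatrix_blockDiagonal {m o : Type*} [Fintype m] [DecidableEq m] [Fintype o] [DecidableEq o]
    (M : o → Matrix m m ℝ) :
    charmatrix (Matrix.blockDiagonal M) = Matrix.blockDiagonal (fun k => charmatrix (M k)) := by
  ext ⟨i, k⟩ ⟨j, k'⟩
  by_cases hk : k = k'
  · subst hk
    by_cases hij : i = j
    · subst hij
      rw [charmatrix_apply_eq, Matrix.blockDiagonal_apply_eq, Matrix.blockDiagonal_apply_eq,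
        charmatrix_apply_eq]
    · have hne : ((i, k) : m × o) ≠ (j, k) := by simp [hij]
      rw [charmatrix_apply_ne _ _ _ hne, Matrix.blockDiagonal_apply_eq,
        Matrix.blockDiagonal_apply_eq, charmatrix_apply_ne _ _ _ hij]
  · have hne : ((i, k) : m × o) ≠ (j, k') := by simp [hk]
    rw [charmatrix_apply_ne _ _ _ hne, Matrix.blockDiagonal_apply_ne _ _ _ hk,
      Matrix.blockDiagonal_apply_ne _ _ _ hk, map_zero, neg_zero]

lemma charpoly_blockDiagonal_s7 {m o : Type*} [Fintype m] [DecidableEq m] [Fintype o] [DecidableEq o]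
    (M : o → Matrix m m ℝ) :
    (Matrix.blockDiagonal M).charpoly = ∏ k, (M k).charpoly := by
  unfold Matrix.charpoly
  rw [charmatrix_blockDiagonal, Matrix.det_blockDiagonal]

open scoped Classical in
lemma charpoly_of_rel {V : Type*} [Fintype V] [DecidableEq V] [Nonempty V]
    (r : V → V → Prop) (hr : Equivalence r) (m k : ℕ)
    (hm : ∀ v, (Finset.univ.filter fun w => r w v).card = m)
    (hk : Fintype.card V = k * m)
    (a b : ℝ) (M : Matrix V V ℝ)
    (hM : ∀ i j, M i j = if r i j then (if i = j then a else b) else 0) :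
    M.charpoly = ((X - C (a + ((m:ℝ) - 1) * b)) * (X - C (a - b)) ^ (m - 1)) ^ k := by
  have hm1 : 1 ≤ m := by
    obtain ⟨v⟩ := ‹Nonempty V›
    rw [← hm v]
    exact Finset.card_pos.2 ⟨v, by simp [hr.refl v]⟩
  haveI : Nonempty (Fin m) := ⟨⟨0, hm1⟩⟩
  set S : Setoid V := ⟨r, hr⟩ with hS
  have hfib : ∀ q : Quotient S, Fintype.card {v // Quotient.mk S v = q} = m := by
    intro q
    obtain ⟨v0, rfl⟩ := Quotient.exists_rep q
    rw [Fintype.card_subtype]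
    rw [← hm v0]
    congr 1
    ext w
    simp [Quotient.eq, hS]
    exact Iff.rfl
  have efib : ∀ q : Quotient S, {v // Quotient.mk S v = q} ≃ Fin m :=
    fun q => Fintype.equivFinOfCardEq (hfib q)
  let E : V ≃ Fin m × Quotient S :=
    (Equiv.sigmaFiberEquiv (Quotient.mk S)).symm.trans
      ((Equiv.sigmaCongrRight efib).trans
        ((Equiv.sigmaEquivProd (Quotient S) (Fin m)).trans (Equiv.prodComm _ _)))
  have hE2 : ∀ v : V, (E v).2 = Quotient.mk S v := fun v => rfl
  have hreix : Matrix.reindex E E M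
      = Matrix.blockDiagonal (fun _ : Quotient S => Matrix.of fun i j : Fin m => if i = j then a else b) := by
    ext ⟨i, q⟩ ⟨j, q'⟩
    rw [Matrix.reindex_apply, Matrix.submatrix_apply, hM]
    set v := E.symm (i, q)
    set w := E.symm (j, q')
    have hv : Quotient.mk S v = q := by rw [← hE2 v]; simp [v]
    have hw : Quotient.mk S w = q' := by rw [← hE2 w]; simp [w]
    have hrvw : r v w ↔ q = q' := by
      rw [← hv, ← hw]
      exact ⟨fun h => Quotient.sound h, fun h => Quotient.exact h⟩
    have hvw : v = w ↔ (i, q) = (j, q') := by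
      constructor
      · intro h; have := congrArg E h; simpa [v, w] using this
      · intro h; simp [v, w, h]
    by_cases hq : q = q'
    · subst hq
      rw [Matrix.blockDiagonal_apply_eq]
      simp only [hrvw.2 rfl, if_true, Matrix.of_apply]
      by_cases hij : i = j
      · subst hij; simp [hvw.2 rfl]
      · have : ¬ v = w := fun h => hij (by simpa using (hvw.1 h))
        simp [this, hij]
    · rw [Matrix.blockDiagonal_apply_ne _ _ _ hq]
      exact if_neg (fun h => hq (hrvw.1 h))
  have hcp := Matrix.charpoly_reindex E M
  rw [← hcp, hreix, charpoly_blockDiagonal_s7]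
  have hblock := charpoly_ab (α := Fin m) a b
  rw [Finset.prod_congr rfl (fun q _ => by rw [hblock, Fintype.card_fin])]
  rw [Finset.prod_const, Finset.card_univ]
  congr 1
  have hcV : Fintype.card V = Fintype.card (Fin m × Quotient S) := Fintype.card_congr E
  rw [Fintype.card_prod, Fintype.card_fin] at hcV
  have hmm : m * Fintype.card (Quotient S) = m * k := by
    rw [← hcV, hk]; ring
  exact Nat.eq_of_mul_eq_mul_left (by omega) hmm

lemma roots_form (e1 e2 : ℝ) (s k : ℕ) :
    (((X - C e1) * (X - C e2) ^ s) ^ k).roots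
      = Multiset.replicate k e1 + Multiset.replicate (k * s) e2 := by
  have h1 : (X - C e1) * (X - C e2) ^ s ≠ 0 :=
    ((monic_X_sub_C e1).mul ((monic_X_sub_C e2).pow s)).ne_zero
  rw [Polynomial.roots_pow, Polynomial.roots_mul h1, Polynomial.roots_pow,
    Polynomial.roots_X_sub_C, Polynomial.roots_X_sub_C, smul_add]
  congr 1
  · rw [← Multiset.nsmul_singleton]
  · rw [smul_smul, ← Multiset.nsmul_singleton]

section GroupFacts
variable {G : Type*} [Group G] [Fintype G] {p : ℕ}

lemma center_card_p3 (hp : p.Prime) (hna : ¬∀ x y : G, x * y = y * x)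
    (hcard : Fintype.card G = p ^ 3) : Nat.card (Subgroup.center G) = p := by
  haveI : Fact p.Prime := ⟨hp⟩
  have hn3 : Nat.card G = p ^ 3 := by rw [Nat.card_eq_fintype_card, hcard]
  obtain ⟨k, hk0, hZ⟩ := IsPGroup.card_center_eq_prime_pow hn3 (by norm_num)
  have hdvd : Nat.card (Subgroup.center G) ∣ Nat.card G := Subgroup.card_subgroup_dvd_card _
  rw [hZ, hn3] at hdvd
  have hk3 : k ≤ 3 := (Nat.pow_dvd_pow_iff_le_right hp.one_lt).1 hdvd
  have hnc : ¬ IsCyclic (G ⧸ Subgroup.center G) := fun h =>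
    hna (commutative_of_cyclic_center_quotient (QuotientGroup.mk' _)
      (by rw [QuotientGroup.ker_mk']))
  have hk1 : k = 1 := by
    by_contra hk
    have hk2 : 2 ≤ k := by omega
    apply hnc
    apply isCyclic_of_card_dvd_prime (p := p)
    have hq : Nat.card (G ⧸ Subgroup.center G) * Nat.card (Subgroup.center G) = Nat.card G :=
      (Subgroup.card_eq_card_quotient_mul_card_subgroup _).symm
    rw [hZ, hn3] at hq
    have h2 : Nat.card (G ⧸ Subgroup.center G) * p ^ k = p ^ (3 - k) * p ^ k := by
      rw [hq, ← pow_add]; congr 1; omega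
    have h3 : Nat.card (G ⧸ Subgroup.center G) = p ^ (3 - k) :=
      Nat.eq_of_mul_eq_mul_right (pow_pos hp.pos k) h2
    rw [h3]
    calc p ^ (3 - k) ∣ p ^ 1 := pow_dvd_pow p (by omega)
      _ = p := pow_one p
  rw [hZ, hk1, pow_one]

lemma centralizer_card_p3 (hp : p.Prime) (hna : ¬∀ x y : G, x * y = y * x)
    (hcard : Fintype.card G = p ^ 3) {v : G} (hv : v ∉ Subgroup.center G) :
    Nat.card (Subgroup.centralizer ({v} : Set G)) = p ^ 2 := by
  haveI : Fact p.Prime := ⟨hp⟩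
  have hn3 : Nat.card G = p ^ 3 := by rw [Nat.card_eq_fintype_card, hcard]
  have hZ := center_card_p3 hp hna hcard
  set C := Subgroup.centralizer ({v} : Set G) with hC
  have hvC : v ∈ C := Subgroup.mem_centralizer_singleton_iff.2 rfl
  have hZC : Subgroup.center G ≤ C := Subgroup.center_le_centralizer {v}
  obtain ⟨j, hj3, hCc⟩ := (Nat.dvd_prime_pow hp).1 (hn3 ▸ Subgroup.card_subgroup_dvd_card C)
  have hCne : C ≠ ⊤ := by
    intro h
    apply hv
    apply Subgroup.mem_center_iff.2
    intro g
    have hg : g ∈ C := by rw [h]; exact Subgroup.mem_top g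
    exact Subgroup.mem_centralizer_singleton_iff.1 hg
  have hj2 : j ≠ 3 := by
    intro h
    exact hCne (Subgroup.eq_top_of_card_eq (G := G) (H := C) (by rw [hCc, h, hn3]))
  have hjge : 2 ≤ j := by
    by_contra hjlt
    have hple : Nat.card C ≤ p := by
      rw [hCc]
      calc p ^ j ≤ p ^ 1 := Nat.pow_le_pow_right hp.pos (by omega)
        _ = p := pow_one p
    have hsub : (Subgroup.center G : Set G) ⊆ (C : Set G) := hZC
    have hfin : (C : Set G).Finite := Set.toFinite _
    have heq : (Subgroup.center G : Set G) = (C : Set G) := by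
      apply Set.eq_of_subset_of_ncard_le hsub _ hfin
      rw [← Nat.card_coe_set_eq, ← Nat.card_coe_set_eq]
      simp only [SetLike.coe_sort_coe]
      rw [hZ]; exact hple
    exact hv (by rw [SetLike.mem_coe.symm, heq]; exact hvC)
  have : j = 2 := by omega
  rw [hCc, this]

end GroupFacts

end Aux

/-- CNL/CNSL spectra and energies of the commuting graph of a non-abelian group of order `p³`. -/
theorem cnl_spectra_energies_order_p_cubed
    (p : ℕ) (hp : p.Prime) (G : Type*) [Group G] [Fintype G]
    (hna : ¬∀ x y : G, x * y = y * x)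
    (hcard : Fintype.card G = p ^ 3) :
    cnlSpec (commutingGraph G) =
      Multiset.replicate (p + 1) (0 : ℝ) +
        Multiset.replicate ((p + 1) * ((p - 1) * p - 1))
          ((p : ℝ) * ((p : ℝ) - 1) * ((p : ℝ) * ((p : ℝ) - 1) - 2)) ∧
    cnslSpec (commutingGraph G) =
      Multiset.replicate (p + 1)
          (2 * (((p : ℝ) - 1) * (p : ℝ) - 1) * (((p : ℝ) - 1) * (p : ℝ) - 2)) +
        Multiset.replicate ((p + 1) * ((p - 1) * p - 1))
          ((((p : ℝ) - 1) * (p : ℝ) - 2) ^ 2) ∧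
    cnlEnergy (commutingGraph G) =
      2 * ((p : ℝ) + 1) * (((p : ℝ) - 1) * (p : ℝ) - 2) * (((p : ℝ) - 1) * (p : ℝ) - 1) ∧
    cnslEnergy (commutingGraph G) =
      2 * ((p : ℝ) + 1) * (((p : ℝ) - 1) * (p : ℝ) - 2) * (((p : ℝ) - 1) * (p : ℝ) - 1) := by
  classical
  haveI : Fact p.Prime := ⟨hp⟩
  have hp2 : 2 ≤ p := hp.two_le
  set V := {g : G // g ∉ Subgroup.center G} with hV
  let r : V → V → Prop := fun x y => (x : G) * y = y * x
  have hcomm : ∀ y : V, ∀ a b : Subgroup.centralizer ({(y : G)} : Set G), a * b = b * a := by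
    intro y
    exact IsPGroup.commutative_of_card_eq_prime_sq (centralizer_card_p3 hp hna hcard y.2)
  have hrequiv : Equivalence r := by
    constructor
    · intro x; rfl
    · intro x y h; exact h.symm
    · intro x y z hxy hyz
      have hx : (x : G) ∈ Subgroup.centralizer ({(y : G)} : Set G) :=
        Subgroup.mem_centralizer_singleton_iff.2 hxy
      have hz : (z : G) ∈ Subgroup.centralizer ({(y : G)} : Set G) :=
        Subgroup.mem_centralizer_singleton_iff.2 hyz.symm
      exact congrArg Subtype.val (hcomm y ⟨_, hx⟩ ⟨_, hz⟩)
  have hne : Nonempty V := by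
    by_contra h
    apply hna
    intro x y
    have hall : ∀ g : G, g ∈ Subgroup.center G := by
      intro g
      by_contra hg
      exact h ⟨⟨g, hg⟩⟩
    exact Subgroup.mem_center_iff.1 (hall y) x
  set m : ℕ := (p - 1) * p with hmdef
  have hm2 : 2 ≤ m := by
    have h1 : 1 ≤ p - 1 := by omega
    calc 2 = 1 * 2 := by norm_num
    _ ≤ (p - 1) * p := Nat.mul_le_mul h1 hp2
  have hmcast : ((m : ℕ) : ℝ) = ((p : ℝ) - 1) * (p : ℝ) := by
    rw [hmdef, Nat.cast_mul, Nat.cast_sub hp.one_le, Nat.cast_one]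
  have hmR2 : (2 : ℝ) ≤ (m : ℝ) := by exact_mod_cast hm2
  have hpR2 : (2 : ℝ) ≤ (p : ℝ) := by exact_mod_cast hp2
  have hZc : Fintype.card {g : G // g ∈ Subgroup.center G} = p := by
    rw [← Nat.card_eq_fintype_card]
    exact center_card_p3 hp hna hcard
  have key : ∀ n : ℕ, 2 ≤ n → n ^ 3 - n = (n + 1) * ((n - 1) * n) := by
    intro n hn
    obtain ⟨q, rfl⟩ : ∃ q, n = q + 2 := ⟨n - 2, by omega⟩
    have h1 : q + 2 ≤ (q + 2) ^ 3 := Nat.le_self_pow (by norm_num) _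
    rw [Nat.sub_eq_iff_eq_add h1]
    have h2 : q + 2 - 1 = q + 1 := by omega
    rw [h2]; ring
  have hcV : Fintype.card V = (p + 1) * m := by
    rw [Fintype.card_subtype_compl, hZc, hcard, hmdef]
    exact key p hp2
  have hclass : ∀ v : V, (Finset.univ.filter fun w : V => r w v).card = m := by
    intro v
    have e1 : (Finset.univ.filter fun w : V => r w v).card
        = Fintype.card {w : V // r w v} := (Fintype.card_subtype _).symm
    rw [e1]
    have e2 : {w : V // r w v} ≃ {g : G // g ∉ Subgroup.center G ∧ g * (v : G) = (v : G) * g} :=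
      Equiv.subtypeSubtypeEquivSubtypeInter (fun g : G => g ∉ Subgroup.center G)
        (fun g : G => g * (v : G) = (v : G) * g)
    rw [Fintype.card_congr e2, Fintype.card_subtype]
    have e3 : (Finset.univ.filter fun g : G => g ∉ Subgroup.center G ∧ g * (v : G) = (v : G) * g)
        = (Finset.univ.filter fun g : G => g * (v : G) = (v : G) * g)
          \ (Finset.univ.filter fun g : G => g ∈ Subgroup.center G) := by
      ext g
      simp only [Finset.mem_filter, Finset.mem_sdiff, Finset.mem_univ, true_and]
      tauto
    rw [e3, Finset.card_sdiff_of_subset]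
    · have c1 : (Finset.univ.filter fun g : G => g * (v : G) = (v : G) * g).card = p ^ 2 := by
        rw [← Fintype.card_subtype]
        have e4 : {g : G // g * (v : G) = (v : G) * g}
            ≃ Subgroup.centralizer ({(v : G)} : Set G) :=
          Equiv.subtypeEquivRight fun g => Subgroup.mem_centralizer_singleton_iff.symm
        rw [Fintype.card_congr e4, ← Nat.card_eq_fintype_card]
        exact centralizer_card_p3 hp hna hcard v.2
      have c2 : (Finset.univ.filter fun g : G => g ∈ Subgroup.center G).card = p := by
        rw [← Fintype.card_subtype]
        exact hZc
      rw [c1, c2, hmdef, Nat.sub_one_mul, sq]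
    · intro g hg
      simp only [Finset.mem_filter, Finset.mem_univ, true_and] at hg ⊢
      exact (Subgroup.mem_center_iff.1 hg (v : G)).symm
  haveI := hne
  have hadj : ∀ x y : V, (commutingGraph G).Adj x y ↔ x ≠ y ∧ r x y := fun x y => Iff.rfl
  -- entries of the common neighborhood matrix
  have hCNentry : ∀ i j : V, cnMatrix (commutingGraph G) i j
      = if i = j then 0 else (if r i j then ((m : ℝ) - 2) else 0) := by
    intro i j
    by_cases hij : i = j
    · subst hij; simp [cnMatrix]
    · rw [cnMatrix, if_neg hij, if_neg hij]
      by_cases hrij : r i j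
      · rw [if_pos hrij]
        have hfilter : (Finset.univ.filter fun x : V =>
              x ≠ i ∧ x ≠ j ∧ (commutingGraph G).Adj x i ∧ (commutingGraph G).Adj x j)
            = (Finset.univ.filter fun w : V => r w i) \ {i, j} := by
          ext x
          simp only [Finset.mem_filter, Finset.mem_univ, true_and, Finset.mem_sdiff,
            Finset.mem_insert, Finset.mem_singleton, hadj]
          constructor
          · rintro ⟨h1, h2, ⟨-, h3⟩, -⟩
            exact ⟨h3, by tauto⟩
          · rintro ⟨h3, h4⟩
            push_neg at h4
            exact ⟨h4.1, h4.2, ⟨h4.1, h3⟩, ⟨h4.2, hrequiv.trans h3 hrij⟩⟩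
        have hsub : ({i, j} : Finset V) ⊆ Finset.univ.filter fun w : V => r w i := by
          intro x hx
          simp only [Finset.mem_insert, Finset.mem_singleton] at hx
          simp only [Finset.mem_filter, Finset.mem_univ, true_and]
          rcases hx with h | h
          · rw [h]
          · rw [h]; exact hrequiv.symm hrij
        rw [hfilter, Finset.card_sdiff_of_subset hsub, hclass i, Finset.card_pair hij,
          Nat.cast_sub hm2, Nat.cast_ofNat]
      · rw [if_neg hrij]
        have hfe : (Finset.univ.filter fun x : V =>
              x ≠ i ∧ x ≠ j ∧ (commutingGraph G).Adj x i ∧ (commutingGraph G).Adj x j) = ∅ := by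
          ext x
          simp only [Finset.mem_filter, Finset.mem_univ, true_and, Finset.notMem_empty,
            iff_false, hadj]
          rintro ⟨h1, h2, ⟨-, h3⟩, ⟨-, h4⟩⟩
          exact hrij (hrequiv.trans (hrequiv.symm h3) h4)
        rw [hfe]
        simp
  -- row sums
  have hrow : ∀ i : V, (∑ j, cnMatrix (commutingGraph G) i j)
      = ((m : ℝ) - 1) * ((m : ℝ) - 2) := by
    intro i
    have hterm : ∀ j : V, cnMatrix (commutingGraph G) i j
        = if (r i j ∧ j ≠ i) then ((m : ℝ) - 2) else 0 := by
      intro j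
      rw [hCNentry]
      by_cases hij : i = j
      · subst hij; simp
      · by_cases hrij : r i j
        · simp [hij, hrij, Ne.symm hij]
        · simp [hij, hrij]
    rw [Finset.sum_congr rfl fun j _ => hterm j]
    rw [Finset.sum_ite, Finset.sum_const, Finset.sum_const_zero, add_zero]
    have hcardf : (Finset.univ.filter fun j : V => r i j ∧ j ≠ i).card = m - 1 := by
      have e5 : (Finset.univ.filter fun j : V => r i j ∧ j ≠ i)
          = (Finset.univ.filter fun w : V => r w i) \ {i} := by
        ext x
        simp only [Finset.mem_filter, Finset.mem_univ, true_and, Finset.mem_sdiff,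
          Finset.mem_singleton]
        exact ⟨fun ⟨h1, h2⟩ => ⟨hrequiv.symm h1, h2⟩, fun ⟨h1, h2⟩ => ⟨hrequiv.symm h1, h2⟩⟩
      have hsub2 : ({i} : Finset V) ⊆ Finset.univ.filter fun w : V => r w i := by
        intro x hx
        simp only [Finset.mem_singleton] at hx
        simp only [Finset.mem_filter, Finset.mem_univ, true_and]
        rw [hx]
      rw [e5, Finset.card_sdiff_of_subset hsub2, hclass i, Finset.card_singleton]
    rw [hcardf, nsmul_eq_mul, Nat.cast_sub (by omega), Nat.cast_one]
  -- entries of cnl and cnsl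
  have hCNL : ∀ i j : V, cnl (commutingGraph G) i j
      = if r i j then (if i = j then ((m:ℝ)-1)*((m:ℝ)-2) else -((m:ℝ)-2)) else 0 := by
    intro i j
    rw [cnl, Matrix.sub_apply, cnrs, Matrix.diagonal_apply, hCNentry]
    by_cases hij : i = j
    · subst hij
      rw [if_pos rfl, if_pos rfl, sub_zero, hrow i, if_pos (hrequiv.refl i), if_pos rfl]
    · rw [if_neg hij, if_neg hij, zero_sub]
      by_cases hrij : r i j
      · rw [if_pos hrij, if_pos hrij, if_neg hij]
      · rw [if_neg hrij, if_neg hrij, neg_zero]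
  have hCNSL : ∀ i j : V, cnsl (commutingGraph G) i j
      = if r i j then (if i = j then ((m:ℝ)-1)*((m:ℝ)-2) else ((m:ℝ)-2)) else 0 := by
    intro i j
    rw [cnsl, Matrix.add_apply, cnrs, Matrix.diagonal_apply, hCNentry]
    by_cases hij : i = j
    · subst hij
      rw [if_pos rfl, if_pos rfl, add_zero, hrow i, if_pos (hrequiv.refl i), if_pos rfl]
    · rw [if_neg hij, if_neg hij, zero_add]
      by_cases hrij : r i j
      · rw [if_pos hrij, if_pos hrij, if_neg hij]
      · rw [if_neg hrij, if_neg hrij]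
  -- charpolys and spectra
  have hCPL := charpoly_of_rel r hrequiv m (p+1) hclass hcV
      (((m:ℝ)-1)*((m:ℝ)-2)) (-(((m:ℝ))-2)) (cnl (commutingGraph G)) hCNL
  have hCPSL := charpoly_of_rel r hrequiv m (p+1) hclass hcV
      (((m:ℝ)-1)*((m:ℝ)-2)) (((m:ℝ))-2) (cnsl (commutingGraph G)) hCNSL
  have hspecL : cnlSpec (commutingGraph G)
      = Multiset.replicate (p+1) (0:ℝ)
        + Multiset.replicate ((p+1)*(m-1)) ((m:ℝ) * ((m:ℝ)-2)) := by
    rw [cnlSpec, hCPL, roots_form]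
    have v1 : ((m:ℝ)-1)*((m:ℝ)-2) + ((m:ℝ)-1)*(-(((m:ℝ))-2)) = 0 := by ring
    have v2 : ((m:ℝ)-1)*((m:ℝ)-2) - (-(((m:ℝ))-2)) = (m:ℝ)*((m:ℝ)-2) := by ring
    rw [v1, v2]
  have hspecSL : cnslSpec (commutingGraph G)
      = Multiset.replicate (p+1) (2*((m:ℝ)-1)*((m:ℝ)-2))
        + Multiset.replicate ((p+1)*(m-1)) (((m:ℝ)-2)^2) := by
    rw [cnslSpec, hCPSL, roots_form]
    have v3 : ((m:ℝ)-1)*((m:ℝ)-2) + ((m:ℝ)-1)*(((m:ℝ))-2) = 2*((m:ℝ)-1)*((m:ℝ)-2) := by ring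
    have v4 : ((m:ℝ)-1)*((m:ℝ)-2) - (((m:ℝ))-2) = ((m:ℝ)-2)^2 := by ring
    rw [v3, v4]
  -- delta
  have hcVne : ((Fintype.card V : ℕ) : ℝ) ≠ 0 := by
    rw [hcV]
    exact Nat.cast_ne_zero.2 (by positivity)
  have hdelta : cnDelta (commutingGraph G) = ((m:ℝ)-1)*((m:ℝ)-2) := by
    rw [cnDelta, cnrs, Matrix.trace_diagonal]
    rw [Finset.sum_congr rfl fun i _ => hrow i, Finset.sum_const, Finset.card_univ,
      nsmul_eq_mul]
    rw [mul_comm, mul_div_assoc, div_self hcVne, mul_one]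
  -- energies
  have habs1 : |(0:ℝ) - (((m:ℝ)-1)*((m:ℝ)-2))| = ((m:ℝ)-1)*((m:ℝ)-2) := by
    rw [zero_sub, abs_neg, abs_of_nonneg (by nlinarith)]
  have habs2 : |(m:ℝ) * ((m:ℝ)-2) - (((m:ℝ)-1)*((m:ℝ)-2))| = (m:ℝ)-2 := by
    have e6 : (m:ℝ) * ((m:ℝ)-2) - (((m:ℝ)-1)*((m:ℝ)-2)) = (m:ℝ)-2 := by ring
    rw [e6, abs_of_nonneg (by linarith)]
  have habs3 : |2*((m:ℝ)-1)*((m:ℝ)-2) - (((m:ℝ)-1)*((m:ℝ)-2))| = ((m:ℝ)-1)*((m:ℝ)-2) := by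
    have e7 : 2*((m:ℝ)-1)*((m:ℝ)-2) - (((m:ℝ)-1)*((m:ℝ)-2)) = ((m:ℝ)-1)*((m:ℝ)-2) := by ring
    rw [e7, abs_of_nonneg (by nlinarith)]
  have habs4 : |((m:ℝ)-2)^2 - (((m:ℝ)-1)*((m:ℝ)-2))| = (m:ℝ)-2 := by
    have e8 : ((m:ℝ)-2)^2 - (((m:ℝ)-1)*((m:ℝ)-2)) = -((m:ℝ)-2) := by ring
    rw [e8, abs_neg, abs_of_nonneg (by linarith)]
  have hmult : (((p+1)*(m-1) : ℕ) : ℝ) = ((p:ℝ)+1) * ((m:ℝ)-1) := by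
    rw [Nat.cast_mul, Nat.cast_add, Nat.cast_one, Nat.cast_sub (by omega), Nat.cast_one]
  have w1 : (m:ℝ)*((m:ℝ)-2) = (p:ℝ)*((p:ℝ)-1)*((p:ℝ)*((p:ℝ)-1)-2) := by
    rw [hmcast]; ring
  have w2 : 2*((m:ℝ)-1)*((m:ℝ)-2) = 2*(((p:ℝ)-1)*(p:ℝ)-1)*(((p:ℝ)-1)*(p:ℝ)-2) := by
    rw [hmcast]
  have w3 : ((m:ℝ)-2)^2 = (((p:ℝ)-1)*(p:ℝ)-2)^2 := by
    rw [hmcast]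
  refine ⟨?_, ?_, ?_, ?_⟩
  · rw [hspecL, w1]
  · rw [hspecSL, w2, w3]
  · rw [cnlEnergy, hspecL, hdelta, Multiset.map_add, Multiset.map_replicate,
      Multiset.map_replicate, Multiset.sum_add, Multiset.sum_replicate, Multiset.sum_replicate,
      habs1, habs2, nsmul_eq_mul, nsmul_eq_mul, hmult]
    push_cast
    rw [hmcast]
    ring
  · rw [cnslEnergy, hspecSL, hdelta, Multiset.map_add, Multiset.map_replicate,
      Multiset.map_replicate, Multiset.sum_add, Multiset.sum_replicate, Multiset.sum_replicate,
      habs3, habs4, nsmul_eq_mul, nsmul_eq_mul, hmult]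
    push_cast
    rw [hmcast]
    ring
end
end

section
/- Let n ≥ 2 and let Q_{4n} = ⟨x, y : y^{2n} = 1, x² = y^n, xyx⁻¹ = y⁻¹⟩ be the dicyclic (generalized quaternion) group of order 4n. Then the CNL-spectrum of Γ_{Q_{4n}} is {0 with multiplicity 2n+1, (2n−2)(2n−4) with multiplicity 2n−3}; the CNSL-spectrum of Γ_{Q_{4n}} is {0 with multiplicity 2n, 2(2n−3)(2n−4) with multiplicity 1, (2n−4)² with multiplicity 2n−3}; LE_CN(Γ_{Q_{4n}}) = 4(n−2)(n−1)(2n−3)(2n+1)/(2n−1); and LE⁺_CN(Γ_{Q_{4n}}) = 8(n−2)(n−1)n(2n−3)/(2n−1). -/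
open scoped Classical

noncomputable section

open CN

namespace CNQ
open QuaternionGroup

variable {n : ℕ} [NeZero n]

lemma natCast_zmod_inj {a b : ℕ} (ha : a < 2*n) (hb : b < 2*n) :
    ((a : ZMod (2*n)) = b) ↔ a = b := by
  haveI : NeZero (2*n) := ⟨by have := NeZero.pos n; omega⟩
  constructor
  · intro h
    have := congrArg ZMod.val h
    rwa [ZMod.val_cast_of_lt ha, ZMod.val_cast_of_lt hb] at this
  · rintro rfl; rfl

lemma add_self_eq_zero_iff (i : ZMod (2*n)) :
    i + i = 0 ↔ i = 0 ∨ i = (n : ZMod (2*n)) := by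
  haveI : NeZero (2*n) := ⟨by have := NeZero.pos n; omega⟩
  constructor
  · intro h
    have hi : ((i.val : ZMod (2*n))) = i := ZMod.natCast_rightInverse i
    rw [← hi, ← Nat.cast_add, ZMod.natCast_eq_zero_iff] at h
    have hv : i.val < 2*n := ZMod.val_lt i
    obtain ⟨k, hk⟩ := h
    have : i.val = 0 ∨ i.val = n := by
      rcases Nat.lt_or_ge k 2 with h2 | h2
      · interval_cases k <;> omega
      · nlinarith
    rcases this with h0 | h0
    · left; rw [← hi, h0]; simp
    · right; rw [← hi, h0]
  · rintro (rfl | rfl)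
    · simp
    · rw [← Nat.cast_add, show n + n = 2*n by ring, ZMod.natCast_self]

set_option linter.unusedSectionVars false

lemma a_mem_center_iff (i : ZMod (2*n)) :
    a i ∈ Subgroup.center (QuaternionGroup n) ↔ i = 0 ∨ i = (n : ZMod (2*n)) := by
  rw [Subgroup.mem_center_iff, ← add_self_eq_zero_iff]
  constructor
  · intro h
    have := h (xa 0)
    rw [xa_mul_a, a_mul_xa] at this
    simp only [xa.injEq] at this
    -- this : 0 + i = 0 - i
    rw [zero_add, zero_sub] at this
    linear_combination this
  · intro h g
    match g with
    | a j => rw [a_mul_a, a_mul_a, add_comm]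
    | xa j =>
        rw [xa_mul_a, a_mul_xa, xa.injEq]
        have : i = -i := by linear_combination h
        rw [sub_eq_add_neg, ← this]

lemma xa_not_mem_center (hn : 2 ≤ n) (j : ZMod (2*n)) :
    xa j ∉ Subgroup.center (QuaternionGroup n) := by
  intro h
  rw [Subgroup.mem_center_iff] at h
  have := h (a 1)
  rw [a_mul_xa, xa_mul_a, xa.injEq] at this
  have h2 : (1 : ZMod (2*n)) + 1 = 0 := by linear_combination -this
  rw [add_self_eq_zero_iff] at h2
  haveI : Fact (1 < 2*n) := ⟨by omega⟩
  rcases h2 with h0 | h0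
  · exact one_ne_zero h0
  · have : (1:ℕ) = n := (natCast_zmod_inj (n := n) (a := 1) (b := n) (by omega) (by omega)).mp (by push_cast; exact h0)
    omega

variable (n) in
abbrev STn := {i : ZMod (2*n) // i ≠ 0 ∧ i ≠ (n : ZMod (2*n))} ⊕ ZMod (2*n)

def vEquiv (hn : 2 ≤ n) :
    {g : QuaternionGroup n // g ∉ Subgroup.center (QuaternionGroup n)} ≃ STn n where
  toFun g := match g with
    | ⟨a i, h⟩ => Sum.inl ⟨i, by rw [a_mem_center_iff] at h; push_neg at h; exact h⟩
    | ⟨xa j, _⟩ => Sum.inr j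
  invFun w := match w with
    | Sum.inl ⟨i, h⟩ => ⟨a i, by rw [a_mem_center_iff]; push_neg; exact h⟩
    | Sum.inr j => ⟨xa j, xa_not_mem_center hn j⟩
  left_inv g := by rcases g with ⟨(i|j), h⟩ <;> rfl
  right_inv w := by rcases w with ⟨i, h⟩ | j <;> rfl

@[simp] lemma vEquiv_symm_inl (hn : 2 ≤ n) (s : {i : ZMod (2*n) // i ≠ 0 ∧ i ≠ (n : ZMod (2*n))}) :
    ((vEquiv hn).symm (Sum.inl s) : QuaternionGroup n) = a s.1 := by
  rcases s with ⟨i, h⟩; rfl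

@[simp] lemma vEquiv_symm_inr (hn : 2 ≤ n) (j : ZMod (2*n)) :
    ((vEquiv hn).symm (Sum.inr j) : QuaternionGroup n) = xa j := rfl

variable (n) in
abbrev Vn := {g : QuaternionGroup n // g ∉ Subgroup.center (QuaternionGroup n)}

lemma n_ne_zero' (hn : 2 ≤ n) : (n : ZMod (2*n)) ≠ 0 := by
  intro h
  have : n = 0 := (natCast_zmod_inj (n:=n) (a:=n) (b:=0) (by omega) (by omega)).mp
    (by push_cast; exact h)
  omega

lemma a_notCenter {i : ZMod (2*n)} (h : i ≠ 0 ∧ i ≠ (n : ZMod (2*n))) :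
    a i ∉ Subgroup.center (QuaternionGroup n) := by
  rw [a_mem_center_iff]; push_neg; exact h

lemma cg_adj {G : Type*} [Group G] (x y : {g : G // g ∉ Subgroup.center G}) :
    (commutingGraph G).Adj x y ↔ x ≠ y ∧ (x : G) * y = (y : G) * x := Iff.rfl

lemma adj_a_a {i j : ZMod (2*n)} {hi hj} :
    (commutingGraph (QuaternionGroup n)).Adj ⟨a i, hi⟩ ⟨a j, hj⟩ ↔ i ≠ j := by
  rw [cg_adj]
  constructor
  · rintro ⟨hne, -⟩ rfl; exact hne rfl
  · intro h
    refine ⟨fun hc => h (by simpa [Subtype.ext_iff, a.injEq] using hc), ?_⟩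
    rw [a_mul_a, a_mul_a, add_comm]

lemma not_adj_a_xa {i j : ZMod (2*n)} {hi hj} :
    ¬ (commutingGraph (QuaternionGroup n)).Adj ⟨a i, hi⟩ ⟨xa j, hj⟩ := by
  rw [cg_adj]
  rintro ⟨-, h⟩
  rw [a_mul_xa, xa_mul_a, xa.injEq] at h
  have h2 : i + i = 0 := by linear_combination -h
  rw [add_self_eq_zero_iff] at h2
  exact (a_notCenter (by rw [a_mem_center_iff] at hi; push_neg at hi; exact hi))
    ((a_mem_center_iff i).mpr h2)

lemma not_adj_xa_a {i j : ZMod (2*n)} {hi hj} :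
    ¬ (commutingGraph (QuaternionGroup n)).Adj ⟨xa j, hj⟩ ⟨a i, hi⟩ :=
  fun h => not_adj_a_xa h.symm

lemma adj_xa_xa (hn : 2 ≤ n) {i j : ZMod (2*n)} {hi hj} :
    (commutingGraph (QuaternionGroup n)).Adj ⟨xa i, hi⟩ ⟨xa j, hj⟩ ↔ j = i + n := by
  rw [cg_adj]
  constructor
  · rintro ⟨hne, hc⟩
    rw [xa_mul_xa, xa_mul_xa, a.injEq] at hc
    have h2 : (j - i) + (j - i) = 0 := by linear_combination hc
    rw [add_self_eq_zero_iff] at h2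
    rcases h2 with h0 | h0
    · exact absurd (Subtype.ext (show xa i = xa j by rw [show j = i from by linear_combination h0])) hne
    · linear_combination h0
  · rintro rfl
    refine ⟨?_, by
      rw [xa_mul_xa, xa_mul_xa, a.injEq]
      have h2n : ((2*n : ℕ) : ZMod (2*n)) = 0 := ZMod.natCast_self _
      push_cast at h2n
      linear_combination h2n⟩
    intro h
    have := congrArg Subtype.val h
    simp only [xa.injEq] at this
    exact n_ne_zero' hn (by linear_combination -this)

lemma card_filter4 (hn : 2 ≤ n) {i j : ZMod (2*n)} (hi0 : i ≠ 0) (hin : i ≠ (n:ZMod (2*n)))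
    (hj0 : j ≠ 0) (hjn : j ≠ (n:ZMod (2*n))) (hij : i ≠ j) :
    (Finset.univ.filter fun k : ZMod (2*n) =>
        (k ≠ 0 ∧ k ≠ (n:ZMod (2*n))) ∧ k ≠ i ∧ k ≠ j).card = 2*n - 4 := by
  haveI : NeZero (2*n) := ⟨by have := NeZero.pos n; omega⟩
  have heq : (Finset.univ.filter fun k : ZMod (2*n) =>
        (k ≠ 0 ∧ k ≠ (n:ZMod (2*n))) ∧ k ≠ i ∧ k ≠ j)
      = Finset.univ \ {0, (n:ZMod (2*n)), i, j} := by
    ext k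
    simp only [Finset.mem_filter, Finset.mem_univ, true_and, Finset.mem_sdiff,
      Finset.mem_insert, Finset.mem_singleton]
    tauto
  rw [heq, Finset.card_sdiff_of_subset (Finset.subset_univ _), Finset.card_univ, ZMod.card]
  have h0n : (0 : ZMod (2*n)) ≠ (n:ZMod (2*n)) := fun h => n_ne_zero' hn h.symm
  rw [Finset.card_insert_of_notMem (by
    simp only [Finset.mem_insert, Finset.mem_singleton]
    push_neg
    exact ⟨h0n, Ne.symm hi0, Ne.symm hj0⟩)]
  rw [Finset.card_insert_of_notMem (by
    simp only [Finset.mem_insert, Finset.mem_singleton]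
    push_neg
    exact ⟨Ne.symm hin, Ne.symm hjn⟩)]
  rw [Finset.card_insert_of_notMem (by simpa using hij), Finset.card_singleton]

def idx : QuaternionGroup n → ZMod (2*n)
  | a i => i
  | xa j => j

lemma card_common_aa (hn : 2 ≤ n) {i j : ZMod (2*n)} (hi : i ≠ 0 ∧ i ≠ (n:ZMod (2*n)))
    (hj : j ≠ 0 ∧ j ≠ (n:ZMod (2*n))) (hij : i ≠ j) {hu hv} :
    (Finset.univ.filter fun x : Vn n => x ≠ ⟨a i, hu⟩ ∧ x ≠ ⟨a j, hv⟩ ∧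
        (commutingGraph (QuaternionGroup n)).Adj x ⟨a i, hu⟩ ∧
        (commutingGraph (QuaternionGroup n)).Adj x ⟨a j, hv⟩).card = 2*n - 4 := by
  refine Eq.trans ?_ (card_filter4 hn hi.1 hi.2 hj.1 hj.2 hij)
  refine Finset.card_bij' (fun x _ => idx x.1)
    (fun k hk => ⟨a k, a_notCenter (Finset.mem_filter.mp hk).2.1⟩) ?_ ?_ ?_ ?_
  · rintro ⟨(k|k), hk⟩ hx
    · simp only [Finset.mem_filter, Finset.mem_univ, true_and] at hx ⊢
      obtain ⟨h1, h2, h3, h4⟩ := hx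
      have hk' : k ≠ 0 ∧ k ≠ (n:ZMod (2*n)) := by
        rw [a_mem_center_iff] at hk; push_neg at hk; exact hk
      refine ⟨hk', ?_, ?_⟩
      · intro hki; exact h1 (Subtype.ext (show a k = a i by rw [show idx (a k) = k from rfl] at hki; rw [hki]))
      · intro hkj; exact h2 (Subtype.ext (show a k = a j by rw [show idx (a k) = k from rfl] at hkj; rw [hkj]))
    · exfalso
      simp only [Finset.mem_filter, Finset.mem_univ, true_and] at hx
      exact not_adj_xa_a hx.2.2.1
  · intro k hk
    simp only [Finset.mem_filter, Finset.mem_univ, true_and] at hk ⊢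
    obtain ⟨hk', hki, hkj⟩ := hk
    refine ⟨?_, ?_, adj_a_a.mpr hki, adj_a_a.mpr hkj⟩
    · intro h; exact hki (by simpa [Subtype.ext_iff, a.injEq] using h)
    · intro h; exact hkj (by simpa [Subtype.ext_iff, a.injEq] using h)
  · rintro ⟨(k|k), hk⟩ hx
    · rfl
    · exfalso
      simp only [Finset.mem_filter, Finset.mem_univ, true_and] at hx
      exact not_adj_xa_a hx.2.2.1
  · intro k hk; rfl

lemma card_common_ax {i j : ZMod (2*n)} {hu hv} :
    (Finset.univ.filter fun x : Vn n => x ≠ ⟨a i, hu⟩ ∧ x ≠ ⟨xa j, hv⟩ ∧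
        (commutingGraph (QuaternionGroup n)).Adj x ⟨a i, hu⟩ ∧
        (commutingGraph (QuaternionGroup n)).Adj x ⟨xa j, hv⟩).card = 0 := by
  rw [Finset.card_eq_zero, Finset.filter_eq_empty_iff]
  rintro ⟨(k|k), hk⟩ -
  · rintro ⟨-, -, -, h4⟩; exact not_adj_a_xa h4
  · rintro ⟨-, -, h3, -⟩; exact not_adj_xa_a h3

lemma card_common_xx (hn : 2 ≤ n) {i j : ZMod (2*n)} (hij : i ≠ j) {hu hv} :
    (Finset.univ.filter fun x : Vn n => x ≠ ⟨xa i, hu⟩ ∧ x ≠ ⟨xa j, hv⟩ ∧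
        (commutingGraph (QuaternionGroup n)).Adj x ⟨xa i, hu⟩ ∧
        (commutingGraph (QuaternionGroup n)).Adj x ⟨xa j, hv⟩).card = 0 := by
  rw [Finset.card_eq_zero, Finset.filter_eq_empty_iff]
  rintro ⟨(k|k), hk⟩ -
  · rintro ⟨-, -, h3, -⟩; exact not_adj_a_xa h3
  · rintro ⟨-, -, h3, h4⟩
    rw [adj_xa_xa hn] at h3 h4
    exact hij (h3.trans h4.symm)

lemma card_common_xa {i j : ZMod (2*n)} {hu hv} :
    (Finset.univ.filter fun x : Vn n => x ≠ ⟨xa j, hv⟩ ∧ x ≠ ⟨a i, hu⟩ ∧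
        (commutingGraph (QuaternionGroup n)).Adj x ⟨xa j, hv⟩ ∧
        (commutingGraph (QuaternionGroup n)).Adj x ⟨a i, hu⟩).card = 0 := by
  rw [Finset.card_eq_zero, Finset.filter_eq_empty_iff]
  rintro ⟨(k|k), hk⟩ -
  · rintro ⟨-, -, h3, -⟩; exact not_adj_a_xa h3
  · rintro ⟨-, -, -, h4⟩; exact not_adj_xa_a h4

lemma cn_entry (hn : 2 ≤ n) (w w' : STn n) :
    cnMatrix (commutingGraph (QuaternionGroup n)) ((vEquiv hn).symm w) ((vEquiv hn).symm w')
      = Matrix.fromBlocks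
          (Matrix.of fun s s' : {i : ZMod (2*n) // i ≠ 0 ∧ i ≠ (n:ZMod (2*n))} =>
            if s = s' then (0:ℝ) else (2*(n:ℝ) - 4)) 0 0 0 w w' := by
  have hcast : ((2*n - 4 : ℕ) : ℝ) = 2*(n:ℝ) - 4 := by
    have h4 : (4:ℕ) ≤ 2*n := by omega
    rw [Nat.cast_sub h4]; push_cast; ring
  rcases w with ⟨i, hi⟩ | t <;> rcases w' with ⟨j, hj⟩ | t'
  · rw [show (vEquiv hn).symm (Sum.inl ⟨i,hi⟩) = ⟨a i, a_notCenter hi⟩ from rfl,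
        show (vEquiv hn).symm (Sum.inl ⟨j,hj⟩) = ⟨a j, a_notCenter hj⟩ from rfl]
    by_cases hij : i = j
    · subst hij
      simp [cnMatrix]
    · simp only [cnMatrix, Matrix.fromBlocks_apply₁₁, Matrix.of_apply]
      rw [if_neg (by intro h; exact hij (by simpa [Subtype.ext_iff, a.injEq] using h)),
        if_neg (by intro h; exact hij (by simpa [Subtype.ext_iff] using h)),
        card_common_aa hn hi hj hij, hcast]
  · rw [show (vEquiv hn).symm (Sum.inl ⟨i,hi⟩) = ⟨a i, a_notCenter hi⟩ from rfl,
        show (vEquiv hn).symm (Sum.inr t') = ⟨xa t', xa_not_mem_center hn t'⟩ from rfl]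
    simp only [cnMatrix, Matrix.fromBlocks_apply₁₂, Matrix.zero_apply]
    rw [if_neg (by intro h; simpa using (Subtype.ext_iff.mp h)), card_common_ax]
    norm_num
  · rw [show (vEquiv hn).symm (Sum.inr t) = ⟨xa t, xa_not_mem_center hn t⟩ from rfl,
        show (vEquiv hn).symm (Sum.inl ⟨j,hj⟩) = ⟨a j, a_notCenter hj⟩ from rfl]
    simp only [cnMatrix, Matrix.fromBlocks_apply₂₁, Matrix.zero_apply]
    rw [if_neg (by intro h; simpa using (Subtype.ext_iff.mp h)), card_common_xa]
    norm_num
  · rw [show (vEquiv hn).symm (Sum.inr t) = ⟨xa t, xa_not_mem_center hn t⟩ from rfl,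
        show (vEquiv hn).symm (Sum.inr t') = ⟨xa t', xa_not_mem_center hn t'⟩ from rfl]
    simp only [cnMatrix, Matrix.fromBlocks_apply₂₂, Matrix.zero_apply]
    by_cases htt : t = t'
    · subst htt; simp [cnMatrix]
    · rw [if_neg (by intro h; exact htt (by simpa [Subtype.ext_iff, xa.injEq] using h)),
        card_common_xx hn htt]
      norm_num

variable (n) in
abbrev Sn := {i : ZMod (2*n) // i ≠ 0 ∧ i ≠ (n : ZMod (2*n))}

lemma card_Sn (hn : 2 ≤ n) : Fintype.card (Sn n) = 2*n - 2 := by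
  haveI : NeZero (2*n) := ⟨by omega⟩
  rw [Fintype.card_subtype]
  have heq : (Finset.univ.filter fun i : ZMod (2*n) => i ≠ 0 ∧ i ≠ (n:ZMod (2*n)))
      = Finset.univ \ {0, (n:ZMod (2*n))} := by
    ext k
    simp only [Finset.mem_filter, Finset.mem_univ, true_and, Finset.mem_sdiff,
      Finset.mem_insert, Finset.mem_singleton]
    tauto
  rw [heq, Finset.card_sdiff_of_subset (Finset.subset_univ _), Finset.card_univ, ZMod.card,
    Finset.card_insert_of_notMem (by simpa using fun h => n_ne_zero' hn h.symm),
    Finset.card_singleton]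

lemma rowsum (hn : 2 ≤ n) (w : STn n) :
    (∑ v, cnMatrix (commutingGraph (QuaternionGroup n)) ((vEquiv hn).symm w) v)
      = Sum.elim (fun _ => (2*(n:ℝ)-3) * (2*(n:ℝ)-4)) (fun _ => 0) w := by
  rw [← Equiv.sum_comp (vEquiv hn).symm
      (fun v => cnMatrix (commutingGraph (QuaternionGroup n)) ((vEquiv hn).symm w) v)]
  rw [Fintype.sum_sum_type]
  simp only [cn_entry hn w]
  rcases w with s | t
  · simp only [Matrix.fromBlocks_apply₁₁, Matrix.fromBlocks_apply₁₂, Matrix.of_apply,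
      Matrix.zero_apply, Finset.sum_const, smul_zero, add_zero, Sum.elim_inl]
    have hterm : ∀ s' : Sn n, (if s = s' then (0:ℝ) else (2*(n:ℝ)-4))
        = (2*(n:ℝ)-4) - (if s = s' then (2*(n:ℝ)-4) else 0) := by
      intro s'; split <;> ring
    rw [Finset.sum_congr rfl (fun s' _ => hterm s'), Finset.sum_sub_distrib,
      Finset.sum_const, Finset.sum_ite_eq, if_pos (Finset.mem_univ s),
      Finset.card_univ, card_Sn hn, nsmul_eq_mul, Nat.cast_sub (by omega : 2 ≤ 2*n)]
    push_cast
    ring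
  · simp

def AL (n : ℕ) : Matrix (Sn n) (Sn n) ℝ :=
  Matrix.of fun s s' => if s = s' then (2*(n:ℝ)-3)*(2*(n:ℝ)-4) else -(2*(n:ℝ)-4)

def ASL (n : ℕ) : Matrix (Sn n) (Sn n) ℝ :=
  Matrix.of fun s s' => if s = s' then (2*(n:ℝ)-3)*(2*(n:ℝ)-4) else (2*(n:ℝ)-4)

lemma cnl_reindex (hn : 2 ≤ n) :
    (Matrix.reindex (vEquiv hn) (vEquiv hn)) (cnl (commutingGraph (QuaternionGroup n)))
      = Matrix.fromBlocks (AL n) 0 0 0 := by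
  ext w w'
  rw [Matrix.reindex_apply, Matrix.submatrix_apply, cnl, Matrix.sub_apply, cnrs,
    Matrix.diagonal_apply, cn_entry hn w w']
  simp only [EmbeddingLike.apply_eq_iff_eq, rowsum hn w]
  rcases w with s | t <;> rcases w' with s' | t'
  · by_cases hss : s = s'
    · subst hss; simp [AL]
    · simp [AL, hss]
  · simp
  · simp
  · by_cases htt : t = t'
    · subst htt; simp
    · simp [htt]

lemma cnsl_reindex (hn : 2 ≤ n) :
    (Matrix.reindex (vEquiv hn) (vEquiv hn)) (cnsl (commutingGraph (QuaternionGroup n)))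
      = Matrix.fromBlocks (ASL n) 0 0 0 := by
  ext w w'
  rw [Matrix.reindex_apply, Matrix.submatrix_apply, cnsl, Matrix.add_apply, cnrs,
    Matrix.diagonal_apply, cn_entry hn w w']
  simp only [EmbeddingLike.apply_eq_iff_eq, rowsum hn w]
  rcases w with s | t <;> rcases w' with s' | t'
  · by_cases hss : s = s'
    · subst hss; simp [ASL]
    · simp [ASL, hss]
  · simp
  · simp
  · by_cases htt : t = t'
    · subst htt; simp
    · simp [htt]

lemma trace_cnrs (hn : 2 ≤ n) :
    (cnrs (commutingGraph (QuaternionGroup n))).trace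
      = (2*(n:ℝ)-2) * ((2*(n:ℝ)-3) * (2*(n:ℝ)-4)) := by
  rw [Matrix.trace]
  simp only [Matrix.diag, cnrs, Matrix.diagonal_apply_eq]
  rw [← Equiv.sum_comp (vEquiv hn).symm
      (fun u => ∑ v, cnMatrix (commutingGraph (QuaternionGroup n)) u v)]
  rw [Fintype.sum_sum_type]
  simp only [rowsum hn, Sum.elim_inl, Sum.elim_inr, Finset.sum_const, smul_zero,
    Finset.card_univ, card_Sn hn, nsmul_eq_mul, add_zero]
  rw [Nat.cast_sub (by omega : 2 ≤ 2*n)]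
  push_cast
  ring

lemma card_Vn (hn : 2 ≤ n) : Fintype.card (Vn n) = 4*n - 2 := by
  rw [Fintype.card_congr (vEquiv hn), Fintype.card_sum, card_Sn hn, ZMod.card]
  omega

open Polynomial in
lemma eval_charpoly' {m : Type*} [Fintype m] [DecidableEq m] (M : Matrix m m ℝ) (t : ℝ) :
    (M.charpoly).eval t = (t • (1 : Matrix m m ℝ) - M).det := by
  rw [Matrix.charpoly, ← Polynomial.coe_evalRingHom, RingHom.map_det]
  congr 1
  ext i j
  by_cases h : i = j
  · subst h
    simp [Matrix.charmatrix_apply_eq]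
  · simp [Matrix.charmatrix_apply_ne _ _ _ h, Matrix.one_apply_ne h]

lemma det_diag_add_const {m : Type*} [Fintype m] [DecidableEq m]
    (hm : 2 ≤ Fintype.card m) (α β : ℝ) :
    (Matrix.of fun i j : m => (if i = j then α else 0) + β).det
      = α ^ (Fintype.card m - 1) * (α + (Fintype.card m : ℝ) * β) := by
  rcases eq_or_ne α 0 with rfl | hα
  · have hone : (Matrix.of fun i j : m => (if i = j then (0:ℝ) else 0) + β)
        = β • Matrix.of (fun _ _ : m => (1:ℝ)) := by
      ext i j; simp
    obtain ⟨i, j, hij⟩ := Fintype.exists_pair_of_one_lt_card (α := m) (by omega)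
    rw [hone, Matrix.det_smul,
      show (Matrix.of fun _ _ : m => (1:ℝ)).det = 0 from Matrix.det_zero_of_row_eq hij rfl]
    rw [zero_pow (by omega : Fintype.card m - 1 ≠ 0)]
    ring
  · have key : (Matrix.of fun i j : m => (if i = j then α else 0) + β)
        = α • (1 + Matrix.replicateCol Unit (fun _ => β/α) * Matrix.replicateRow Unit (fun _ => (1:ℝ))) := by
      ext i j
      by_cases h : i = j <;>
        simp [Matrix.mul_apply, Matrix.one_apply, h, Matrix.smul_apply]
      all_goals field_simp
    rw [key, Matrix.det_smul, Matrix.det_one_add_replicateCol_mul_replicateRow]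
    have hd : dotProduct (fun _ : m => (1:ℝ)) (fun _ => β/α) = (Fintype.card m : ℝ) * (β/α) := by
      simp [dotProduct, Finset.card_univ]
    rw [hd]
    have hc : Fintype.card m = (Fintype.card m - 1) + 1 := by omega
    rw [hc, pow_succ]
    have h1 : α ^ (Fintype.card m - 1) * α * (1 + ((Fintype.card m - 1) + 1 : ℕ) * (β/α))
        = α ^ (Fintype.card m - 1) * (α + ((Fintype.card m - 1) + 1 : ℕ) * β) := by
      field_simp
    rw [← hc] at h1 ⊢
    rw [h1]

open Polynomial in
lemma charpoly_const_diag {m : Type*} [Fintype m] [DecidableEq m]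
    (hm : 2 ≤ Fintype.card m) (d e : ℝ) :
    (Matrix.of fun i j : m => if i = j then d else e).charpoly
      = (X - C (d + ((Fintype.card m : ℝ) - 1) * e)) * (X - C (d - e)) ^ (Fintype.card m - 1) := by
  apply Polynomial.funext
  intro t
  rw [eval_charpoly']
  have hM : t • (1 : Matrix m m ℝ) - Matrix.of (fun i j : m => if i = j then d else e)
      = Matrix.of fun i j : m => (if i = j then (t - d + e) else 0) + (-e) := by
    ext i j
    by_cases h : i = j <;> simp [Matrix.one_apply, h] <;> ring
  rw [hM, det_diag_add_const hm]
  simp only [eval_mul, eval_pow, eval_sub, eval_X, eval_C]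
  have hb : t - (d - e) = t - d + e := by ring
  rw [hb]
  ring

open Polynomial in
lemma charpoly_zero_mat {m : Type*} [Fintype m] [DecidableEq m] :
    (0 : Matrix m m ℝ).charpoly = X ^ (Fintype.card m) := by
  have h : Matrix.charmatrix (0 : Matrix m m ℝ) = Matrix.diagonal (fun _ => (X : ℝ[X])) := by
    ext i j
    by_cases h : i = j
    · subst h; simp [Matrix.charmatrix_apply_eq]
    · simp [Matrix.charmatrix_apply_ne _ _ _ h, Matrix.diagonal_apply_ne _ h]
  rw [Matrix.charpoly, h, Matrix.det_diagonal, Finset.prod_const, Finset.card_univ]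

open Polynomial in
lemma charpoly_cnl (hn : 2 ≤ n) :
    (cnl (commutingGraph (QuaternionGroup n))).charpoly
      = (X * (X - C ((2*(n:ℝ)-2)*(2*(n:ℝ)-4))) ^ (2*n-3)) * X ^ (2*n) := by
  haveI : NeZero (2*n) := ⟨by have := NeZero.pos n; omega⟩
  rw [← Matrix.charpoly_reindex (vEquiv hn), cnl_reindex hn,
    Matrix.charpoly_fromBlocks_zero₂₁, charpoly_zero_mat, ZMod.card]
  simp only [AL]
  rw [charpoly_const_diag (by rw [card_Sn hn]; omega)]
  have hc1 : Fintype.card (Sn n) - 1 = 2*n - 3 := by rw [card_Sn hn]; omega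
  have hcr : ((Fintype.card (Sn n) : ℝ)) = 2*(n:ℝ) - 2 := by
    rw [card_Sn hn, Nat.cast_sub (by omega)]; push_cast; ring
  rw [hc1, hcr]
  have h0 : (2*(n:ℝ)-3)*(2*(n:ℝ)-4) + (2*(n:ℝ) - 2 - 1) * -(2*(n:ℝ)-4) = 0 := by ring
  have h1 : (2*(n:ℝ)-3)*(2*(n:ℝ)-4) - -(2*(n:ℝ)-4) = (2*(n:ℝ)-2)*(2*(n:ℝ)-4) := by ring
  rw [h0, h1, map_zero, sub_zero]

open Polynomial in
lemma charpoly_cnsl (hn : 2 ≤ n) :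
    (cnsl (commutingGraph (QuaternionGroup n))).charpoly
      = ((X - C (2*(2*(n:ℝ)-3)*(2*(n:ℝ)-4))) * (X - C ((2*(n:ℝ)-4)^2)) ^ (2*n-3)) * X ^ (2*n) := by
  haveI : NeZero (2*n) := ⟨by have := NeZero.pos n; omega⟩
  rw [← Matrix.charpoly_reindex (vEquiv hn), cnsl_reindex hn,
    Matrix.charpoly_fromBlocks_zero₂₁, charpoly_zero_mat, ZMod.card]
  simp only [ASL]
  rw [charpoly_const_diag (by rw [card_Sn hn]; omega)]
  have hc1 : Fintype.card (Sn n) - 1 = 2*n - 3 := by rw [card_Sn hn]; omega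
  have hcr : ((Fintype.card (Sn n) : ℝ)) = 2*(n:ℝ) - 2 := by
    rw [card_Sn hn, Nat.cast_sub (by omega)]; push_cast; ring
  rw [hc1, hcr]
  have h0 : (2*(n:ℝ)-3)*(2*(n:ℝ)-4) + (2*(n:ℝ) - 2 - 1) * (2*(n:ℝ)-4)
      = 2*(2*(n:ℝ)-3)*(2*(n:ℝ)-4) := by ring
  have h1 : (2*(n:ℝ)-3)*(2*(n:ℝ)-4) - (2*(n:ℝ)-4) = (2*(n:ℝ)-4)^2 := by ring
  rw [h0, h1]

open Polynomial in
lemma cnlSpec_eq (hn : 2 ≤ n) :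
    cnlSpec (commutingGraph (QuaternionGroup n))
      = Multiset.replicate (2*n+1) (0:ℝ)
        + Multiset.replicate (2*n-3) ((2*(n:ℝ)-2)*(2*(n:ℝ)-4)) := by
  rw [cnlSpec, charpoly_cnl hn]
  have m1 : ((X : ℝ[X]) * (X - C ((2*(n:ℝ)-2)*(2*(n:ℝ)-4))) ^ (2*n-3)).Monic :=
    monic_X.mul ((monic_X_sub_C _).pow _)
  rw [Polynomial.roots_mul (mul_ne_zero m1.ne_zero (monic_X_pow _).ne_zero),
    Polynomial.roots_mul (mul_ne_zero monic_X.ne_zero ((monic_X_sub_C _).pow _).ne_zero),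
    Polynomial.roots_X, Polynomial.roots_pow, Polynomial.roots_X_sub_C,
    Polynomial.roots_pow, Polynomial.roots_X, Multiset.nsmul_singleton,
    Multiset.nsmul_singleton, Multiset.replicate_add, Multiset.replicate_one]
  abel

open Polynomial in
lemma cnslSpec_eq (hn : 2 ≤ n) :
    cnslSpec (commutingGraph (QuaternionGroup n))
      = Multiset.replicate (2*n) (0:ℝ)
        + Multiset.replicate 1 (2*(2*(n:ℝ)-3)*(2*(n:ℝ)-4))
        + Multiset.replicate (2*n-3) ((2*(n:ℝ)-4)^2) := by
  rw [cnslSpec, charpoly_cnsl hn]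
  have m1 : (((X : ℝ[X]) - C (2*(2*(n:ℝ)-3)*(2*(n:ℝ)-4)))
      * (X - C ((2*(n:ℝ)-4)^2)) ^ (2*n-3)).Monic :=
    (monic_X_sub_C _).mul ((monic_X_sub_C _).pow _)
  rw [Polynomial.roots_mul (mul_ne_zero m1.ne_zero (monic_X_pow _).ne_zero),
    Polynomial.roots_mul (mul_ne_zero (monic_X_sub_C _).ne_zero
      ((monic_X_sub_C _).pow _).ne_zero),
    Polynomial.roots_X_sub_C, Polynomial.roots_pow, Polynomial.roots_X_sub_C,
    Polynomial.roots_pow, Polynomial.roots_X, Multiset.nsmul_singleton,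
    Multiset.nsmul_singleton, Multiset.replicate_one]
  abel

lemma cnDelta_eq (hn : 2 ≤ n) :
    cnDelta (commutingGraph (QuaternionGroup n))
      = (2*(n:ℝ)-2) * ((2*(n:ℝ)-3)*(2*(n:ℝ)-4)) / (4*(n:ℝ)-2) := by
  rw [cnDelta, trace_cnrs hn, card_Vn hn, Nat.cast_sub (by omega)]
  push_cast
  ring_nf

end CNQ

open CNQ

/-- CNL/CNSL spectra and energies of the commuting graph of the dicyclic
(generalized quaternion) group `Q_{4n}` of order `4n`, `n ≥ 2`. -/
theorem cnl_spectra_energies_dicyclic (n : ℕ) (hn : 2 ≤ n) :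
    haveI : NeZero n := ⟨by omega⟩
    (cnlSpec (commutingGraph (QuaternionGroup n)) =
      Multiset.replicate (2 * n + 1) (0 : ℝ) +
        Multiset.replicate (2 * n - 3) ((2 * (n : ℝ) - 2) * (2 * (n : ℝ) - 4)) ∧
    cnslSpec (commutingGraph (QuaternionGroup n)) =
      Multiset.replicate (2 * n) (0 : ℝ) +
        Multiset.replicate 1 (2 * (2 * (n : ℝ) - 3) * (2 * (n : ℝ) - 4)) +
        Multiset.replicate (2 * n - 3) ((2 * (n : ℝ) - 4) ^ 2) ∧
    cnlEnergy (commutingGraph (QuaternionGroup n)) =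
      4 * ((n : ℝ) - 2) * ((n : ℝ) - 1) * (2 * (n : ℝ) - 3) * (2 * (n : ℝ) + 1) /
        (2 * (n : ℝ) - 1) ∧
    cnslEnergy (commutingGraph (QuaternionGroup n)) =
      8 * ((n : ℝ) - 2) * ((n : ℝ) - 1) * (n : ℝ) * (2 * (n : ℝ) - 3) /
        (2 * (n : ℝ) - 1)) := by
  haveI : NeZero n := ⟨by omega⟩
  have hN : (2:ℝ) ≤ (n:ℝ) := by exact_mod_cast hn
  refine ⟨cnlSpec_eq hn, cnslSpec_eq hn, ?_, ?_⟩
  · rw [cnlEnergy, cnlSpec_eq hn, cnDelta_eq hn]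
    rw [Multiset.map_add, Multiset.sum_add, Multiset.map_replicate, Multiset.map_replicate,
      Multiset.sum_replicate, Multiset.sum_replicate, nsmul_eq_mul, nsmul_eq_mul]
    have hpos : (0:ℝ) < 4*(n:ℝ)-2 := by linarith
    have hd0 : (0:ℝ) ≤ (2*(n:ℝ)-2) * ((2*(n:ℝ)-3)*(2*(n:ℝ)-4)) / (4*(n:ℝ)-2) :=
      div_nonneg (mul_nonneg (by linarith) (mul_nonneg (by linarith) (by linarith)))
        (by linarith)
    have hle : (2*(n:ℝ)-2) * ((2*(n:ℝ)-3)*(2*(n:ℝ)-4)) / (4*(n:ℝ)-2)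
        ≤ (2*(n:ℝ)-2)*(2*(n:ℝ)-4) := by
      rw [div_le_iff₀ hpos]
      nlinarith [mul_nonneg (mul_nonneg (by linarith : (0:ℝ) ≤ 2*(n:ℝ)-2)
        (by linarith : (0:ℝ) ≤ 2*(n:ℝ)-4)) (by linarith : (0:ℝ) ≤ 2*(n:ℝ)+1)]
    rw [zero_sub, abs_neg, abs_of_nonneg hd0, abs_of_nonneg (sub_nonneg.mpr hle)]
    rw [Nat.cast_sub (by omega : 3 ≤ 2*n)]
    have h1 : (2*(n:ℝ)-1) ≠ 0 := by linarith
    have h2 : (4*(n:ℝ)-2) ≠ 0 := by linarith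
    have h3 : ((n:ℝ)*4-2) ≠ 0 := by linarith
    push_cast
    field_simp
    ring
  · rw [cnslEnergy, cnslSpec_eq hn, cnDelta_eq hn]
    rw [Multiset.map_add, Multiset.map_add, Multiset.sum_add, Multiset.sum_add,
      Multiset.map_replicate, Multiset.map_replicate, Multiset.map_replicate,
      Multiset.sum_replicate, Multiset.sum_replicate, Multiset.sum_replicate,
      nsmul_eq_mul, nsmul_eq_mul, nsmul_eq_mul]
    have hpos : (0:ℝ) < 4*(n:ℝ)-2 := by linarith
    have hd0 : (0:ℝ) ≤ (2*(n:ℝ)-2) * ((2*(n:ℝ)-3)*(2*(n:ℝ)-4)) / (4*(n:ℝ)-2) :=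
      div_nonneg (mul_nonneg (by linarith) (mul_nonneg (by linarith) (by linarith)))
        (by linarith)
    have hle1 : (2*(n:ℝ)-2) * ((2*(n:ℝ)-3)*(2*(n:ℝ)-4)) / (4*(n:ℝ)-2)
        ≤ 2*(2*(n:ℝ)-3)*(2*(n:ℝ)-4) := by
      rw [div_le_iff₀ hpos]
      nlinarith [mul_nonneg (mul_nonneg (by linarith : (0:ℝ) ≤ 2*(n:ℝ)-3)
        (by linarith : (0:ℝ) ≤ 2*(n:ℝ)-4)) (by linarith : (0:ℝ) ≤ 6*(n:ℝ)-2)]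
    have hle2 : (2*(n:ℝ)-2) * ((2*(n:ℝ)-3)*(2*(n:ℝ)-4)) / (4*(n:ℝ)-2)
        ≤ (2*(n:ℝ)-4)^2 := by
      rcases (by omega : n = 2 ∨ 3 ≤ n) with h2 | h3
      · subst h2; push_cast; norm_num
      · have hN3 : (3:ℝ) ≤ (n:ℝ) := by exact_mod_cast h3
        rw [div_le_iff₀ hpos]
        nlinarith [mul_nonneg (by linarith : (0:ℝ) ≤ 2*(n:ℝ)-4)
          (by nlinarith : (0:ℝ) ≤ 4*(n:ℝ)^2-10*(n:ℝ)+2)]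
    rw [zero_sub, abs_neg, abs_of_nonneg hd0, abs_of_nonneg (sub_nonneg.mpr hle1),
      abs_of_nonneg (sub_nonneg.mpr hle2)]
    rw [Nat.cast_sub (by omega : 3 ≤ 2*n)]
    have h1 : (2*(n:ℝ)-1) ≠ 0 := by linarith
    have h2 : (4*(n:ℝ)-2) ≠ 0 := by linarith
    have h3 : ((n:ℝ)*4-2) ≠ 0 := by linarith
    push_cast
    field_simp
    ring
end
end

section
/- Let G be a finite non-abelian AC-group (that is, the centralizer C_G(x) is abelian for every x ∈ G ∖ Z(G)), let X_1, X_2, …, X_n be the distinct centralizers of non-central elements of G, and let z = |Z(G)|. Then the CNL-spectrum of Γ_G is the multiset consisting of the eigenvalue 0 with multiplicity n together with, for each i = 1, …, n, the eigenvalue (|X_i| − z)(|X_i| − z − 2) with multiplicity |X_i| − z − 1; and the CNSL-spectrum of Γ_G is the multiset consisting of, for each i = 1, …, n, the eigenvalue 2(|X_i| − z − 1)(|X_i| − z − 2) with multiplicity 1 and the eigenvalue (|X_i| − z − 2)² with multiplicity |X_i| − z − 1. -/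
open scoped Classical

noncomputable section

open CN


section AuxCN
open Polynomial Matrix


/-- charpoly of the matrix with `c` on the diagonal and `d` elsewhere. -/
lemma charpoly_const_matrix {ι : Type*} [Fintype ι] [DecidableEq ι] [Nonempty ι]
    (c d : ℝ) :
    (Matrix.of fun i j : ι => if i = j then c else d).charpoly
      = (X - C (c - d)) ^ (Fintype.card ι - 1)
          * (X - C (c + ((Fintype.card ι : ℝ) - 1) * d)) := by
  set m := Fintype.card ι with hm
  have hm1 : 1 ≤ m := Fintype.card_pos
  apply Polynomial.eq_of_infinite_eval_eq
  apply Set.Infinite.mono (s := {c - d}ᶜ)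
  swap
  · exact (Set.finite_singleton _).infinite_compl
  intro t ht
  have ha : t - (c - d) ≠ 0 := sub_ne_zero.mpr ht
  set a : ℝ := t - c + d with hadef
  have ha' : a ≠ 0 := by
    intro h; apply ha; rw [← h]; ring
  simp only [Set.mem_setOf_eq]
  have hL : eval t (Matrix.of fun i j : ι => if i = j then c else d).charpoly
      = Matrix.det (Matrix.of fun i j : ι => if i = j then t - c else -d) := by
    rw [Matrix.charpoly, ← Polynomial.coe_evalRingHom, RingHom.map_det]
    congr 1
    ext i j
    by_cases h : i = j
    · subst h
      simp [Matrix.charmatrix_apply_eq]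
    · simp [Matrix.charmatrix_apply_ne _ _ _ h, h]
  rw [hL]
  have hfac : (Matrix.of fun i j : ι => if i = j then t - c else -d)
      = a • ((1 : Matrix ι ι ℝ)
          + Matrix.replicateCol Unit (fun _ : ι => -d/a) * Matrix.replicateRow Unit (fun _ : ι => (1:ℝ))) := by
    ext i j
    by_cases h : i = j
    · subst h
      simp [Matrix.one_apply, Matrix.mul_apply]
      field_simp
      ring
    · simp [Matrix.one_apply, h, Matrix.mul_apply]
      field_simp
  rw [hfac, Matrix.det_smul, Matrix.det_one_add_replicateCol_mul_replicateRow]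
  have hdot : (fun _ : ι => (1:ℝ)) ⬝ᵥ (fun _ : ι => -d/a) = (m : ℝ) * (-d/a) := by
    simp [dotProduct, hm]
  rw [hdot]
  have key : a ^ m * (1 + (m:ℝ) * (-d/a)) = a ^ (m-1) * (a + (m:ℝ) * (-d)) := by
    have : a ^ m = a ^ (m - 1) * a := by
      conv_lhs => rw [show m = (m-1) + 1 from (Nat.succ_pred_eq_of_pos hm1).symm]
      rw [pow_succ]
    rw [this]
    field_simp
  rw [key]
  simp only [eval_mul, eval_pow, eval_sub, eval_X, eval_C, eval_add]
  push_cast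
  ring

lemma roots_lin_pow_mul (k : ℕ) (a b : ℝ) :
    ((X - C a) ^ k * (X - C b)).roots = Multiset.replicate k a + {b} := by
  rw [Polynomial.roots_mul (mul_ne_zero (pow_ne_zero _ (X_sub_C_ne_zero a)) (X_sub_C_ne_zero b)),
    Polynomial.roots_pow, Polynomial.roots_X_sub_C, Polynomial.roots_X_sub_C,
    Multiset.nsmul_singleton]

lemma natcast_pred_mul (mm : ℕ) (h : 1 ≤ mm) :
    ((mm - 1 : ℕ) : ℝ) * ((mm - 2 : ℕ) : ℝ) = ((mm : ℝ) - 1) * ((mm : ℝ) - 2) := by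
  rcases Nat.lt_or_ge mm 2 with h2 | h2
  · interval_cases mm
    · norm_num
  · rw [Nat.cast_sub (le_trans (by norm_num : 1 ≤ 2) h2), Nat.cast_sub h2]
    push_cast
    ring

lemma charpoly_blockConst {W : Type*} [Fintype W] [DecidableEq W] {n : ℕ}
    (idx : W → Fin n) (hsurj : ∀ i, ∃ v, idx v = i)
    (M : Matrix W W ℝ) (cdiag coff : Fin n → ℝ)
    (h0 : ∀ v w, idx v ≠ idx w → M v w = 0)
    (hd : ∀ v, M v v = cdiag (idx v))
    (ho : ∀ v w, v ≠ w → idx v = idx w → M v w = coff (idx v)) :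
    M.charpoly = ∏ i : Fin n,
      ((X - C (cdiag i - coff i)) ^ (Fintype.card {v // idx v = i} - 1)
        * (X - C (cdiag i + ((Fintype.card {v // idx v = i} : ℝ) - 1) * coff i))) := by
  have hbt : M.BlockTriangular idx := fun v w h => h0 _ _ h.ne'
  rw [hbt.charpoly]
  refine Eq.trans (Finset.prod_subset (Finset.subset_univ _)
    (fun x _ hx => absurd ?_ hx)) ?_
  · obtain ⟨v, hv⟩ := hsurj x
    simp only [Finset.mem_image]
    exact ⟨v, Finset.mem_univ v, hv⟩
  apply Finset.prod_congr rfl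
  intro i _
  have hne : Nonempty {v // idx v = i} := by
    obtain ⟨v, hv⟩ := hsurj i
    exact ⟨⟨v, hv⟩⟩
  have hblk : M.toSquareBlock idx i
      = Matrix.of fun a b : {v // idx v = i} => if a = b then cdiag i else coff i := by
    ext a b
    rw [Matrix.toSquareBlock_def]
    by_cases h : a = b
    · subst h
      simp only [Matrix.of_apply]
      rw [if_pos trivial, hd a.1, a.2]
    · have h' : (a : W) ≠ (b : W) := fun hc => h (Subtype.ext hc)
      simp only [Matrix.of_apply]
      rw [if_neg h, ho a.1 b.1 h' (by rw [a.2, b.2]), a.2]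
  rw [hblk]
  convert charpoly_const_matrix (cdiag i) (coff i) using 1 <;> congr!

end AuxCN

/-- CNL/CNSL spectra of the commuting graph of a finite non-abelian AC-group, where
`X 0, …, X (n-1)` are the distinct centralizers of non-central elements and `z = |Z(G)|`. -/
theorem cnl_spectra_AC_group
    (G : Type*) [Group G] [Fintype G] (hna : ¬∀ x y : G, x * y = y * x)
    (hAC : ∀ g : G, g ∉ Subgroup.center G →
      ∀ x ∈ Subgroup.centralizer ({g} : Set G), ∀ y ∈ Subgroup.centralizer ({g} : Set G),
        x * y = y * x)
    (n : ℕ) (X : Fin n → Subgroup G) (hXinj : Function.Injective X)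
    (hX : ∀ H : Subgroup G,
      (∃ g : G, g ∉ Subgroup.center G ∧ H = Subgroup.centralizer ({g} : Set G)) ↔
        ∃ i : Fin n, H = X i)
    (z : ℕ) (hz : z = Nat.card (Subgroup.center G)) :
    cnlSpec (commutingGraph G) =
      Multiset.replicate n (0 : ℝ) +
        ∑ i : Fin n,
          Multiset.replicate (Nat.card (X i) - z - 1)
            (((Nat.card (X i) : ℝ) - (z : ℝ)) * ((Nat.card (X i) : ℝ) - (z : ℝ) - 2)) ∧
    cnslSpec (commutingGraph G) =
      ∑ i : Fin n,
        (Multiset.replicate 1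
            (2 * ((Nat.card (X i) : ℝ) - (z : ℝ) - 1) * ((Nat.card (X i) : ℝ) - (z : ℝ) - 2)) +
          Multiset.replicate (Nat.card (X i) - z - 1)
            (((Nat.card (X i) : ℝ) - (z : ℝ) - 2) ^ 2)) := by
  -- abbreviations
  set Cg : G → Subgroup G := fun g => Subgroup.centralizer ({g} : Set G) with hCg
  -- basic group theory for AC groups
  have hle : ∀ g h : G, g ∉ Subgroup.center G → g * h = h * g → Cg g ≤ Cg h := by
    intro g h hg hc x hx
    rw [hCg] at hx ⊢
    rw [Subgroup.mem_centralizer_singleton_iff]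
    exact hAC g hg x hx h (Subgroup.mem_centralizer_singleton_iff.mpr hc.symm)
  have key1 : ∀ g h : G, g ∉ Subgroup.center G → h ∉ Subgroup.center G →
      g * h = h * g → Cg g = Cg h :=
    fun g h hg hh hc => le_antisymm (hle g h hg hc) (hle h g hh hc.symm)
  have hself : ∀ g : G, g ∈ Cg g := fun g => Subgroup.mem_centralizer_singleton_iff.mpr rfl
  have hex : ∀ v : {g : G // g ∉ Subgroup.center G}, ∃ i : Fin n, Cg (v : G) = X i :=
    fun v => (hX _).mp ⟨v, v.2, rfl⟩
  set idx : {g : G // g ∉ Subgroup.center G} → Fin n := fun v => (hex v).choose with hidxdef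
  have hidx : ∀ v : {g : G // g ∉ Subgroup.center G}, Cg (v : G) = X (idx v) := fun v => (hex v).choose_spec
  have hrev : ∀ i : Fin n, ∃ g : G, g ∉ Subgroup.center G ∧ X i = Cg g :=
    fun i => (hX (X i)).mpr ⟨i, rfl⟩
  have key3 : ∀ (v : {g : G // g ∉ Subgroup.center G}) (i : Fin n),
      idx v = i ↔ (v : G) ∈ X i := by
    intro v i
    constructor
    · rintro rfl
      rw [← hidx v]
      exact hself _
    · intro hv
      obtain ⟨g, hg, hXi⟩ := hrev i
      have hvg : (v : G) * g = g * (v : G) := by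
        rw [hXi] at hv
        exact Subgroup.mem_centralizer_singleton_iff.mp hv
      apply hXinj
      rw [← hidx v, hXi]
      exact key1 _ _ v.2 hg hvg
  have key4 : ∀ v w, (commutingGraph G).Adj v w ↔ v ≠ w ∧ idx v = idx w := by
    intro v w
    constructor
    · rintro ⟨hne, hc⟩
      refine ⟨hne, hXinj ?_⟩
      rw [← hidx v, ← hidx w]
      exact key1 _ _ v.2 w.2 hc
    · rintro ⟨hne, hi⟩
      refine ⟨hne, ?_⟩
      have hw : (w : G) ∈ Cg (v : G) := by
        rw [hidx v, hi, ← hidx w]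
        exact hself _
      exact (Subgroup.mem_centralizer_singleton_iff.mp hw).symm
  have hsurj : ∀ i, ∃ v, idx v = i := by
    intro i
    obtain ⟨g, hg, hXi⟩ := hrev i
    refine ⟨⟨g, hg⟩, (key3 _ _).mpr ?_⟩
    rw [hXi]
    exact hself g
  have hZle : ∀ i, Subgroup.center G ≤ X i := by
    intro i
    obtain ⟨g, hg, hXi⟩ := hrev i
    rw [hXi]
    exact Subgroup.center_le_centralizer _
  have hzle : ∀ i, z ≤ Nat.card (X i) := by
    intro i
    rw [hz]
    exact Subgroup.card_le_of_le (hZle i)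
  set m : Fin n → ℕ := fun i => Nat.card (X i) - z with hm
  -- cardinality of the fibers
  have hcard1 : ∀ H : Subgroup G, (Finset.univ.filter fun g : G => g ∈ H).card = Nat.card H := by
    intro H
    rw [show Nat.card H = Nat.card {g : G // g ∈ H} from rfl, Nat.card_eq_fintype_card,
      Fintype.card_subtype]
  have hcard : ∀ i, Fintype.card {v : {g : G // g ∉ Subgroup.center G} // idx v = i} = m i := by
    intro i
    have e : {v : {g : G // g ∉ Subgroup.center G} // idx v = i}
        ≃ {g : G // g ∈ X i ∧ g ∉ Subgroup.center G} :=
      { toFun := fun p => ⟨p.1.1, (key3 p.1 i).mp p.2, p.1.2⟩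
        invFun := fun q => ⟨⟨q.1, q.2.2⟩, (key3 _ i).mpr q.2.1⟩
        left_inv := fun p => rfl
        right_inv := fun q => rfl }
    rw [Fintype.card_congr e, Fintype.card_subtype]
    have hsd : (Finset.univ.filter fun g : G => g ∈ X i ∧ g ∉ Subgroup.center G)
        = (Finset.univ.filter fun g : G => g ∈ X i)
          \ (Finset.univ.filter fun g : G => g ∈ Subgroup.center G) := by
      ext g
      simp only [Finset.mem_filter, Finset.mem_univ, true_and, Finset.mem_sdiff]
    have hcardZ : (Finset.univ.filter fun g : G => g ∈ Subgroup.center G).card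
        = Nat.card (Subgroup.center G) := by
      rw [show Nat.card (Subgroup.center G) = Nat.card {g : G // g ∈ Subgroup.center G} from rfl,
        Nat.card_eq_fintype_card, Fintype.card_subtype]
    rw [hsd, Finset.card_sdiff_of_subset (by
      intro g hg
      simp only [Finset.mem_filter] at hg ⊢
      exact ⟨hg.1, hZle i hg.2⟩), hcard1, hcardZ, hm, ← hz]
  have hm1 : ∀ i, 1 ≤ m i := by
    intro i
    rw [← hcard i]
    obtain ⟨v, hv⟩ := hsurj i
    exact Fintype.card_pos_iff.mpr ⟨⟨v, hv⟩⟩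
  have hfilter_card : ∀ i, (Finset.univ.filter fun v => idx v = i).card = m i := by
    intro i
    rw [← Fintype.card_subtype, hcard i]
  -- common neighborhood matrix entries
  have hcn_same : ∀ v w, v ≠ w → idx v = idx w →
      cnMatrix (commutingGraph G) v w = ((m (idx v) - 2 : ℕ) : ℝ) := by
    intro v w hvw hi
    simp only [cnMatrix]
    rw [if_neg hvw]
    norm_cast
    have hset : (Finset.univ.filter fun x => x ≠ v ∧ x ≠ w
          ∧ (commutingGraph G).Adj x v ∧ (commutingGraph G).Adj x w)
        = (Finset.univ.filter fun x => idx x = idx v) \ {v, w} := by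
      ext x
      simp only [Finset.mem_filter, Finset.mem_univ, true_and, Finset.mem_sdiff,
        Finset.mem_insert, Finset.mem_singleton, key4]
      constructor
      · rintro ⟨hxv, hxw, ⟨-, h1⟩, -⟩
        exact ⟨h1, by tauto⟩
      · rintro ⟨h1, h2⟩
        push_neg at h2
        exact ⟨h2.1, h2.2, ⟨h2.1, h1⟩, ⟨h2.2, h1.trans hi⟩⟩
    rw [hset, Finset.card_sdiff_of_subset (by
      intro x hx
      simp only [Finset.mem_insert, Finset.mem_singleton] at hx
      simp only [Finset.mem_filter, Finset.mem_univ, true_and]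
      rcases hx with rfl | rfl
      · rfl
      · exact hi.symm), hfilter_card]
    congr 1
    rw [Finset.card_insert_of_notMem (by simpa using hvw), Finset.card_singleton]
  have hcn_diff : ∀ v w, idx v ≠ idx w → cnMatrix (commutingGraph G) v w = 0 := by
    intro v w hi
    have hvw : v ≠ w := fun h => hi (by rw [h])
    simp only [cnMatrix]
    rw [if_neg hvw]
    norm_cast
    rw [Finset.card_eq_zero]
    apply Finset.eq_empty_iff_forall_notMem.mpr
    intro x hx
    simp only [Finset.mem_filter, Finset.mem_univ, true_and, key4] at hx
    exact hi (hx.2.2.1.2.symm.trans hx.2.2.2.2)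
  have hcn_diag : ∀ v, cnMatrix (commutingGraph G) v v = 0 := by
    intro v
    simp only [cnMatrix]
    rw [if_pos trivial]
  -- row sums
  have hrow : ∀ v, (∑ j, cnMatrix (commutingGraph G) v j)
      = ((m (idx v) : ℝ) - 1) * ((m (idx v) : ℝ) - 2) := by
    intro v
    have hterm : ∀ j, cnMatrix (commutingGraph G) v j
        = if j ≠ v ∧ idx j = idx v then ((m (idx v) - 2 : ℕ) : ℝ) else 0 := by
      intro j
      by_cases h1 : j = v
      · subst h1
        rw [hcn_diag, if_neg (by tauto)]
      · by_cases h2 : idx j = idx v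
        · rw [if_pos ⟨h1, h2⟩]
          exact hcn_same v j (Ne.symm h1) h2.symm
        · rw [if_neg (by tauto)]
          exact hcn_diff v j (fun h => h2 h.symm)
    rw [Finset.sum_congr rfl (fun j _ => hterm j), Finset.sum_ite, Finset.sum_const,
      Finset.sum_const_zero, add_zero, nsmul_eq_mul]
    have hc2 : (Finset.univ.filter fun j => j ≠ v ∧ idx j = idx v).card = m (idx v) - 1 := by
      have hss : (Finset.univ.filter fun j => j ≠ v ∧ idx j = idx v)
          = (Finset.univ.filter fun j => idx j = idx v) \ {v} := by
        ext j
        simp only [Finset.mem_filter, Finset.mem_univ, true_and, Finset.mem_sdiff,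
          Finset.mem_singleton]
        tauto
      rw [hss, Finset.card_sdiff_of_subset (by
        intro j hj
        simp only [Finset.mem_singleton] at hj
        simp only [Finset.mem_filter, Finset.mem_univ, true_and, hj]), hfilter_card,
        Finset.card_singleton]
    rw [hc2]
    exact natcast_pred_mul (m (idx v)) (hm1 _)
  -- the off diagonal entries exist only in blocks of size at least 2
  have hblk2 : ∀ v w, v ≠ w → idx v = idx w → 2 ≤ m (idx v) := by
    intro v w hvw hi
    rw [← hcard (idx v)]
    exact Fintype.one_lt_card_iff.mpr ⟨⟨v, rfl⟩, ⟨w, hi.symm⟩, by simp [hvw]⟩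
  have hcast2 : ∀ i, 2 ≤ m i → ((m i - 2 : ℕ) : ℝ) = (m i : ℝ) - 2 := by
    intro i h
    rw [Nat.cast_sub h]
    norm_num
  -- cnl entries
  have hL0 : ∀ v w, idx v ≠ idx w → cnl (commutingGraph G) v w = 0 := by
    intro v w hi
    have hvw : v ≠ w := fun h => hi (by rw [h])
    simp only [cnl, cnrs, Matrix.sub_apply, Matrix.diagonal_apply_ne _ hvw]
    rw [hcn_diff v w hi, sub_zero]
  have hLd : ∀ v, cnl (commutingGraph G) v v
      = ((m (idx v) : ℝ) - 1) * ((m (idx v) : ℝ) - 2) := by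
    intro v
    simp only [cnl, cnrs, Matrix.sub_apply, Matrix.diagonal_apply_eq]
    rw [hcn_diag v, sub_zero, hrow v]
  have hLo : ∀ v w, v ≠ w → idx v = idx w →
      cnl (commutingGraph G) v w = -((m (idx v) : ℝ) - 2) := by
    intro v w hvw hi
    simp only [cnl, cnrs, Matrix.sub_apply, Matrix.diagonal_apply_ne _ hvw]
    rw [hcn_same v w hvw hi, hcast2 _ (hblk2 v w hvw hi), zero_sub]
  -- cnsl entries
  have hS0 : ∀ v w, idx v ≠ idx w → cnsl (commutingGraph G) v w = 0 := by
    intro v w hi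
    have hvw : v ≠ w := fun h => hi (by rw [h])
    simp only [cnsl, cnrs, Matrix.add_apply, Matrix.diagonal_apply_ne _ hvw]
    rw [hcn_diff v w hi, add_zero]
  have hSd : ∀ v, cnsl (commutingGraph G) v v
      = ((m (idx v) : ℝ) - 1) * ((m (idx v) : ℝ) - 2) := by
    intro v
    simp only [cnsl, cnrs, Matrix.add_apply, Matrix.diagonal_apply_eq]
    rw [hcn_diag v, add_zero, hrow v]
  have hSo : ∀ v w, v ≠ w → idx v = idx w →
      cnsl (commutingGraph G) v w = (m (idx v) : ℝ) - 2 := by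
    intro v w hvw hi
    simp only [cnsl, cnrs, Matrix.add_apply, Matrix.diagonal_apply_ne _ hvw]
    rw [hcn_same v w hvw hi, hcast2 _ (hblk2 v w hvw hi), zero_add]
  -- characteristic polynomials
  have hLcp := charpoly_blockConst idx hsurj (cnl (commutingGraph G))
    (fun i => ((m i : ℝ) - 1) * ((m i : ℝ) - 2)) (fun i => -((m i : ℝ) - 2))
    hL0 hLd hLo
  have hScp := charpoly_blockConst idx hsurj (cnsl (commutingGraph G))
    (fun i => ((m i : ℝ) - 1) * ((m i : ℝ) - 2)) (fun i => (m i : ℝ) - 2)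
    hS0 hSd hSo
  -- simplify the eigenvalues
  have hmcast : ∀ i, (m i : ℝ) = (Nat.card (X i) : ℝ) - (z : ℝ) := by
    intro i
    rw [hm]
    exact_mod_cast Nat.cast_sub (hzle i)
  have hLcp' : (cnl (commutingGraph G)).charpoly
      = ∏ i : Fin n,
          ((Polynomial.X - Polynomial.C (((Nat.card (X i) : ℝ) - (z : ℝ)) * ((Nat.card (X i) : ℝ) - (z : ℝ) - 2)))
              ^ (m i - 1) * (Polynomial.X - Polynomial.C 0)) := by
    rw [hLcp]
    refine Finset.prod_congr rfl fun i _ => ?_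
    rw [hcard i]
    simp only [hmcast]
    ring_nf
  have hScp' : (cnsl (commutingGraph G)).charpoly
      = ∏ i : Fin n,
          ((Polynomial.X - Polynomial.C (((Nat.card (X i) : ℝ) - (z : ℝ) - 2) ^ 2)) ^ (m i - 1)
            * (Polynomial.X - Polynomial.C (2 * ((Nat.card (X i) : ℝ) - (z : ℝ) - 1)
                * ((Nat.card (X i) : ℝ) - (z : ℝ) - 2)))) := by
    rw [hScp]
    refine Finset.prod_congr rfl fun i _ => ?_
    rw [hcard i]
    simp only [hmcast]
    ring_nf
  -- roots
  have hprodroots : ∀ (f : Fin n → Polynomial ℝ), (∀ i, (f i).Monic) →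
      (∏ i : Fin n, f i).roots = ∑ i : Fin n, (f i).roots := by
    intro f hf
    rw [Polynomial.roots_prod f Finset.univ
      (Finset.prod_ne_zero_iff.mpr fun i _ => (hf i).ne_zero)]
    rfl
  constructor
  · show cnlSpec (commutingGraph G) = _
    rw [cnlSpec, hLcp', hprodroots _ (fun i => ((Polynomial.monic_X_sub_C _).pow _).mul (Polynomial.monic_X_sub_C _))]
    rw [Finset.sum_congr rfl (fun i _ => roots_lin_pow_mul _ _ _), Finset.sum_add_distrib,
      Finset.sum_const, Finset.card_univ, Fintype.card_fin, Multiset.nsmul_singleton,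
      add_comm]
  · show cnslSpec (commutingGraph G) = _
    rw [cnslSpec, hScp', hprodroots _ (fun i => ((Polynomial.monic_X_sub_C _).pow _).mul (Polynomial.monic_X_sub_C _))]
    refine Finset.sum_congr rfl fun i _ => ?_
    rw [roots_lin_pow_mul, Multiset.replicate_one, add_comm]
end
end
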